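/- arXiv:2006.16602 — 5 statements merged into one kernel-verified Lean document; each statement's English description precedes it below -/
import Mathlib

section
/- Let h be a Denjoy example with minimal set C ⊆ 𝕋 and irrational rotation number, and assume that the complement 𝕋 \ C is the h-orbit of a single connected component: there is a connected component I of 𝕋 \ C such that 𝕋 \ C = ⋃_{n∈ℤ} hⁿ(I). Let I₀ and I₁ be two disjoint closed arcs of 𝕋 with C ⊆ I₀ ∪ I₁, such that each I_j has one endpoint in I and the other endpoint in h(I), and I₀ joins I to h(I) in the positive direction. Define ℓ : C → Σ₂ by ℓ(θ)(k) = j where hᵏ(θ) ∈ I_j (this is well defined since C ⊆ I₀ ∪ I₁ and I₀ ∩ I₁ = ∅). Then ℓ is continuous and injective, hence a homeomorphism onto its image, and ℓ(h(θ)) = σ(ℓ(θ)) for all θ ∈ C. -/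
open Filter Topology Set

noncomputable section

/-- A Denjoy example: an orientation-preserving circle homeomorphism with
irrational rotation number together with its minimal invariant Cantor set. -/
structure DenjoySystem where
  /-- the circle homeomorphism -/
  h : UnitAddCircle ≃ₜ UnitAddCircle
  /-- the minimal set -/
  K : Set UnitAddCircle
  /-- a lift of `h` to `ℝ` -/
  lift : ℝ → ℝ
  lift_mono : StrictMono lift
  lift_cont : Continuous lift
  lift_bij : Function.Bijective lift
  lift_add : ∀ x : ℝ, lift (x + 1) = lift x + 1
  lift_proj : ∀ x : ℝ, ((lift x : ℝ) : UnitAddCircle) = h (x : UnitAddCircle)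
  /-- a representative of the rotation number -/
  rot : ℝ
  rot_lim : Filter.Tendsto (fun n : ℕ => lift^[n] 0 / (n : ℝ)) Filter.atTop (nhds rot)
  rot_irr : Irrational rot
  K_ne : K.Nonempty
  K_cpt : IsCompact K
  K_proper : K ≠ Set.univ
  K_inv : h '' K = K
  K_perf : Perfect K
  K_td : IsTotallyDisconnected K
  K_min : ∀ x ∈ K, ∀ y ∈ K, y ∈ closure {z | ∃ n : ℤ, (h.toEquiv ^ n) x = z}

/-- A weak Denjoy sub-system (WDS) for a map `f : M → M`. -/
structure WDS (M : Type*) [TopologicalSpace M] (f : M → M) extends DenjoySystem where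
  /-- the embedding of the minimal set into `M` -/
  j : K → M
  j_emb : Topology.IsEmbedding j
  range_inv : f '' Set.range j = Set.range j
  equivar : ∀ x y : K, h (x : UnitAddCircle) = (y : UnitAddCircle) → j y = f (j x)

/-- Weak cyclic order on the circle. -/
def CircBtw (a b c : UnitAddCircle) : Prop :=
  ∃ x y z : ℝ, (x : UnitAddCircle) = a ∧ (y : UnitAddCircle) = b ∧ (z : UnitAddCircle) = c ∧
    x ≤ y ∧ y ≤ z ∧ z ≤ x + 1

/-- The order graph of a WDS. -/
def WDS.orderGraph {M : Type*} [TopologicalSpace M] {f : M → M} (W : WDS M f) :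
    Set (M × M × M) :=
  {p | ∃ a b c : W.K, CircBtw (a : UnitAddCircle) (b : UnitAddCircle) (c : UnitAddCircle) ∧ p = (W.j a, W.j b, W.j c)}

/-- The reverse of the order graph of a WDS. -/
def WDS.revGraph {M : Type*} [TopologicalSpace M] {f : M → M} (W : WDS M f) :
    Set (M × M × M) :=
  {p | (p.2.2, p.2.1, p.1) ∈ W.orderGraph}


/-- The shift on the space `Σ₂ = {0,1}^ℤ` of two-sided binary sequences. -/
def shift2 (u : ℤ → Fin 2) : ℤ → Fin 2 := fun k => u (k + 1)

open Set

noncomputable section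
namespace DenjoyAux

abbrev π (x : ℝ) : UnitAddCircle := (x : UnitAddCircle)

lemma coe_eq_coe {x y : ℝ} : π x = π y ↔ ∃ n : ℤ, y = x + n := by
  constructor
  · intro h
    have := (QuotientAddGroup.eq_iff_sub_mem).mp h
    rw [AddSubgroup.mem_zmultiples_iff] at this
    obtain ⟨k, hk⟩ := this
    rw [zsmul_eq_mul, mul_one] at hk
    exact ⟨-k, by push_cast; linarith⟩
  · rintro ⟨n, rfl⟩
    rw [QuotientAddGroup.eq_iff_sub_mem, AddSubgroup.mem_zmultiples_iff]
    exact ⟨-n, by rw [zsmul_eq_mul, mul_one]; push_cast; ring⟩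

lemma coe_add_int (x : ℝ) (n : ℤ) : π (x + n) = π x :=
  (coe_eq_coe.mpr ⟨n, rfl⟩).symm

lemma coe_surj (z : UnitAddCircle) : ∃ x : ℝ, π x = z :=
  Quotient.exists_rep z

lemma mem_img {x : ℝ} {S : Set ℝ} : π x ∈ π '' S ↔ ∃ n : ℤ, x + n ∈ S := by
  constructor
  · rintro ⟨y, hy, hyx⟩
    obtain ⟨n, rfl⟩ := coe_eq_coe.mp hyx.symm
    exact ⟨n, hy⟩
  · rintro ⟨n, hn⟩
    exact ⟨x + n, hn, coe_add_int x n⟩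

lemma isOpenMap_π : IsOpenMap π := QuotientAddGroup.isOpenMap_coe

lemma continuous_π : Continuous π := continuous_quotient_mk'

lemma rep_window (p : ℝ) (z : UnitAddCircle) : ∃ r : ℝ, π r = z ∧ r ∈ Ico p (p + 1) := by
  obtain ⟨x, hx⟩ := coe_surj z
  refine ⟨x + ⌈p - x⌉, by rw [coe_add_int, hx], ?_, ?_⟩
  · have := Int.le_ceil (p - x); linarith
  · have := Int.ceil_lt_add_one (p - x); linarith

end DenjoyAux

namespace Part2
open DenjoyAux

lemma rep_eq {a b : ℝ} (h : π a = π b) (hab : |a - b| < 1) : a = b := by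
  obtain ⟨n, rfl⟩ := coe_eq_coe.mp h
  have h1 : |(n : ℝ)| < 1 := by rw [abs_sub_comm] at hab; simpa using hab
  have h2 := abs_lt.mp h1
  have h3 : (-1:ℤ) < n := by exact_mod_cast h2.1
  have h4 : n < (1:ℤ) := by exact_mod_cast h2.2
  have : n = 0 := by omega
  simp [this]

/-- the positively oriented open arc from `x` to `y`. -/
def Arc (x y : UnitAddCircle) : Set UnitAddCircle :=
  {z | ∃ p q r : ℝ, π p = x ∧ π q = y ∧ π r = z ∧ p < q ∧ q < p + 1 ∧ p < r ∧ r < q}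

lemma arc_eq {x y : UnitAddCircle} {p q : ℝ} (hp : π p = x) (hq : π q = y)
    (h1 : p < q) (h2 : q < p + 1) : Arc x y = π '' Ioo p q := by
  ext z
  constructor
  · rintro ⟨p', q', r', hp', hq', hr', h1', h2', h3', h4'⟩
    obtain ⟨n, hn⟩ := coe_eq_coe.mp (hp.trans hp'.symm)
    have hq2 : π (q + n) = y := by rw [coe_add_int]; exact hq
    have : q' = q + n := by
      refine rep_eq (hq'.trans hq2.symm) (abs_lt.mpr ⟨?_, ?_⟩) <;> nlinarith [hn]
    subst this; subst hn
    exact ⟨r' - n, ⟨by linarith, by linarith⟩, by rw [← coe_add_int (r' - n) n]; simpa using hr'⟩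
  · rintro ⟨r, ⟨hr1, hr2⟩, rfl⟩
    exact ⟨p, q, r, hp, hq, rfl, h1, h2, hr1, hr2⟩

lemma pair_exists {x y : UnitAddCircle} (hxy : x ≠ y) :
    ∃ p q : ℝ, π p = x ∧ π q = y ∧ p < q ∧ q < p + 1 := by
  obtain ⟨p, hp⟩ := coe_surj x
  obtain ⟨q, hq, hq1, hq2⟩ := rep_window p y
  rcases eq_or_lt_of_le hq1 with h | h
  · exact absurd (by rw [← hp, ← hq, h]) hxy
  · exact ⟨p, q, hp, hq, h, hq2⟩

lemma img_Ioo_disj {p q z : ℝ} (h2 : q < p + 1) (hz1 : π z ∈ π '' Ioo p q)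
    (hz2 : π z ∈ π '' Ioo q (p + 1)) : False := by
  obtain ⟨n, hn1, hn2⟩ := mem_img.mp hz1
  obtain ⟨m, hm1, hm2⟩ := mem_img.mp hz2
  have h3 : (-1:ℝ) < n - m := by push_cast; nlinarith
  have h4 : ((n:ℝ) - m) < 1 := by push_cast; nlinarith
  have h5 : (-1:ℤ) < n - m := by exact_mod_cast h3
  have h6 : n - m < (1:ℤ) := by exact_mod_cast h4
  have : n = m := by omega
  subst this; linarith

lemma left_not_mem {p q : ℝ} (h2 : q ≤ p + 1) : π p ∉ π '' Ioo p q := by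
  intro h
  obtain ⟨n, hn1, hn2⟩ := mem_img.mp h
  have h3 : (0:ℝ) < n := by linarith
  have h4 : (n:ℝ) < 1 := by linarith
  have h5 : (0:ℤ) < n := by exact_mod_cast h3
  have h6 : n < (1:ℤ) := by exact_mod_cast h4
  omega

lemma right_not_mem {p q : ℝ} (h1 : p < q) (h2 : q ≤ p + 1) : π q ∉ π '' Ioo p q := by
  intro h
  obtain ⟨n, hn1, hn2⟩ := mem_img.mp h
  have h5 : (-1:ℤ) < n := by exact_mod_cast (by linarith : (-1:ℝ) < n)
  have h6 : n < (0:ℤ) := by exact_mod_cast (by linarith : (n:ℝ) < 0)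
  omega

lemma img_Ioo_shift (a b : ℝ) (n : ℤ) : π '' Ioo (a + n) (b + n) = π '' Ioo a b := by
  have : Ioo (a + (n:ℝ)) (b + n) = (fun x => x + (n:ℝ)) '' Ioo a b := by
    rw [Set.image_add_const_Ioo]
  rw [this, ← Set.image_comp]
  exact Set.image_congr fun x _ => coe_add_int x n

lemma window_cases {p q : ℝ} (h1 : p < q) (h2 : q < p + 1) (z : UnitAddCircle) :
    z = π p ∨ z = π q ∨ z ∈ π '' Ioo p q ∨ z ∈ π '' Ioo q (p + 1) := by
  obtain ⟨r, hr, hr1, hr2⟩ := rep_window p z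
  rcases eq_or_lt_of_le hr1 with h | h
  · exact Or.inl (by rw [← hr, h])
  rcases lt_trichotomy r q with h' | h' | h'
  · exact Or.inr (Or.inr (Or.inl ⟨r, ⟨h, h'⟩, hr⟩))
  · exact Or.inr (Or.inl (by rw [← hr, h']))
  · exact Or.inr (Or.inr (Or.inr ⟨r, ⟨h', hr2⟩, hr⟩))

end Part2

namespace Part3
open DenjoyAux Part2

variable (D : DenjoySystem)

def T (k : ℤ) (z : UnitAddCircle) : UnitAddCircle := (D.h.toEquiv ^ k) z

lemma T_add (k m : ℤ) (z : UnitAddCircle) : T D k (T D m z) = T D (k + m) z := by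
  simp only [T, ← Equiv.Perm.mul_apply, ← zpow_add]

lemma T_h (k : ℤ) (z : UnitAddCircle) : T D (k + 1) z = D.h (T D k z) := by
  simp only [T, show k + 1 = 1 + k from by ring, zpow_add, zpow_one, Equiv.Perm.mul_apply]
  rfl

lemma T_h' (k : ℤ) (z : UnitAddCircle) : T D (k - 1) z = T D k (D.h.symm z) := by
  simp only [T, zpow_sub, zpow_one, Equiv.Perm.mul_apply]
  rfl

lemma T_inj (k : ℤ) : Function.Injective (T D k) := (D.h.toEquiv ^ k).injective

lemma T_cont (k : ℤ) : Continuous (T D k) := by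
  induction k using Int.induction_on with
  | zero => rw [show T D 0 = id from funext fun z => by simp [T]]; exact continuous_id
  | succ n ih => exact (funext fun z => T_h D n z : T D (n+1) = _) ▸ D.h.continuous.comp ih
  | pred n ih => exact (funext fun z => T_h' D (-n) z : T D (-n-1) = _) ▸ ih.comp D.h.symm.continuous

lemma h_mem_K {z : UnitAddCircle} (hz : z ∈ D.K) : D.h z ∈ D.K :=
  D.K_inv ▸ Set.mem_image_of_mem _ hz

lemma h_symm_mem_K {z : UnitAddCircle} (hz : z ∈ D.K) : D.h.symm z ∈ D.K := by
  rw [← D.K_inv] at hz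
  obtain ⟨w, hw, hw2⟩ := hz
  rwa [show D.h.symm z = w from by rw [← hw2]; exact D.h.symm_apply_apply w]

lemma T_mem_K (k : ℤ) : ∀ {z : UnitAddCircle}, z ∈ D.K → T D k z ∈ D.K := by
  induction k using Int.induction_on with
  | zero => intro z hz; simpa [T] using hz
  | succ n ih => intro z hz; rw [T_h]; exact h_mem_K D (ih hz)
  | pred n ih =>
      intro z hz
      rw [show (-(n:ℤ) - 1) = (-n) - 1 from by ring, T_h']
      exact ih (h_symm_mem_K D hz)

lemma lift_img_Ioo (a b : ℝ) : D.lift '' Ioo a b = Ioo (D.lift a) (D.lift b) := by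
  have e := StrictMono.orderIsoOfSurjective D.lift D.lift_mono D.lift_bij.2
  have hcoe := StrictMono.coe_orderIsoOfSurjective D.lift D.lift_mono D.lift_bij.2
  calc D.lift '' Ioo a b
      = (StrictMono.orderIsoOfSurjective D.lift D.lift_mono D.lift_bij.2) '' Ioo a b := by
        rw [hcoe]
    _ = Ioo (D.lift a) (D.lift b) := by rw [OrderIso.image_Ioo, hcoe]

lemma h_img_Ioo (a b : ℝ) : D.h '' (π '' Ioo a b) = π '' Ioo (D.lift a) (D.lift b) := by
  rw [← Set.image_comp, show (⇑D.h ∘ π) = π ∘ D.lift from funext fun x => (D.lift_proj x).symm,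
    Set.image_comp, lift_img_Ioo]

lemma arc_step {x y : UnitAddCircle} (hxy : x ≠ y) :
    D.h '' Arc x y = Arc (D.h x) (D.h y) := by
  obtain ⟨p, q, hp, hq, h1, h2⟩ := pair_exists hxy
  rw [arc_eq hp hq h1 h2, h_img_Ioo]
  have e1 : π (D.lift p) = D.h x := by rw [← hp]; exact D.lift_proj p
  have e2 : π (D.lift q) = D.h y := by rw [← hq]; exact D.lift_proj q
  have e3 : D.lift p < D.lift q := D.lift_mono h1
  have e4 : D.lift q < D.lift p + 1 := by
    have := D.lift_mono h2; rwa [D.lift_add] at this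
  rw [arc_eq e1 e2 e3 e4]

lemma T_ne (k : ℤ) {x y : UnitAddCircle} (hxy : x ≠ y) : T D k x ≠ T D k y :=
  fun h => hxy (T_inj D k h)

lemma T_img_arc (k : ℤ) {x y : UnitAddCircle} (hxy : x ≠ y) :
    T D k '' Arc x y = Arc (T D k x) (T D k y) := by
  induction k using Int.induction_on with
  | zero => rw [show T D 0 = id from funext fun z => by simp [T]]; simp
  | succ n ih =>
      have himg : T D (n + 1) '' Arc x y = D.h '' (T D n '' Arc x y) := by
        rw [← Set.image_comp]
        exact Set.image_congr fun z _ => T_h D n z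
      rw [himg, ih, arc_step D (T_ne D n hxy), T_h, T_h]
  | pred n ih =>
      have hz : ∀ z, D.h (T D (-n - 1) z) = T D (-n) z := fun z => by
        simpa using (T_h D (-n - 1) z).symm
      have key : D.h '' (T D (-n - 1) '' Arc x y) = D.h '' Arc (T D (-n - 1) x) (T D (-n - 1) y) := by
        rw [arc_step D (T_ne D (-n - 1) hxy), hz x, hz y, ← ih, ← Set.image_comp]
        exact Set.image_congr fun z _ => hz z
      exact Set.image_injective.mpr D.h.injective key

lemma T_img_img (k m : ℤ) (S : Set UnitAddCircle) :
    T D k '' (T D m '' S) = T D (k + m) '' S := by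
  rw [← Set.image_comp]
  exact Set.image_congr fun z _ => T_add D k m z

end Part3


namespace Part4
open DenjoyAux Part2 Part3

variable (D : DenjoySystem)

lemma not_open_subset_K {U : Set UnitAddCircle} (hU : IsOpen U) (hne : U.Nonempty) :
    ¬ U ⊆ D.K := by
  intro hsub
  obtain ⟨z, hz⟩ := hne
  obtain ⟨x, rfl⟩ := coe_surj z
  have hpre : IsOpen (π ⁻¹' U) := hU.preimage continuous_π
  obtain ⟨ε, hε, hball⟩ := Metric.isOpen_iff.mp hpre x hz
  set δ : ℝ := min ε 1 / 2 with hδ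
  have hδ0 : 0 < δ := by positivity
  have hδε : δ < ε := by
    have h1 : min ε 1 ≤ ε := min_le_left _ _
    have h2 : min ε 1 > 0 := by positivity
    simp only [hδ]; linarith
  have hδ1 : δ < 1 := by
    have h1 : min ε 1 ≤ 1 := min_le_right _ _
    simp only [hδ]; linarith
  have hsubI : π '' Ioo (x - δ) (x + δ) ⊆ U := by
    rintro _ ⟨r, hr, rfl⟩
    apply hball
    rw [Metric.mem_ball, Real.dist_eq, abs_lt]
    constructor <;> [linarith [hr.1]; linarith [hr.2]]
  have hpc : IsPreconnected (π '' Ioo (x - δ) (x + δ)) :=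
    isPreconnected_Ioo.image π (continuous_π.continuousOn)
  have hss := D.K_td _ (fun w hw => hsub (hsubI hw)) hpc
  have h1 : π x ∈ π '' Ioo (x - δ) (x + δ) := ⟨x, ⟨by linarith, by linarith⟩, rfl⟩
  have h2 : π (x + δ / 2) ∈ π '' Ioo (x - δ) (x + δ) :=
    ⟨x + δ / 2, ⟨by linarith, by linarith⟩, rfl⟩
  have := hss h1 h2
  have heq : x = x + δ / 2 := rep_eq this (by rw [abs_lt]; constructor <;> linarith)
  linarith

lemma arc_open {x y : UnitAddCircle} (hxy : x ≠ y) : IsOpen (Arc x y) := by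
  obtain ⟨p, q, hp, hq, h1, h2⟩ := pair_exists hxy
  rw [arc_eq hp hq h1 h2]
  exact isOpenMap_π _ isOpen_Ioo

lemma arc_nonempty {x y : UnitAddCircle} (hxy : x ≠ y) : (Arc x y).Nonempty := by
  obtain ⟨p, q, hp, hq, h1, h2⟩ := pair_exists hxy
  rw [arc_eq hp hq h1 h2]
  exact ⟨π ((p + q) / 2), (p + q) / 2, ⟨by linarith, by linarith⟩, rfl⟩

lemma arc_rev {x y : UnitAddCircle} {p q : ℝ} (hp : π p = x) (hq : π q = y)
    (h1 : p < q) (h2 : q < p + 1) : Arc y x = π '' Ioo q (p + 1) := by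
  refine arc_eq hq ?_ h2 (by linarith)
  rw [← hp]; simpa using coe_add_int p 1

lemma arc_disjoint {x y : UnitAddCircle} (hxy : x ≠ y) : Disjoint (Arc x y) (Arc y x) := by
  obtain ⟨p, q, hp, hq, h1, h2⟩ := pair_exists hxy
  rw [arc_eq hp hq h1 h2, arc_rev hp hq h1 h2]
  rw [Set.disjoint_left]
  rintro _ ⟨r, hr, rfl⟩ h2'
  exact img_Ioo_disj h2 ⟨r, hr, rfl⟩ h2'

lemma arc_cover {x y z : UnitAddCircle} (hxy : x ≠ y) (hzx : z ≠ x) (hzy : z ≠ y) :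
    z ∈ Arc x y ∪ Arc y x := by
  obtain ⟨p, q, hp, hq, h1, h2⟩ := pair_exists hxy
  rw [arc_eq hp hq h1 h2, arc_rev hp hq h1 h2]
  rcases window_cases h1 h2 z with h | h | h | h
  · exact absurd (h.trans hp) hzx
  · exact absurd (h.trans hq) hzy
  · exact Or.inl h
  · exact Or.inr h

lemma arc_not_left {x y : UnitAddCircle} (hxy : x ≠ y) : x ∉ Arc x y := by
  obtain ⟨p, q, hp, hq, h1, h2⟩ := pair_exists hxy
  rw [arc_eq hp hq h1 h2, ← hp]
  exact left_not_mem h2.le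

lemma arc_not_right {x y : UnitAddCircle} (hxy : x ≠ y) : y ∉ Arc x y := by
  obtain ⟨p, q, hp, hq, h1, h2⟩ := pair_exists hxy
  rw [arc_eq hp hq h1 h2, ← hq]
  exact right_not_mem h1 h2.le

lemma preconn_in_arc {x y : UnitAddCircle} (hxy : x ≠ y)
    {G : Set UnitAddCircle} (hG : IsPreconnected G) (hGx : x ∉ G) (hGy : y ∉ G)
    (hmeet : (G ∩ Arc x y).Nonempty) : G ⊆ Arc x y := by
  refine hG.subset_left_of_subset_union (arc_open hxy) (arc_open hxy.symm)
    (arc_disjoint hxy) ?_ hmeet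
  intro z hz
  exact arc_cover hxy (fun h => hGx (h ▸ hz)) (fun h => hGy (h ▸ hz))

section Gaps

variable {I : Set UnitAddCircle}

lemma T_zero_img : T D 0 '' I = I := by
  have : ∀ z, T D 0 z = z := fun z => by simp [T]
  rw [Set.image_congr fun z _ => this z]
  simp

lemma T_one_img : T D 1 '' I = D.h '' I := by
  have : ∀ z, T D 1 z = D.h z := fun z => by simp [T]
  rw [Set.image_congr fun z _ => this z]

lemma gap_compl (horbit : (⋃ n : ℤ, (fun y => (D.h.toEquiv ^ n) y) '' I) = D.Kᶜ) (n : ℤ) :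
    T D n '' I ⊆ D.Kᶜ := by
  rw [← horbit]
  exact Set.subset_iUnion (fun n => (fun y => (D.h.toEquiv ^ n) y) '' I) n

lemma mem_gap (horbit : (⋃ n : ℤ, (fun y => (D.h.toEquiv ^ n) y) '' I) = D.Kᶜ)
    {z : UnitAddCircle} (hz : z ∈ D.Kᶜ) : ∃ n : ℤ, z ∈ T D n '' I := by
  rw [← horbit] at hz
  exact Set.mem_iUnion.mp hz

lemma I_preconn (hI : ∃ x ∈ D.Kᶜ, I = connectedComponentIn D.Kᶜ x) : IsPreconnected I := by
  obtain ⟨x₀, hx₀, hIeq⟩ := hI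
  rw [hIeq]
  exact isPreconnected_connectedComponentIn

lemma gap_preconn (hI : ∃ x ∈ D.Kᶜ, I = connectedComponentIn D.Kᶜ x) (n : ℤ) :
    IsPreconnected (T D n '' I) :=
  (I_preconn D hI).image _ (T_cont D n).continuousOn

lemma exists_gap_in_arc (hI : ∃ x ∈ D.Kᶜ, I = connectedComponentIn D.Kᶜ x)
    (horbit : (⋃ n : ℤ, (fun y => (D.h.toEquiv ^ n) y) '' I) = D.Kᶜ)
    {x y : UnitAddCircle} (hx : x ∈ D.K) (hy : y ∈ D.K) (hxy : x ≠ y) :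
    ∃ n : ℤ, T D n '' I ⊆ Arc x y := by
  have hne : (Arc x y).Nonempty := arc_nonempty hxy
  have hop : IsOpen (Arc x y) := arc_open hxy
  have := not_open_subset_K D hop hne
  obtain ⟨z, hzA, hzK⟩ : ∃ z, z ∈ Arc x y ∧ z ∉ D.K := by
    by_contra h
    push_neg at h
    exact this fun z hz => (h z hz)
  obtain ⟨n, hn⟩ := mem_gap D horbit hzK
  refine ⟨n, preconn_in_arc hxy (gap_preconn D hI n) ?_ ?_ ⟨z, hn, hzA⟩⟩
  · exact fun h => (gap_compl D horbit n h) hx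
  · exact fun h => (gap_compl D horbit n h) hy

lemma h_img_compl : D.h '' D.Kᶜ = D.Kᶜ := by
  rw [Set.image_compl_eq D.h.bijective, D.K_inv]

lemma K_two_points : ∃ x₁ x₂ : UnitAddCircle, x₁ ∈ D.K ∧ x₂ ∈ D.K ∧ x₁ ≠ x₂ := by
  obtain ⟨x₁, hx₁⟩ := D.K_ne
  have hacc := D.K_perf.acc x₁ hx₁
  rw [accPt_iff_nhds] at hacc
  obtain ⟨y, ⟨_, hyK⟩, hyx⟩ := hacc Set.univ Filter.univ_mem
  exact ⟨y, x₁, hyK, hx₁, hyx⟩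

lemma I_h_img_disj (hI : ∃ x ∈ D.Kᶜ, I = connectedComponentIn D.Kᶜ x)
    (horbit : (⋃ n : ℤ, (fun y => (D.h.toEquiv ^ n) y) '' I) = D.Kᶜ) :
    I ∩ (D.h '' I) = ∅ := by
  by_contra hne
  obtain ⟨z, hz1, hz2⟩ := Set.nonempty_iff_ne_empty.mpr hne
  obtain ⟨x₀, hx₀, hIeq⟩ := hI
  have himg : D.h '' I = connectedComponentIn D.Kᶜ (D.h x₀) := by
    rw [hIeq, D.h.image_connectedComponentIn hx₀, h_img_compl]
  -- the two components coincide
  have heq : D.h '' I = I := by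
    rw [himg, hIeq]
    rw [connectedComponentIn_eq (x := D.h x₀) (y := z), connectedComponentIn_eq (x := x₀) (y := z)]
    · rwa [← hIeq]
    · rwa [← himg]
  -- hence every T n '' I = I
  have hTn : ∀ n : ℤ, T D n '' I = I := by
    intro n
    induction n using Int.induction_on with
    | zero => exact T_zero_img D
    | succ m ih =>
        have h1 : T D 1 '' (T D m '' I) = T D (1 + m) '' I := T_img_img D 1 m I
        rw [ih, T_one_img, heq] at h1
        rw [show ((m:ℤ) + 1) = 1 + m from by ring, ← h1]
    | pred m ih =>
        have h1 : T D 1 '' (T D (-m - 1) '' I) = T D (-m) '' I := by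
          rw [T_img_img]; norm_num
        rw [ih] at h1
        have h2 : T D 1 '' (T D (-m - 1) '' I) = D.h '' (T D (-m - 1) '' I) := T_one_img D
        rw [h2] at h1
        nth_rewrite 2 [← heq] at h1
        exact Set.image_injective.mpr D.h.injective h1
  have hKc : D.Kᶜ = I := by
    rw [← horbit]
    apply Set.Subset.antisymm
    · intro w hw
      obtain ⟨n, hn⟩ : ∃ n : ℤ, w ∈ T D n '' I := Set.mem_iUnion.mp hw
      rw [hTn n] at hn
      exact hn
    · intro w hw
      exact Set.mem_iUnion.mpr ⟨0, by rwa [show (fun y => (D.h.toEquiv ^ (0:ℤ)) y) '' I = T D 0 '' I from rfl, T_zero_img]⟩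
  obtain ⟨x₁, x₂, hx₁, hx₂, hx12⟩ := K_two_points D
  -- the two arcs between x₁ x₂
  have hU1 : I ∩ Arc x₁ x₂ ≠ ∅ := by
    intro hdis
    apply not_open_subset_K D (arc_open hx12) (arc_nonempty hx12)
    intro w hw
    by_contra hwK
    have : w ∈ I := by rw [← hKc]; exact hwK
    exact (Set.eq_empty_iff_forall_notMem.mp hdis w) ⟨this, hw⟩
  have hU2 : I ∩ Arc x₂ x₁ ≠ ∅ := by
    intro hdis
    apply not_open_subset_K D (arc_open hx12.symm) (arc_nonempty hx12.symm)
    intro w hw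
    by_contra hwK
    have : w ∈ I := by rw [← hKc]; exact hwK
    exact (Set.eq_empty_iff_forall_notMem.mp hdis w) ⟨this, hw⟩
  have hIK : I ⊆ D.Kᶜ := by rw [hIeq]; exact connectedComponentIn_subset _ _
  have hsub : I ⊆ Arc x₁ x₂ :=
    preconn_in_arc hx12 (I_preconn D ⟨x₀, hx₀, hIeq⟩)
      (fun h => (hIK h) hx₁) (fun h => (hIK h) hx₂)
      (by obtain ⟨w, hw1, hw2⟩ := Set.nonempty_iff_ne_empty.mpr hU1; exact ⟨w, hw1, hw2⟩)
  obtain ⟨w, hwI, hwA⟩ := Set.nonempty_iff_ne_empty.mpr hU2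
  exact Set.disjoint_left.mp (arc_disjoint hx12) (hsub hwI) hwA

end Gaps

section Core

variable {D : DenjoySystem}

lemma img_Icc_shift (a b : ℝ) (n : ℤ) : π '' Icc (a + n) (b + n) = π '' Icc a b := by
  have : Icc (a + (n:ℝ)) (b + n) = (fun x => x + (n:ℝ)) '' Icc a b := by
    rw [Set.image_add_const_Icc]
  rw [this, ← Set.image_comp]
  exact Set.image_congr fun x _ => coe_add_int x n

lemma int_eq_one {n : ℤ} (h0 : (0:ℝ) < n) (h2 : (n:ℝ) < 2) : n = 1 := by
  have a1 : (0:ℤ) < n := by exact_mod_cast h0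
  have a2 : n < 2 := by exact_mod_cast h2
  omega

lemma int_eq_neg_one {j : ℤ} (h0 : (-2:ℝ) < j) (h2 : (j:ℝ) < 0) : j = -1 := by
  have a1 : (-2:ℤ) < j := by exact_mod_cast h0
  have a2 : j < 0 := by exact_mod_cast h2
  omega

lemma core_run {s σ τ p' q' : ℝ}
    (hσs : s ≤ σ) (hστ : σ < τ) (hτ : τ < s + 1)
    (hp' : p' ∈ Ioo σ τ) (hq'1 : p' < q') (hq'2 : q' < p' + 1)
    (hqrep : ∃ j : ℤ, q' + j ∈ Icc σ τ)
    (hσK : π σ ∉ D.K) (hτK : π τ ∉ D.K) (hq'K : π q' ∈ D.K)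
    (hmark : ∃ n : ℤ, s + n ∈ Ioo p' q') :
    π '' Ioo q' (p' + 1) ⊆ π '' Ioo σ τ := by
  obtain ⟨hp1, hp2⟩ := hp'
  obtain ⟨n, hn1, hn2⟩ := hmark
  have hn : n = 1 := int_eq_one (by linarith) (by linarith)
  subst hn
  have hq's : s + 1 < q' := by exact_mod_cast hn2
  obtain ⟨j, hj1, hj2⟩ := hqrep
  have hj : j = -1 := int_eq_neg_one (by linarith) (by linarith)
  subst hj
  push_cast at hj1 hj2
  have hql : σ + 1 ≤ q' := by linarith
  have hqr : q' ≤ τ + 1 := by linarith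
  have hql' : σ + 1 < q' := by
    rcases eq_or_lt_of_le hql with h | h
    · exfalso
      apply hσK
      have : π q' = π σ := by rw [← h]; simpa using coe_add_int σ 1
      rwa [← this]
    · exact h
  have hqr' : q' < τ + 1 := by
    rcases eq_or_lt_of_le hqr with h | h
    · exfalso
      apply hτK
      have : π q' = π τ := by rw [h]; simpa using coe_add_int τ 1
      rwa [← this]
    · exact h
  have hsub : Ioo q' (p' + 1) ⊆ Ioo (σ + 1) (τ + 1) := by
    intro r hr
    exact ⟨by linarith [hr.1], by linarith [hr.2]⟩
  calc π '' Ioo q' (p' + 1) ⊆ π '' Ioo (σ + 1) (τ + 1) := Set.image_mono hsub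
    _ = π '' Ioo σ τ := by
        have := img_Ioo_shift σ τ 1
        simpa using this

lemma icc_rep_strict {σ τ : ℝ} {z : UnitAddCircle}
    (hz : z ∈ π '' Icc σ τ) (hτσ : τ < σ + 1)
    (hzK : z ∈ D.K) (hσK : π σ ∉ D.K) (hτK : π τ ∉ D.K) :
    ∃ a : ℝ, π a = z ∧ a ∈ Ioo σ τ := by
  obtain ⟨a, ⟨ha1, ha2⟩, rfl⟩ := hz
  refine ⟨a, rfl, ?_, ?_⟩
  · rcases eq_or_lt_of_le ha1 with h | h
    · exact absurd (h ▸ hzK) hσK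
    · exact h
  · rcases eq_or_lt_of_le ha2 with h | h
    · exact absurd (h ▸ hzK) hτK
    · exact h

lemma core {s t s2 t2 : ℝ} (h1 : s < t) (h2 : t < s2) (h3 : s2 < t2) (h4 : t2 < s + 1)
    (hsK : π s ∉ D.K) (htK : π t ∉ D.K) (hs2K : π s2 ∉ D.K) (ht2K : π t2 ∉ D.K)
    {p q : ℝ} (hpq : p < q) (hq1 : q < p + 1)
    (hpK : π p ∈ D.K) (hqK : π q ∈ D.K)
    (hc : (π p ∈ π '' Icc s t ∧ π q ∈ π '' Icc s t) ∨
          (π p ∈ π '' Icc s2 t2 ∧ π q ∈ π '' Icc s2 t2))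
    (hm : π s ∈ π '' Ioo p q) :
    π '' Ioo q (p + 1) ⊆ π '' Ioo s t ∨ π '' Ioo q (p + 1) ⊆ π '' Ioo s2 t2 := by
  rcases hc with ⟨hcp, hcq⟩ | ⟨hcp, hcq⟩
  · left
    obtain ⟨a, ha, ha2⟩ := icc_rep_strict hcp (by linarith) hpK hsK htK
    obtain ⟨i, hi⟩ := coe_eq_coe.mp ha.symm
    -- a = p + i
    have hqi : π (q + i) = π q := coe_add_int q i
    have hqrep : ∃ j : ℤ, (q + i) + j ∈ Icc s t := mem_img.mp (by rwa [← hqi] at hcq)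
    have hmark : ∃ n : ℤ, s + n ∈ Ioo (p + i) (q + i) := by
      apply mem_img.mp
      rwa [img_Ioo_shift p q i]
    have key := core_run (D := D) (le_refl s) h1 (by linarith)
      (hi ▸ ha2) (by linarith) (by linarith) hqrep hsK htK
      (by rwa [hqi]) hmark
    have heq2 : π '' Ioo (q + i) (p + i + 1) = π '' Ioo q (p + 1) := by
      rw [show p + (i:ℝ) + 1 = p + 1 + i from by ring]
      exact img_Ioo_shift q (p + 1) i
    rwa [heq2] at key
  · right
    obtain ⟨a, ha, ha2⟩ := icc_rep_strict hcp (by linarith) hpK hs2K ht2K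
    obtain ⟨i, hi⟩ := coe_eq_coe.mp ha.symm
    have hqi : π (q + i) = π q := coe_add_int q i
    have hqrep : ∃ j : ℤ, (q + i) + j ∈ Icc s2 t2 := mem_img.mp (by rwa [← hqi] at hcq)
    have hmark : ∃ n : ℤ, s + n ∈ Ioo (p + i) (q + i) := by
      apply mem_img.mp
      rwa [img_Ioo_shift p q i]
    have key := core_run (D := D) (by linarith : s ≤ s2) h3 h4
      (hi ▸ ha2) (by linarith) (by linarith) hqrep hs2K ht2K
      (by rwa [hqi]) hmark
    have heq2 : π '' Ioo (q + i) (p + i + 1) = π '' Ioo q (p + 1) := by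
      rw [show p + (i:ℝ) + 1 = p + 1 + i from by ring]
      exact img_Ioo_shift q (p + 1) i
    rwa [heq2] at key

end Core

section Config

variable (D : DenjoySystem) {I I₀ I₁ : Set UnitAddCircle}

lemma config
    (hI : ∃ x ∈ D.Kᶜ, I = connectedComponentIn D.Kᶜ x)
    (horbit : (⋃ n : ℤ, (fun y => (D.h.toEquiv ^ n) y) '' I) = D.Kᶜ)
    (hI₀ : ∃ s t : ℝ, s ≤ t ∧ t - s < 1 ∧
      I₀ = (fun x : ℝ => (x : UnitAddCircle)) '' Set.Icc s t ∧
      (s : UnitAddCircle) ∈ I ∧ (t : UnitAddCircle) ∈ D.h '' I)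
    (hI₁ : ∃ s t : ℝ, s ≤ t ∧ t - s < 1 ∧
      I₁ = (fun x : ℝ => (x : UnitAddCircle)) '' Set.Icc s t ∧
      (s : UnitAddCircle) ∈ D.h '' I ∧ (t : UnitAddCircle) ∈ I)
    (hdisj : Disjoint I₀ I₁) :
    ∃ s t s2 t2 : ℝ,
      s < t ∧ t < s2 ∧ s2 < t2 ∧ t2 < s + 1 ∧
      I₀ = π '' Icc s t ∧ I₁ = π '' Icc s2 t2 ∧
      π s ∈ I ∧ π t2 ∈ I ∧ π t ∈ D.h '' I ∧ π s2 ∈ D.h '' I := by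
  obtain ⟨s, t, hst, hts, hI₀eq, hsI, htI⟩ := hI₀
  obtain ⟨s', t', hst', hts', hI₁eq, hs'I, ht'I⟩ := hI₁
  have hNEQ : I ∩ (D.h '' I) = ∅ := I_h_img_disj D hI horbit
  have hslt : s < t := by
    rcases eq_or_lt_of_le hst with h | h
    · exfalso
      have : π s ∈ I ∩ (D.h '' I) := ⟨hsI, by rw [show π s = π t from by rw [h]]; exact htI⟩
      rw [hNEQ] at this
      exact this
    · exact h
  have hslt' : s' < t' := by
    rcases eq_or_lt_of_le hst' with h | h
    · exfalso
      have : π t' ∈ I ∩ (D.h '' I) := ⟨ht'I, by rw [show π t' = π s' from by rw [h]]; exact hs'I⟩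
      rw [hNEQ] at this
      exact this
    · exact h
  set n : ℤ := ⌈s - s'⌉ with hn
  set s2 : ℝ := s' + n with hs2def
  set t2 : ℝ := t' + n with ht2def
  have hs2rep : π s2 = π s' := coe_add_int s' n
  have ht2rep : π t2 = π t' := coe_add_int t' n
  have hs2lb : s ≤ s2 := by
    have := Int.le_ceil (s - s')
    simp only [hs2def, hn]
    linarith
  have hs2ub : s2 < s + 1 := by
    have := Int.ceil_lt_add_one (s - s')
    simp only [hs2def, hn]
    linarith
  have hI₁eq2 : I₁ = π '' Icc s2 t2 := by
    rw [hI₁eq, ← img_Icc_shift s' t' n]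
  have hts2 : t < s2 := by
    by_contra hcon
    push_neg at hcon
    have h1 : π s2 ∈ I₀ := by rw [hI₀eq]; exact ⟨s2, ⟨hs2lb, hcon⟩, rfl⟩
    have h2 : π s2 ∈ I₁ := by rw [hI₁eq2]; exact ⟨s2, ⟨le_refl _, by linarith⟩, rfl⟩
    exact Set.disjoint_left.mp hdisj h1 h2
  have ht2ub : t2 < s + 1 := by
    by_contra hcon
    push_neg at hcon
    have h1 : π (s + 1) ∈ I₁ := by
      rw [hI₁eq2]
      exact ⟨s + 1, ⟨by linarith, hcon⟩, rfl⟩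
    have h2 : π (s + 1) ∈ I₀ := by
      rw [hI₀eq]
      refine Set.mem_of_eq_of_mem ?_ (⟨s, ⟨le_refl _, hst⟩, rfl⟩ : π s ∈ π '' Icc s t)
      simpa using coe_add_int s 1
    exact Set.disjoint_left.mp hdisj h2 h1
  exact ⟨s, t, s2, t2, hslt, hts2, by linarith, ht2ub, hI₀eq, hI₁eq2,
    hsI, by rw [ht2rep]; exact ht'I, htI, by rw [hs2rep]; exact hs'I⟩

end Config

section Main

variable (D : DenjoySystem) {I I₀ I₁ : Set UnitAddCircle}

lemma int_le_neg_one {i : ℤ} (h : (i:ℝ) < 0) : (i:ℝ) ≤ -1 := by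
  have : i < 0 := by exact_mod_cast h
  have : i ≤ -1 := by omega
  exact_mod_cast this

lemma int_ge_one {i : ℤ} (h : (0:ℝ) < i) : (1:ℝ) ≤ i := by
  have : 0 < i := by exact_mod_cast h
  have : 1 ≤ i := by omega
  exact_mod_cast this

lemma not_mem_runs {s t s2 t2 : ℝ} (h1 : s < t) (h2 : t < s2) (h3 : s2 < t2) (h4 : t2 < s + 1)
    {w : ℝ} (hw1 : t ≤ w) (hw2 : w ≤ s2)
    (h : π w ∈ π '' Icc s t ∪ π '' Icc s2 t2) : w = t ∨ w = s2 := by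
  rcases h with h | h
  · obtain ⟨i, hi1, hi2⟩ := mem_img.mp h
    rcases lt_trichotomy (i:ℝ) 0 with hc | hc | hc
    · have := int_le_neg_one hc; exfalso; linarith
    · left; rw [hc, add_zero] at hi1 hi2; linarith
    · have := int_ge_one hc; exfalso; linarith
  · obtain ⟨i, hi1, hi2⟩ := mem_img.mp h
    rcases lt_trichotomy (i:ℝ) 0 with hc | hc | hc
    · have := int_le_neg_one hc; exfalso; linarith
    · right; rw [hc, add_zero] at hi1 hi2; linarith
    · have := int_ge_one hc; exfalso; linarith

lemma arg1 {s t s2 t2 : ℝ} (h1 : s < t) (h2 : t < s2) (h3 : s2 < t2) (h4 : t2 < s + 1)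
    (hI₀eq : I₀ = π '' Icc s t) (hI₁eq : I₁ = π '' Icc s2 t2)
    (hcover : D.K ⊆ I₀ ∪ I₁)
    (horbit : (⋃ n : ℤ, (fun y => (D.h.toEquiv ^ n) y) '' I) = D.Kᶜ)
    {x y : UnitAddCircle} (hxy : x ≠ y)
    (hshort : ∀ k : ℤ, ∃ a b : ℝ, π a = T D k x ∧ π b = T D k y ∧ a < b ∧
       ((a ∈ Ioo s t ∧ b ∈ Ioo s t) ∨ (a ∈ Ioo s2 t2 ∧ b ∈ Ioo s2 t2)))
    {n₀ : ℤ} (hgap : T D n₀ '' I ⊆ Arc x y) : False := by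
  have harc : ∀ k : ℤ, Arc (T D k x) (T D k y) ⊆ I₀ ∪ I₁ := by
    intro k
    obtain ⟨a, b, ha, hb, hab, hrun⟩ := hshort k
    rcases hrun with ⟨ha', hb'⟩ | ⟨ha', hb'⟩
    · have hb1 : b < a + 1 := by
        obtain ⟨u1, u2⟩ := ha'; obtain ⟨v1, v2⟩ := hb'; linarith
      rw [arc_eq ha hb hab hb1, hI₀eq]
      intro z hz
      left
      exact Set.image_mono (fun w hw => ⟨by obtain ⟨u1, u2⟩ := ha'; linarith [hw.1],
        by obtain ⟨v1, v2⟩ := hb'; linarith [hw.2]⟩ : Ioo a b ⊆ Icc s t) hz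
    · have hb1 : b < a + 1 := by
        obtain ⟨u1, u2⟩ := ha'; obtain ⟨v1, v2⟩ := hb'; linarith
      rw [arc_eq ha hb hab hb1, hI₁eq]
      intro z hz
      right
      exact Set.image_mono (fun w hw => ⟨by obtain ⟨u1, u2⟩ := ha'; linarith [hw.1],
        by obtain ⟨v1, v2⟩ := hb'; linarith [hw.2]⟩ : Ioo a b ⊆ Icc s2 t2) hz
  have hgapsub : ∀ r : ℤ, T D r '' I ⊆ I₀ ∪ I₁ := by
    intro r
    have e : T D (r - n₀) '' (T D n₀ '' I) = T D r '' I := by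
      rw [T_img_img, sub_add_cancel]
    rw [← e]
    calc T D (r - n₀) '' (T D n₀ '' I) ⊆ T D (r - n₀) '' Arc x y := Set.image_mono hgap
      _ = Arc (T D (r - n₀) x) (T D (r - n₀) y) := T_img_arc D _ hxy
      _ ⊆ I₀ ∪ I₁ := harc _
  set m : ℝ := (t + s2) / 2 with hm
  have hμ : π m ∉ I₀ ∪ I₁ := by
    intro hmem
    rw [hI₀eq, hI₁eq] at hmem
    rcases not_mem_runs h1 h2 h3 h4 (by simp only [hm]; linarith) (by simp only [hm]; linarith)
      hmem with h | h <;> (simp only [hm] at h; linarith)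
  have hμK : π m ∈ D.Kᶜ := fun h => hμ (hcover h)
  obtain ⟨r, hr⟩ := mem_gap D horbit hμK
  exact hμ (hgapsub r hr)

lemma flip_nat {P : ℤ → Prop} : ∀ (n : ℕ) (k : ℤ), P k → ¬ P (k + n + 1) →
    ∃ j : ℤ, P j ∧ ¬ P (j + 1) := by
  intro n
  induction n with
  | zero => exact fun k hk hk1 => ⟨k, hk, by simpa using hk1⟩
  | succ m ih =>
      intro k hk hk1
      by_cases h : P (k + 1)
      · refine ih (k + 1) h ?_
        have : k + 1 + (m : ℤ) + 1 = k + ((m : ℕ) + 1 : ℕ) + 1 := by push_cast; ring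
        rwa [this]
      · exact ⟨k, hk, h⟩

lemma flip {P : ℤ → Prop} {a b : ℤ} (hab : a < b) (ha : P a) (hb : ¬ P b) :
    ∃ j : ℤ, P j ∧ ¬ P (j + 1) := by
  have hn : b = a + ((b - a - 1).toNat : ℤ) + 1 := by
    rw [Int.toNat_of_nonneg (by omega)]; ring
  exact flip_nat (b - a - 1).toNat a ha (by rwa [← hn])

lemma arg2 {s t s2 t2 : ℝ} (h1 : s < t) (h2 : t < s2) (h3 : s2 < t2) (h4 : t2 < s + 1)
    (hI₀eq : I₀ = π '' Icc s t) (hI₁eq : I₁ = π '' Icc s2 t2)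
    (hI : ∃ x ∈ D.Kᶜ, I = connectedComponentIn D.Kᶜ x)
    (horbit : (⋃ n : ℤ, (fun y => (D.h.toEquiv ^ n) y) '' I) = D.Kᶜ)
    (hsI : π s ∈ I) (htI : π t ∈ D.h '' I)
    (hsK : π s ∉ D.K) (htK : π t ∉ D.K) (hs2K : π s2 ∉ D.K) (ht2K : π t2 ∉ D.K)
    {x y : UnitAddCircle} (hxK : x ∈ D.K) (hyK : y ∈ D.K) (hxy : x ≠ y)
    (hsc : ∀ k : ℤ, (T D k x ∈ I₀ ∧ T D k y ∈ I₀) ∨ (T D k x ∈ I₁ ∧ T D k y ∈ I₁))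
    {k : ℤ}
    (hk : ∃ a b : ℝ, π a = T D k x ∧ π b = T D k y ∧ a < b ∧
       ((a ∈ Ioo s t ∧ b ∈ Ioo s t) ∨ (a ∈ Ioo s2 t2 ∧ b ∈ Ioo s2 t2)))
    (hk1 : ∃ a b : ℝ, π a = T D (k + 1) x ∧ π b = T D (k + 1) y ∧ b < a ∧
       ((a ∈ Ioo s t ∧ b ∈ Ioo s t) ∨ (a ∈ Ioo s2 t2 ∧ b ∈ Ioo s2 t2))) : False := by
  obtain ⟨a, b, ha, hb, hab, hrun⟩ := hk
  obtain ⟨a2, b2, ha2, hb2, hb2a2, hrun2⟩ := hk1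
  have hbounds : s < a ∧ b < s + 1 ∧ b < a + 1 := by
    rcases hrun with ⟨⟨u1, u2⟩, ⟨v1, v2⟩⟩ | ⟨⟨u1, u2⟩, ⟨v1, v2⟩⟩ <;>
      exact ⟨by linarith, by linarith, by linarith⟩
  obtain ⟨hsa, hbs1, hba1⟩ := hbounds
  have hbounds2 : a2 < s + 1 ∧ s < b2 ∧ a2 < b2 + 1 := by
    rcases hrun2 with ⟨⟨u1, u2⟩, ⟨v1, v2⟩⟩ | ⟨⟨u1, u2⟩, ⟨v1, v2⟩⟩ <;>
      exact ⟨by linarith, by linarith, by linarith⟩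
  obtain ⟨ha2s1, hsb2, ha2b21⟩ := hbounds2
  have hTk_ne : T D k y ≠ T D k x := (T_ne D k hxy).symm
  have hTk1_ne : T D (k + 1) y ≠ T D (k + 1) x := (T_ne D (k + 1) hxy).symm
  have hBk : Arc (T D k y) (T D k x) = π '' Ioo b (a + 1) := arc_rev ha hb hab hba1
  have hπsBk : π s ∈ Arc (T D k y) (T D k x) := by
    rw [hBk]
    refine mem_img.mpr ⟨1, ?_, ?_⟩ <;> push_cast <;> linarith
  have hstep : D.h '' Arc (T D k y) (T D k x) = Arc (T D (k + 1) y) (T D (k + 1) x) := by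
    rw [arc_step D hTk_ne, ← T_h D k y, ← T_h D k x]
  have hhs : D.h (π s) ∈ Arc (T D (k + 1) y) (T D (k + 1) x) := by
    rw [← hstep]
    exact Set.mem_image_of_mem _ hπsBk
  have hb2rep : π (b2 + 1) = T D (k + 1) y := by
    rw [show π (b2 + 1) = π b2 from by simpa using coe_add_int b2 1]
    exact hb2
  have hc : (π a2 ∈ π '' Icc s t ∧ π (b2 + 1) ∈ π '' Icc s t) ∨
            (π a2 ∈ π '' Icc s2 t2 ∧ π (b2 + 1) ∈ π '' Icc s2 t2) := by
    rcases hsc (k + 1) with ⟨hx', hy'⟩ | ⟨hx', hy'⟩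
    · left
      rw [hI₀eq] at hx' hy'
      exact ⟨by rw [ha2]; exact hx', by rw [hb2rep]; exact hy'⟩
    · right
      rw [hI₁eq] at hx' hy'
      exact ⟨by rw [ha2]; exact hx', by rw [hb2rep]; exact hy'⟩
  have hcore := core (D := D) h1 h2 h3 h4 hsK htK hs2K ht2K
      ha2b21 (by linarith)
      (by rw [ha2]; exact T_mem_K D (k + 1) hxK)
      (by rw [hb2rep]; exact T_mem_K D (k + 1) hyK)
      hc
      (mem_img.mpr ⟨1, by push_cast; constructor <;> linarith⟩)
  have hArcB : Arc (T D (k + 1) y) (T D (k + 1) x) = π '' Ioo b2 a2 :=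
    arc_eq hb2 ha2 hb2a2 ha2b21
  have hBeq : π '' Ioo (b2 + 1) (a2 + 1) = π '' Ioo b2 a2 := by
    simpa using img_Ioo_shift b2 a2 1
  have hGpre : IsPreconnected (D.h '' I) :=
    (I_preconn D hI).image _ D.h.continuous.continuousOn
  have hGK : D.h '' I ⊆ D.Kᶜ := by rw [← T_one_img]; exact gap_compl D horbit 1
  have hGsub : D.h '' I ⊆ Arc (T D (k + 1) y) (T D (k + 1) x) :=
    preconn_in_arc hTk1_ne hGpre
      (fun hmem => (hGK hmem) (T_mem_K D (k + 1) hyK))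
      (fun hmem => (hGK hmem) (T_mem_K D (k + 1) hxK))
      ⟨D.h (π s), Set.mem_image_of_mem _ hsI, hhs⟩
  have htmem := hGsub htI
  rw [hArcB, ← hBeq] at htmem
  rcases hcore with hsub | hsub
  · obtain ⟨i, hi1, hi2⟩ := mem_img.mp (hsub htmem)
    rcases lt_trichotomy (i : ℝ) 0 with hc' | hc' | hc'
    · have := int_le_neg_one hc'; linarith
    · rw [hc', add_zero] at hi2; linarith
    · have := int_ge_one hc'; linarith
  · obtain ⟨i, hi1, hi2⟩ := mem_img.mp (hsub htmem)
    rcases lt_trichotomy (i : ℝ) 0 with hc' | hc' | hc'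
    · have := int_le_neg_one hc'; linarith
    · rw [hc', add_zero] at hi1; linarith
    · have := int_ge_one hc'; linarith

lemma same_code_eq
    (hI : ∃ x ∈ D.Kᶜ, I = connectedComponentIn D.Kᶜ x)
    (horbit : (⋃ n : ℤ, (fun y => (D.h.toEquiv ^ n) y) '' I) = D.Kᶜ)
    (hI₀ : ∃ s t : ℝ, s ≤ t ∧ t - s < 1 ∧
      I₀ = (fun x : ℝ => (x : UnitAddCircle)) '' Set.Icc s t ∧
      (s : UnitAddCircle) ∈ I ∧ (t : UnitAddCircle) ∈ D.h '' I)
    (hI₁ : ∃ s t : ℝ, s ≤ t ∧ t - s < 1 ∧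
      I₁ = (fun x : ℝ => (x : UnitAddCircle)) '' Set.Icc s t ∧
      (s : UnitAddCircle) ∈ D.h '' I ∧ (t : UnitAddCircle) ∈ I)
    (hdisj : Disjoint I₀ I₁) (hcover : D.K ⊆ I₀ ∪ I₁)
    {x y : UnitAddCircle} (hxK : x ∈ D.K) (hyK : y ∈ D.K)
    (hsc : ∀ k : ℤ, (T D k x ∈ I₀ ∧ T D k y ∈ I₀) ∨ (T D k x ∈ I₁ ∧ T D k y ∈ I₁)) :
    x = y := by
  by_contra hxy
  obtain ⟨s, t, s2, t2, h1, h2, h3, h4, hI₀eq, hI₁eq, hsI, ht2I, htI, hs2I⟩ :=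
    config D hI horbit hI₀ hI₁ hdisj
  have hIK : I ⊆ D.Kᶜ := by
    obtain ⟨x₀, hx₀, hIeq⟩ := hI
    rw [hIeq]
    exact connectedComponentIn_subset _ _
  have hhIK : D.h '' I ⊆ D.Kᶜ := by rw [← T_one_img]; exact gap_compl D horbit 1
  have hsK : π s ∉ D.K := hIK hsI
  have ht2K : π t2 ∉ D.K := hIK ht2I
  have htK : π t ∉ D.K := hhIK htI
  have hs2K : π s2 ∉ D.K := hhIK hs2I
  have hsc' : ∀ k : ℤ, (T D k y ∈ I₀ ∧ T D k x ∈ I₀) ∨ (T D k y ∈ I₁ ∧ T D k x ∈ I₁) :=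
    fun k => (hsc k).imp And.symm And.symm
  have hdich : ∀ k : ℤ, (∃ a b : ℝ, π a = T D k x ∧ π b = T D k y ∧ a < b ∧ ((a ∈ Ioo s t ∧ b ∈ Ioo s t) ∨ (a ∈ Ioo s2 t2 ∧ b ∈ Ioo s2 t2))) ∨ (∃ a b : ℝ, π a = T D k y ∧ π b = T D k x ∧ a < b ∧ ((a ∈ Ioo s t ∧ b ∈ Ioo s t) ∨ (a ∈ Ioo s2 t2 ∧ b ∈ Ioo s2 t2))) := by
    intro k
    have hxk : T D k x ∈ D.K := T_mem_K D k hxK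
    have hyk : T D k y ∈ D.K := T_mem_K D k hyK
    have hne : T D k x ≠ T D k y := T_ne D k hxy
    rcases hsc k with ⟨hx', hy'⟩ | ⟨hx', hy'⟩
    · rw [hI₀eq] at hx' hy'
      obtain ⟨a, ha, haIoo⟩ := icc_rep_strict hx' (by linarith) hxk hsK htK
      obtain ⟨b, hbm, hbIoo⟩ := icc_rep_strict hy' (by linarith) hyk hsK htK
      rcases lt_trichotomy a b with h | h | h
      · exact Or.inl ⟨a, b, ha, hbm, h, Or.inl ⟨haIoo, hbIoo⟩⟩
      · exact absurd (by rw [← ha, ← hbm, h]) hne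
      · exact Or.inr ⟨b, a, hbm, ha, h, Or.inl ⟨hbIoo, haIoo⟩⟩
    · rw [hI₁eq] at hx' hy'
      obtain ⟨a, ha, haIoo⟩ := icc_rep_strict hx' (by linarith) hxk hs2K ht2K
      obtain ⟨b, hbm, hbIoo⟩ := icc_rep_strict hy' (by linarith) hyk hs2K ht2K
      rcases lt_trichotomy a b with h | h | h
      · exact Or.inl ⟨a, b, ha, hbm, h, Or.inr ⟨haIoo, hbIoo⟩⟩
      · exact absurd (by rw [← ha, ← hbm, h]) hne
      · exact Or.inr ⟨b, a, hbm, ha, h, Or.inr ⟨hbIoo, haIoo⟩⟩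
  have hPQfalse : ∀ k : ℤ, (∃ a b : ℝ, π a = T D k x ∧ π b = T D k y ∧ a < b ∧ ((a ∈ Ioo s t ∧ b ∈ Ioo s t) ∨ (a ∈ Ioo s2 t2 ∧ b ∈ Ioo s2 t2))) → (∃ a b : ℝ, π a = T D k y ∧ π b = T D k x ∧ a < b ∧ ((a ∈ Ioo s t ∧ b ∈ Ioo s t) ∨ (a ∈ Ioo s2 t2 ∧ b ∈ Ioo s2 t2))) → False := by
    rintro k ⟨a, b, ha, hb, hab, hrun⟩ ⟨a', b', ha', hb', hab', hrun'⟩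
    have he1 : π a = π b' := by rw [ha, hb']
    have he2 : π b = π a' := by rw [hb, ha']
    have hmem : ∀ {u v : ℝ}, u ∈ Ioo s t → v ∈ Ioo s2 t2 → π u ≠ π v := by
      intro u v hu hv heq
      have m1 : π u ∈ I₀ := by
        rw [hI₀eq]
        exact ⟨u, Ioo_subset_Icc_self hu, rfl⟩
      have m2 : π v ∈ I₁ := by
        rw [hI₁eq]
        exact ⟨v, Ioo_subset_Icc_self hv, rfl⟩
      rw [heq] at m1
      exact Set.disjoint_left.mp hdisj m1 m2
    have hra : a = b' := by
      rcases hrun with ⟨⟨u1, u2⟩, _⟩ | ⟨⟨u1, u2⟩, _⟩ <;> rcases hrun' with ⟨_, ⟨w1, w2⟩⟩ | ⟨_, ⟨w1, w2⟩⟩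
      · exact rep_eq he1 (abs_lt.mpr ⟨by linarith, by linarith⟩)
      · exact absurd he1 (hmem ⟨u1, u2⟩ ⟨w1, w2⟩)
      · exact absurd he1.symm (hmem ⟨w1, w2⟩ ⟨u1, u2⟩)
      · exact rep_eq he1 (abs_lt.mpr ⟨by linarith, by linarith⟩)
    have hrb : b = a' := by
      rcases hrun with ⟨_, ⟨u1, u2⟩⟩ | ⟨_, ⟨u1, u2⟩⟩ <;> rcases hrun' with ⟨⟨w1, w2⟩, _⟩ | ⟨⟨w1, w2⟩, _⟩
      · exact rep_eq he2 (abs_lt.mpr ⟨by linarith, by linarith⟩)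
      · exact absurd he2 (hmem ⟨u1, u2⟩ ⟨w1, w2⟩)
      · exact absurd he2.symm (hmem ⟨w1, w2⟩ ⟨u1, u2⟩)
      · exact rep_eq he2 (abs_lt.mpr ⟨by linarith, by linarith⟩)
    linarith
  by_cases hallP : ∀ k : ℤ, (∃ a b : ℝ, π a = T D k x ∧ π b = T D k y ∧ a < b ∧ ((a ∈ Ioo s t ∧ b ∈ Ioo s t) ∨ (a ∈ Ioo s2 t2 ∧ b ∈ Ioo s2 t2)))
  · obtain ⟨n₀, hgap⟩ := exists_gap_in_arc D hI horbit hxK hyK hxy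
    exact arg1 D h1 h2 h3 h4 hI₀eq hI₁eq hcover horbit hxy hallP hgap
  by_cases hallQ : ∀ k : ℤ, (∃ a b : ℝ, π a = T D k y ∧ π b = T D k x ∧ a < b ∧ ((a ∈ Ioo s t ∧ b ∈ Ioo s t) ∨ (a ∈ Ioo s2 t2 ∧ b ∈ Ioo s2 t2)))
  · obtain ⟨n₀, hgap⟩ := exists_gap_in_arc D hI horbit hyK hxK (Ne.symm hxy)
    exact arg1 D h1 h2 h3 h4 hI₀eq hI₁eq hcover horbit (Ne.symm hxy) hallQ hgap
  rw [not_forall] at hallP hallQ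
  obtain ⟨k₁, hk₁⟩ := hallP
  obtain ⟨k₀, hk₀⟩ := hallQ
  have hQk₁ : (fun k => (∃ a b : ℝ, π a = T D k y ∧ π b = T D k x ∧ a < b ∧ ((a ∈ Ioo s t ∧ b ∈ Ioo s t) ∨ (a ∈ Ioo s2 t2 ∧ b ∈ Ioo s2 t2)))) k₁ := ((hdich k₁).resolve_left hk₁)
  have hPk₀ : (fun k => (∃ a b : ℝ, π a = T D k x ∧ π b = T D k y ∧ a < b ∧ ((a ∈ Ioo s t ∧ b ∈ Ioo s t) ∨ (a ∈ Ioo s2 t2 ∧ b ∈ Ioo s2 t2)))) k₀ := ((hdich k₀).resolve_right hk₀)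
  rcases lt_trichotomy k₀ k₁ with hlt | heq | hlt
  · obtain ⟨j, hPj, hnPj⟩ := flip (P := fun k => (∃ a b : ℝ, π a = T D k x ∧ π b = T D k y ∧ a < b ∧ ((a ∈ Ioo s t ∧ b ∈ Ioo s t) ∨ (a ∈ Ioo s2 t2 ∧ b ∈ Ioo s2 t2)))) hlt hPk₀ hk₁
    have hQj1 : (fun k => (∃ a b : ℝ, π a = T D k y ∧ π b = T D k x ∧ a < b ∧ ((a ∈ Ioo s t ∧ b ∈ Ioo s t) ∨ (a ∈ Ioo s2 t2 ∧ b ∈ Ioo s2 t2)))) (j + 1) := (hdich (j + 1)).resolve_left hnPj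
    obtain ⟨a', b', ha', hb', hab', hrun'⟩ := hQj1
    exact arg2 D h1 h2 h3 h4 hI₀eq hI₁eq hI horbit hsI htI hsK htK hs2K ht2K hxK hyK hxy hsc
      hPj ⟨b', a', hb', ha', hab', hrun'.imp And.symm And.symm⟩
  · exact hPQfalse k₀ hPk₀ (by rw [heq]; exact hQk₁)
  · obtain ⟨j, hQj, hnQj⟩ := flip (P := fun k => (∃ a b : ℝ, π a = T D k y ∧ π b = T D k x ∧ a < b ∧ ((a ∈ Ioo s t ∧ b ∈ Ioo s t) ∨ (a ∈ Ioo s2 t2 ∧ b ∈ Ioo s2 t2)))) hlt hQk₁ hk₀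
    have hPj1 : (fun k => (∃ a b : ℝ, π a = T D k x ∧ π b = T D k y ∧ a < b ∧ ((a ∈ Ioo s t ∧ b ∈ Ioo s t) ∨ (a ∈ Ioo s2 t2 ∧ b ∈ Ioo s2 t2)))) (j + 1) := (hdich (j + 1)).resolve_right hnQj
    obtain ⟨a', b', ha', hb', hab', hrun'⟩ := hPj1
    exact arg2 D h1 h2 h3 h4 hI₀eq hI₁eq hI horbit hsI htI hsK htK hs2K ht2K hyK hxK
      (Ne.symm hxy) hsc' hQj ⟨b', a', hb', ha', hab', hrun'.imp And.symm And.symm⟩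

end Main

end Part4

/-- For a Denjoy example whose complementary gaps form a single orbit, the coding of
points of the minimal set by two suitable arcs `I₀, I₁` is a continuous injective map
(hence a homeomorphism onto its image) conjugating `h` to the shift. -/
theorem denjoy_coding_embedding
    (D : DenjoySystem)
    (I : Set UnitAddCircle) (hI : ∃ x ∈ D.Kᶜ, I = connectedComponentIn D.Kᶜ x)
    (horbit : (⋃ n : ℤ, (fun y => (D.h.toEquiv ^ n) y) '' I) = D.Kᶜ)
    (I₀ I₁ : Set UnitAddCircle)
    (hI₀ : ∃ s t : ℝ, s ≤ t ∧ t - s < 1 ∧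
      I₀ = (fun x : ℝ => (x : UnitAddCircle)) '' Set.Icc s t ∧
      (s : UnitAddCircle) ∈ I ∧ (t : UnitAddCircle) ∈ D.h '' I)
    (hI₁ : ∃ s t : ℝ, s ≤ t ∧ t - s < 1 ∧
      I₁ = (fun x : ℝ => (x : UnitAddCircle)) '' Set.Icc s t ∧
      (s : UnitAddCircle) ∈ D.h '' I ∧ (t : UnitAddCircle) ∈ I)
    (hdisj : Disjoint I₀ I₁) (hcover : D.K ⊆ I₀ ∪ I₁)
    (ℓ : D.K → (ℤ → Fin 2))
    (hℓ : ∀ θ : D.K, ∀ k : ℤ,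
      (D.h.toEquiv ^ k) (θ : UnitAddCircle) ∈ (if ℓ θ k = 0 then I₀ else I₁)) :
    Continuous ℓ ∧ Function.Injective ℓ ∧ Topology.IsEmbedding ℓ ∧
      ∀ θ θ' : D.K, D.h (θ : UnitAddCircle) = (θ' : UnitAddCircle) →
        ℓ θ' = shift2 (ℓ θ) := by
  classical
  have hfin : ∀ i : Fin 2, i = 0 ∨ i = 1 := by decide
  have hcode : ∀ (θ : D.K) (k : ℤ),
      (ℓ θ k = 0 ∧ Part3.T D k (θ : UnitAddCircle) ∈ I₀) ∨
      (ℓ θ k = 1 ∧ Part3.T D k (θ : UnitAddCircle) ∈ I₁) := by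
    intro θ k
    have hspec := hℓ θ k
    rcases hfin (ℓ θ k) with h | h
    · left
      refine ⟨h, ?_⟩
      rw [if_pos h] at hspec
      exact hspec
    · right
      refine ⟨h, ?_⟩
      rw [if_neg (by rw [h]; decide)] at hspec
      exact hspec
  have hI₀closed : IsClosed I₀ := by
    obtain ⟨s, t, _, _, hEq, _, _⟩ := hI₀
    rw [hEq]
    exact (isCompact_Icc.image DenjoyAux.continuous_π).isClosed
  have hI₁closed : IsClosed I₁ := by
    obtain ⟨s, t, _, _, hEq, _, _⟩ := hI₁
    rw [hEq]
    exact (isCompact_Icc.image DenjoyAux.continuous_π).isClosed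
  have hcont : Continuous ℓ := by
    apply continuous_pi
    intro k
    have hf : Continuous (fun θ : D.K => Part3.T D k (θ : UnitAddCircle)) :=
      (Part3.T_cont D k).comp continuous_subtype_val
    have hset0 : {θ : D.K | ℓ θ k = 0} =
        (fun θ : D.K => Part3.T D k (θ : UnitAddCircle)) ⁻¹' I₀ := by
      ext θ
      simp only [Set.mem_setOf_eq, Set.mem_preimage]
      constructor
      · intro h0
        rcases hcode θ k with ⟨_, hm⟩ | ⟨h, _⟩
        · exact hm
        · rw [h0] at h; exact absurd h (by decide)
      · intro hm
        rcases hcode θ k with ⟨h, _⟩ | ⟨_, hm'⟩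
        · exact h
        · exact absurd hm (fun hmm => Set.disjoint_left.mp hdisj hmm hm')
    have hset1 : {θ : D.K | ℓ θ k = 1} =
        (fun θ : D.K => Part3.T D k (θ : UnitAddCircle)) ⁻¹' I₁ := by
      ext θ
      simp only [Set.mem_setOf_eq, Set.mem_preimage]
      constructor
      · intro h0
        rcases hcode θ k with ⟨h, _⟩ | ⟨_, hm⟩
        · rw [h0] at h; exact absurd h (by decide)
        · exact hm
      · intro hm
        rcases hcode θ k with ⟨_, hm'⟩ | ⟨h, _⟩
        · exact absurd hm' (fun hmm => Set.disjoint_left.mp hdisj hmm hm)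
        · exact h
    have hcl0 : IsClosed {θ : D.K | ℓ θ k = 0} := by rw [hset0]; exact hI₀closed.preimage hf
    have hcl1 : IsClosed {θ : D.K | ℓ θ k = 1} := by rw [hset1]; exact hI₁closed.preimage hf
    have hcompl0 : {θ : D.K | ℓ θ k = 0} = {θ : D.K | ℓ θ k = 1}ᶜ := by
      ext θ
      simp only [Set.mem_setOf_eq, Set.mem_compl_iff]
      constructor
      · intro h0 h1
        rw [h0] at h1; exact absurd h1 (by decide)
      · intro h1
        rcases hfin (ℓ θ k) with h | h
        · exact h
        · exact absurd h h1
    have hcompl1 : {θ : D.K | ℓ θ k = 1} = {θ : D.K | ℓ θ k = 0}ᶜ := by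
      rw [hcompl0, compl_compl]
    rw [continuous_discrete_rng]
    intro b
    rcases hfin b with hb | hb
    · subst hb
      have : (fun θ : D.K => ℓ θ k) ⁻¹' {0} = {θ : D.K | ℓ θ k = 0} := rfl
      rw [this, hcompl0]
      exact hcl1.isOpen_compl
    · subst hb
      have : (fun θ : D.K => ℓ θ k) ⁻¹' {1} = {θ : D.K | ℓ θ k = 1} := rfl
      rw [this, hcompl1]
      exact hcl0.isOpen_compl
  have hinj : Function.Injective ℓ := by
    intro θ θ' heq
    have hsc : ∀ k : ℤ,
        (Part3.T D k (θ : UnitAddCircle) ∈ I₀ ∧ Part3.T D k (θ' : UnitAddCircle) ∈ I₀) ∨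
        (Part3.T D k (θ : UnitAddCircle) ∈ I₁ ∧ Part3.T D k (θ' : UnitAddCircle) ∈ I₁) := by
      intro k
      rcases hcode θ k with ⟨h, hm⟩ | ⟨h, hm⟩ <;> rcases hcode θ' k with ⟨h', hm'⟩ | ⟨h', hm'⟩
      · exact Or.inl ⟨hm, hm'⟩
      · exfalso; rw [heq] at h; rw [h] at h'; exact absurd h' (by decide)
      · exfalso; rw [heq] at h; rw [h] at h'; exact absurd h' (by decide)
      · exact Or.inr ⟨hm, hm'⟩
    exact Subtype.ext (Part4.same_code_eq D hI horbit hI₀ hI₁ hdisj hcover θ.2 θ'.2 hsc)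
  have hemb : Topology.IsEmbedding ℓ := by
    haveI : CompactSpace D.K := isCompact_iff_compactSpace.mp D.K_cpt
    exact (hcont.isClosedEmbedding hinj).isEmbedding
  refine ⟨hcont, hinj, hemb, ?_⟩
  intro θ θ' hθθ'
  funext k
  have hTeq : Part3.T D k (θ' : UnitAddCircle) = Part3.T D (k + 1) (θ : UnitAddCircle) := by
    have h1 : Part3.T D 1 (θ : UnitAddCircle) = D.h (θ : UnitAddCircle) := by simp [Part3.T]
    calc Part3.T D k (θ' : UnitAddCircle)
        = Part3.T D k (D.h (θ : UnitAddCircle)) := by rw [hθθ']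
      _ = Part3.T D k (Part3.T D 1 (θ : UnitAddCircle)) := by rw [h1]
      _ = Part3.T D (k + 1) (θ : UnitAddCircle) := Part3.T_add D k 1 _
  show ℓ θ' k = ℓ θ (k + 1)
  rcases hcode θ' k with ⟨h, hm⟩ | ⟨h, hm⟩ <;> rcases hcode θ (k + 1) with ⟨h', hm'⟩ | ⟨h', hm'⟩
  · rw [h, h']
  · exfalso; rw [hTeq] at hm; exact Set.disjoint_left.mp hdisj hm hm'
  · exfalso; rw [hTeq] at hm; exact Set.disjoint_left.mp hdisj hm' hm
  · rw [h, h']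
end
end
end

section
/- For every irrational α₀ ∈ (0,1) and every ε > 0 there exists δ > 0 such that for every irrational α ∈ (0,1) with |α − α₀| < δ, the Hausdorff distance between X_α and X_{α₀} (with respect to a fixed metric on Σ₂ inducing the product topology, e.g. d(u,v) = sup_{k∈ℤ} |u(k) − v(k)|/(|k|+1)) is less than ε. -/
open Set

noncomputable section

/-- The two-sided Sturmian sequence of angle `α`: `s_α(k) = 0` iff the fractional part
of `kα` lies in `[0, α)`. -/
def sturmian (α : ℝ) : ℤ → Fin 2 := fun k => if Int.fract ((k : ℝ) * α) < α then 0 else 1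

/-- The closure of the shift orbit of the Sturmian sequence of angle `α`. -/
def sturmianHull (α : ℝ) : Set (ℤ → Fin 2) :=
  closure {v | ∃ n : ℤ, ∀ k : ℤ, v k = sturmian α (k + n)}

/-- A metric on `Σ₂ = {0,1}^ℤ` inducing the product topology:
`d(u,v) = sup_k |u k - v k| / (|k| + 1)`. -/
def dSeq (u v : ℤ → Fin 2) : ℝ :=
  ⨆ k : ℤ, |((u k : ℕ) : ℝ) - ((v k : ℕ) : ℝ)| / (|(k : ℝ)| + 1)

/-- The Hausdorff distance on subsets of `Σ₂` associated to the metric `dSeq`. -/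
def hausdorffDistSeq (A B : Set (ℤ → Fin 2)) : ℝ :=
  max (⨆ a : A, ⨅ b : B, dSeq a b) (⨆ b : B, ⨅ a : A, dSeq a b)

namespace SturmianAux

lemma fin2_cast_le (a : Fin 2) : ((a : ℕ) : ℝ) ≤ 1 := by
  have := a.is_lt
  have : (a : ℕ) ≤ 1 := by omega
  exact_mod_cast this

lemma num_le (a b : Fin 2) : |((a : ℕ) : ℝ) - ((b : ℕ) : ℝ)| ≤ 1 := by
  have h1 := fin2_cast_le a
  have h2 := fin2_cast_le b
  have h3 : (0:ℝ) ≤ ((a : ℕ) : ℝ) := by positivity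
  have h4 : (0:ℝ) ≤ ((b : ℕ) : ℝ) := by positivity
  rw [abs_le]; constructor <;> linarith

lemma term_nonneg (u v : ℤ → Fin 2) (k : ℤ) :
    0 ≤ |((u k : ℕ) : ℝ) - ((v k : ℕ) : ℝ)| / (|(k : ℝ)| + 1) := by positivity

lemma term_le (u v : ℤ → Fin 2) (k : ℤ) :
    |((u k : ℕ) : ℝ) - ((v k : ℕ) : ℝ)| / (|(k : ℝ)| + 1) ≤ 1 / (|(k : ℝ)| + 1) :=
  div_le_div_of_nonneg_right (num_le _ _) (by positivity) |>.trans_eq rfl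

lemma bddAbove_range (u v : ℤ → Fin 2) :
    BddAbove (Set.range fun k : ℤ => |((u k : ℕ) : ℝ) - ((v k : ℕ) : ℝ)| / (|(k : ℝ)| + 1)) := by
  refine ⟨1, ?_⟩
  rintro x ⟨k, rfl⟩
  refine (term_le u v k).trans ?_
  rw [div_le_one (by positivity)]
  have : (0:ℝ) ≤ |(k:ℝ)| := abs_nonneg _
  linarith

lemma dSeq_nonneg (u v : ℤ → Fin 2) : 0 ≤ dSeq u v :=
  le_trans (term_nonneg u v 0) (le_ciSup (bddAbove_range u v) (0 : ℤ))

/-- If two sequences agree on the window `[-N, N]` then their distance is at most `1/(N+2)`. -/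
lemma dSeq_le_of_agree (u v : ℤ → Fin 2) (N : ℕ)
    (h : ∀ k : ℤ, |k| ≤ (N : ℤ) → u k = v k) : dSeq u v ≤ 1 / ((N : ℝ) + 2) := by
  apply ciSup_le
  intro k
  rcases le_or_gt (|k|) (N : ℤ) with hk | hk
  · rw [h k hk, sub_self, abs_zero, zero_div]
    positivity
  · refine (term_le u v k).trans ?_
    apply one_div_le_one_div_of_le (by positivity)
    have : (N : ℝ) + 1 ≤ |(k : ℝ)| := by
      have : (N : ℤ) + 1 ≤ |k| := hk
      calc (N : ℝ) + 1 = ((N + 1 : ℤ) : ℝ) := by push_cast; ring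
        _ ≤ ((|k| : ℤ) : ℝ) := by exact_mod_cast this
        _ = |(k : ℝ)| := by push_cast; rfl
    linarith

lemma sturmianHull_nonempty (α : ℝ) : (sturmianHull α).Nonempty := by
  refine ⟨sturmian α, subset_closure ?_⟩
  exact ⟨0, fun k => by rw [add_zero]⟩

/-- Bounding the asymmetric Hausdorff pieces. -/
lemma haus_le {A B : Set (ℤ → Fin 2)} (hA : A.Nonempty) (hB : B.Nonempty) {c : ℝ}
    (h1 : ∀ a ∈ A, ∃ b ∈ B, dSeq a b ≤ c) (h2 : ∀ b ∈ B, ∃ a ∈ A, dSeq a b ≤ c) :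
    hausdorffDistSeq A B ≤ c := by
  have hAne : Nonempty A := hA.to_subtype
  have hBne : Nonempty B := hB.to_subtype
  rw [hausdorffDistSeq, max_le_iff]
  constructor
  · apply ciSup_le
    rintro ⟨a, ha⟩
    obtain ⟨b, hb, hd⟩ := h1 a ha
    exact ciInf_le_of_le ⟨0, by rintro x ⟨b', rfl⟩; exact dSeq_nonneg _ _⟩ ⟨b, hb⟩ hd
  · apply ciSup_le
    rintro ⟨b, hb⟩
    obtain ⟨a, ha, hd⟩ := h2 b hb
    exact ciInf_le_of_le ⟨0, by rintro x ⟨a', rfl⟩; exact dSeq_nonneg _ _⟩ ⟨a, ha⟩ hd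

/-- Every element of the hull agrees on a finite window with an orbit element. -/
lemma window_of_mem_hull {α : ℝ} {a : ℤ → Fin 2} (ha : a ∈ sturmianHull α) (N : ℕ) :
    ∃ n : ℤ, ∀ k : ℤ, |k| ≤ (N : ℤ) → a k = sturmian α (k + n) := by
  have hopen : IsOpen (Set.pi (↑(Finset.Icc (-(N:ℤ)) N) : Set ℤ) (fun k => {a k})) := by
    apply isOpen_set_pi (Finset.finite_toSet _)
    intro i _
    exact isOpen_discrete _
  have hmem : a ∈ Set.pi (↑(Finset.Icc (-(N:ℤ)) N) : Set ℤ) (fun k => {a k}) := by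
    intro i _; rfl
  obtain ⟨v, hv1, hv2⟩ := mem_closure_iff.1 ha _ hopen hmem
  obtain ⟨n, hn⟩ := hv2
  refine ⟨n, fun k hk => ?_⟩
  have hk' : k ∈ (↑(Finset.Icc (-(N:ℤ)) N) : Set ℤ) := by
    simp only [Finset.coe_Icc, Set.mem_Icc]
    rw [abs_le] at hk; omega
  have := hv1 k hk'
  simp only [Set.mem_singleton_iff] at this
  rw [← this, hn k]


/-- The coded word of angle `α` at point `x`. -/
noncomputable def w (α x : ℝ) (k : ℤ) : Fin 2 := if Int.fract ((k:ℝ) * α + x) < α then 0 else 1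

lemma sturmian_eq_w (α : ℝ) (n k : ℤ) :
    (if Int.fract (((k + n : ℤ) : ℝ) * α) < α then (0 : Fin 2) else 1) = w α ((n : ℝ) * α) k := by
  have : ((k + n : ℤ) : ℝ) * α = (k : ℝ) * α + (n : ℝ) * α := by push_cast; ring
  rw [w, this]

lemma fract_shift (z s : ℝ) (h1 : 0 ≤ Int.fract z + s) (h2 : Int.fract z + s < 1) :
    Int.fract (z + s) = Int.fract z + s := by
  have hz : z + s = (Int.fract z + s) + (⌊z⌋ : ℝ) := by rw [Int.fract]; ring
  rw [hz, Int.fract_add_intCast, Int.fract_eq_self.2 ⟨h1, h2⟩]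

lemma bit_eq {α β a b e : ℝ} (hfr : Int.fract a = Int.fract b + e)
    (h : |e| + |α - β| < |Int.fract b - β|) :
    (if Int.fract a < α then (0 : Fin 2) else 1) = (if Int.fract b < β then (0 : Fin 2) else 1) := by
  have h1 : -|e| ≤ e := neg_abs_le e
  have h2 : e ≤ |e| := le_abs_self e
  have h3 : -|α - β| ≤ α - β := neg_abs_le _
  have h4 : α - β ≤ |α - β| := le_abs_self _
  rcases lt_or_ge (Int.fract b) β with hb | hb
  · have habs : |Int.fract b - β| = β - Int.fract b := by rw [abs_of_neg (by linarith)]; ring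
    rw [habs] at h
    rw [if_pos hb, if_pos]
    rw [hfr]; linarith
  · have habs : |Int.fract b - β| = Int.fract b - β := abs_of_nonneg (by linarith)
    rw [habs] at h
    rw [if_neg (not_lt.2 hb), if_neg]
    push_neg
    rw [hfr]; linarith

/-- The main comparison lemma: if `y` has margin `g` for the angle `β`, and `x` is close
to `y` modulo 1, then the words agree on the window. -/
lemma matchE {α β x y g : ℝ} {N : ℕ} (e : ℝ) (p : ℤ)
    (hx : x = y + e + p)
    (hg : |e| + ((N : ℝ) + 1) * |α - β| < g)
    (hmargin : ∀ k : ℤ, |k| ≤ (N:ℤ) → g < Int.fract ((k:ℝ) * β + y) ∧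
      Int.fract ((k:ℝ) * β + y) < 1 - g ∧ g < |Int.fract ((k:ℝ) * β + y) - β|) :
    ∀ k : ℤ, |k| ≤ (N:ℤ) → w α x k = w β y k := by
  intro k hk
  obtain ⟨m1, m2, m3⟩ := hmargin k hk
  have hkR : |(k:ℝ)| ≤ (N:ℝ) := by
    have h' : ((|k| : ℤ) : ℝ) ≤ (((N:ℤ)) : ℝ) := by exact_mod_cast hk
    rwa [Int.cast_abs, Int.cast_natCast] at h'
  set s := (k:ℝ) * (α - β) + e with hs
  have hsb : |s| ≤ (N:ℝ) * |α - β| + |e| := by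
    refine (abs_add_le _ _).trans ?_
    have : |(k:ℝ) * (α - β)| = |(k:ℝ)| * |α - β| := abs_mul _ _
    rw [this]
    have := mul_le_mul_of_nonneg_right hkR (abs_nonneg (α - β))
    linarith
  have hslt : |s| < g := by
    have : (0:ℝ) ≤ |α - β| := abs_nonneg _
    nlinarith [abs_nonneg e]
  have hkey : (k:ℝ) * α + x = ((k:ℝ) * β + y + s) + (p : ℝ) := by rw [hx, hs]; ring
  have hfr : Int.fract ((k:ℝ) * α + x) = Int.fract ((k:ℝ) * β + y) + s := by
    rw [hkey]
    rw [show ((k:ℝ) * β + y + s) + (p:ℝ) = ((k:ℝ) * β + y + s) + ((p:ℤ):ℝ) by norm_num]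
    rw [Int.fract_add_intCast]
    apply fract_shift
    · have := abs_le.1 hslt.le; linarith
    · have := abs_le.1 hslt.le; linarith
  apply bit_eq hfr
  calc |s| + |α - β| ≤ (N:ℝ) * |α - β| + |e| + |α - β| := by linarith
    _ = |e| + ((N:ℝ) + 1) * |α - β| := by ring
    _ < g := hg
    _ < _ := m3

/-- Density of the orbit of an irrational rotation. -/
lemma dense_orbit (θ : ℝ) (hθ : Irrational θ) (y ε : ℝ) (hε : 0 < ε) :
    ∃ n p : ℤ, (n : ℝ) * θ + p ∈ Set.Ioo y (y + ε) := by
  set S := AddSubgroup.zmultiples θ ⊔ AddSubgroup.zmultiples (1 : ℝ) with hS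
  have hdense : Dense (S : Set ℝ) := by
    rcases AddSubgroup.dense_or_cyclic S with h | ⟨a, ha⟩
    · exact h
    · exfalso
      have hθS : θ ∈ S := le_sup_left (α := AddSubgroup ℝ) (AddSubgroup.mem_zmultiples θ)
      have h1S : (1:ℝ) ∈ S := le_sup_right (α := AddSubgroup ℝ) (AddSubgroup.mem_zmultiples 1)
      rw [ha, AddSubgroup.mem_closure_singleton] at hθS h1S
      obtain ⟨m, hm⟩ := hθS
      obtain ⟨n, hn⟩ := h1S
      have hn0 : n ≠ 0 := by rintro rfl; simp at hn
      apply hθ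
      refine ⟨(m : ℚ) / (n : ℚ), ?_⟩
      have hna : (n : ℝ) * a = 1 := by rw [← hn]; push_cast [zsmul_eq_mul]; ring
      have hm' : (m : ℝ) * a = θ := by rw [← hm]; push_cast [zsmul_eq_mul]; ring
      push_cast
      rw [div_eq_iff (by exact_mod_cast hn0 : ((n:ℝ)) ≠ 0)]
      calc (m:ℝ) = (m:ℝ) * ((n:ℝ) * a) := by rw [hna, mul_one]
        _ = ((m:ℝ) * a) * (n:ℝ) := by ring
        _ = θ * n := by rw [hm']
  obtain ⟨z, hz1, hz2⟩ := hdense.exists_between (by linarith : y < y + ε)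
  rw [SetLike.mem_coe, AddSubgroup.mem_sup] at hz1
  obtain ⟨u, hu, v, hv, huv⟩ := hz1
  obtain ⟨n, hn⟩ := AddSubgroup.mem_zmultiples_iff.1 hu
  obtain ⟨p, hp⟩ := AddSubgroup.mem_zmultiples_iff.1 hv
  refine ⟨n, p, ?_⟩
  have : (n:ℝ) * θ + p = z := by
    rw [← huv, ← hn, ← hp]; push_cast [zsmul_eq_mul]; ring
  rw [this]; exact hz2

lemma w_eval_lt {α x t : ℝ} {k : ℤ} (h : Int.fract ((k:ℝ)*α + x) = t) (h2 : t < α) :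
    w α x k = 0 := by rw [w, h, if_pos h2]

lemma w_eval_ge {α x t : ℝ} {k : ℤ} (h : Int.fract ((k:ℝ)*α + x) = t) (h2 : α ≤ t) :
    w α x k = 1 := by rw [w, h, if_neg (not_lt.2 h2)]

lemma fract_self_of (t : ℝ) (h1 : 0 ≤ t) (h2 : t < 1) : Int.fract t = t :=
  Int.fract_eq_self.2 ⟨h1, h2⟩

/-- Core template lemma: near a critical point indexed by `j`, with side `σ`, the `α`-word
at `x` equals the `α₀`-word at the reference point `-j·α₀ + σ·c`. -/
lemma template {α₀ α δ η r c : ℝ} {N : ℕ} {j p : ℤ} {x u σ : ℝ}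
    (hδ : 0 < δ) (hα : |α - α₀| ≤ δ)
    (h0₀ : 0 < α₀) (h1₀ : α₀ < 1)
    (hr : 0 < r) (hc : 0 < c)
    (h1 : r + δ < α₀) (h2 : r + δ < 1 - α₀)
    (h3 : c < 1 - α₀) (h4 : c < α₀)
    (h7 : r + (2*(N:ℝ)+2)*δ + 2*c < η)
    (hj : |j| ≤ (N:ℤ)+1)
    (hB : ∀ d : ℤ, d ≠ 0 → |d| ≤ 2*(N:ℤ)+1 → η < Int.fract ((d:ℝ)*α₀) ∧
      Int.fract ((d:ℝ)*α₀) < 1 - η ∧ (d ≠ 1 → η < |Int.fract ((d:ℝ)*α₀) - α₀|))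
    (hσ : σ = 1 ∨ σ = -1)
    (hxp : (j:ℝ) * α + x = u + (p:ℝ))
    (hu1 : σ = 1 → 0 ≤ u ∧ u ≤ r)
    (hu2 : σ = -1 → -r ≤ u ∧ u < 0) :
    ∀ k : ℤ, |k| ≤ (N:ℤ) → w α x k = w α₀ (-(j:ℝ) * α₀ + σ * c) k := by
  have hαl := (abs_le.1 hα).1
  have hαu := (abs_le.1 hα).2
  intro k hk
  set y : ℝ := -(j:ℝ) * α₀ + σ * c with hy
  set d : ℤ := k - j with hdd
  have hdabs : |d| ≤ 2*(N:ℤ)+1 := by rw [abs_le] at *; omega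
  have hdR : (d:ℝ) = (k:ℝ) - (j:ℝ) := by rw [hdd]; push_cast; ring
  have hu : |u| ≤ r := by
    rcases hσ with h | h
    · obtain ⟨a1, a2⟩ := hu1 h; rw [abs_le]; constructor <;> linarith
    · obtain ⟨a1, a2⟩ := hu2 h; rw [abs_le]; constructor <;> linarith
  have idx : (k:ℝ)*α + x = ((d:ℝ)*α₀ + ((d:ℝ)*(α-α₀) + u)) + (p:ℝ) := by
    rw [hdR]; linear_combination hxp
  have idy : (k:ℝ)*α₀ + y = (d:ℝ)*α₀ + σ*c := by rw [hy, hdR]; ring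
  have hNd : |(d:ℝ)| ≤ 2*(N:ℝ)+1 := by
    have : ((|d|:ℤ):ℝ) ≤ ((2*(N:ℤ)+1 : ℤ):ℝ) := by exact_mod_cast hdabs
    rw [Int.cast_abs] at this; push_cast at this ⊢; linarith
  have hsd : |(d:ℝ)*(α-α₀)| ≤ (2*(N:ℝ)+1)*δ := by
    rw [abs_mul]
    have := mul_le_mul hNd hα (abs_nonneg _) (by positivity)
    linarith
  rcases eq_or_ne d 0 with hd0 | hd0
  · -- k = j
    have idx0 : (k:ℝ)*α + x = u + (p:ℝ) := by rw [idx, hd0]; push_cast; ring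
    have idy0 : (k:ℝ)*α₀ + y = σ*c := by rw [idy, hd0]; push_cast; ring
    rcases hσ with h | h
    · obtain ⟨a1, a2⟩ := hu1 h
      have hfx : Int.fract ((k:ℝ)*α + x) = u := by
        rw [idx0, Int.fract_add_intCast, fract_self_of u a1 (by linarith)]
      have hfy : Int.fract ((k:ℝ)*α₀ + y) = c := by
        rw [idy0, h, one_mul, fract_self_of c hc.le (by linarith)]
      rw [w_eval_lt hfx (by linarith), w_eval_lt hfy (by linarith)]
    · obtain ⟨a1, a2⟩ := hu2 h
      have hfx : Int.fract ((k:ℝ)*α + x) = u + 1 := by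
        have e1 : Int.fract u = Int.fract (u + 1) := by
          rw [← Int.fract_add_intCast (u+1) (-1 : ℤ)]; congr 1; push_cast; ring
        rw [idx0, Int.fract_add_intCast, e1, fract_self_of (u+1) (by linarith) (by linarith)]
      have hfy : Int.fract ((k:ℝ)*α₀ + y) = 1 - c := by
        have e2 : Int.fract ((-1:ℝ)*c) = Int.fract (1 - c) := by
          rw [← Int.fract_add_intCast (1-c) (-1 : ℤ)]; congr 1; push_cast; ring
        rw [idy0, h, e2, fract_self_of (1-c) (by linarith) (by linarith)]
      rw [w_eval_ge hfx (by linarith), w_eval_ge hfy (by linarith)]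
  rcases eq_or_ne d 1 with hd1 | hd1
  · -- k = j + 1
    have idx1 : (k:ℝ)*α + x = (α + u) + (p:ℝ) := by rw [idx, hd1]; push_cast; ring
    have idy1 : (k:ℝ)*α₀ + y = α₀ + σ*c := by rw [idy, hd1]; push_cast; ring
    rcases hσ with h | h
    · obtain ⟨a1, a2⟩ := hu1 h
      have hfx : Int.fract ((k:ℝ)*α + x) = α + u := by
        rw [idx1, Int.fract_add_intCast, fract_self_of (α + u) (by linarith) (by linarith)]
      have hfy : Int.fract ((k:ℝ)*α₀ + y) = α₀ + c := by
        rw [idy1, h, one_mul, fract_self_of (α₀ + c) (by linarith) (by linarith)]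
      rw [w_eval_ge hfx (by linarith), w_eval_ge hfy (by linarith)]
    · obtain ⟨a1, a2⟩ := hu2 h
      have hfx : Int.fract ((k:ℝ)*α + x) = α + u := by
        rw [idx1, Int.fract_add_intCast, fract_self_of (α + u) (by linarith) (by linarith)]
      have hfy : Int.fract ((k:ℝ)*α₀ + y) = α₀ - c := by
        rw [idy1, h]
        rw [show α₀ + (-1:ℝ)*c = α₀ - c by ring,
          fract_self_of (α₀ - c) (by linarith) (by linarith)]
      rw [w_eval_lt hfx (by linarith), w_eval_lt hfy (by linarith)]
  · -- generic coordinate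
    obtain ⟨b1, b2, b3'⟩ := hB d hd0 hdabs
    have b3 := b3' hd1
    set B : ℝ := Int.fract ((d:ℝ)*α₀) with hBdef
    set s : ℝ := (d:ℝ)*(α-α₀) + u with hs
    have hsb : |s| ≤ (2*(N:ℝ)+1)*δ + r := by
      rw [hs]
      refine (abs_add_le _ _).trans ?_
      linarith
    have hsη : |s| < η - 2*c := by
      have : (2*(N:ℝ)+1)*δ + r < η - 2*c - δ := by nlinarith
      linarith
    have hsl := (abs_le.1 hsb).1
    have hsu := (abs_le.1 hsb).2
    have hsl' := (abs_le.1 hsη.le).1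
    have hsu' := (abs_le.1 hsη.le).2
    have hcη : c < η := by nlinarith
    have hσc : |σ*c| = c := by
      rcases hσ with h | h <;> rw [h] <;> simp [abs_of_pos hc]
    have hσcl : -c ≤ σ*c := neg_abs_le _ |>.trans_eq' (by rw [hσc])
    have hσcu : σ*c ≤ c := (le_abs_self _).trans_eq hσc
    have hfx : Int.fract ((k:ℝ)*α + x) = B + s := by
      rw [idx, Int.fract_add_intCast, hBdef]
      exact fract_shift _ _ (by linarith) (by linarith)
    have hfy : Int.fract ((k:ℝ)*α₀ + y) = B + σ*c := by
      rw [idy, hBdef]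
      exact fract_shift _ _ (by linarith) (by linarith)
    have hfr : Int.fract ((k:ℝ)*α + x) = Int.fract ((k:ℝ)*α₀ + y) + (s - σ*c) := by
      rw [hfx, hfy]; ring
    rw [w, w]
    apply bit_eq hfr
    have key : |B + σ*c - α₀| ≥ |B - α₀| - c := by
      have := abs_sub_abs_le_abs_sub (B - α₀) (B + σ*c - α₀)
      have h5 : |(B - α₀) - (B + σ*c - α₀)| = c := by
        rw [show (B - α₀) - (B + σ*c - α₀) = -(σ*c) by ring, abs_neg, hσc]
      linarith
    rw [hfy]
    have : |s - σ*c| ≤ |s| + c := (abs_sub _ _).trans (by rw [hσc])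
    calc |s - σ*c| + |α - α₀| ≤ (|s| + c) + δ := by linarith
      _ < (η - 2*c) + c := by linarith
      _ = η - c := by ring
      _ < |B - α₀| - c := by linarith
      _ ≤ |B + σ*c - α₀| := key

/-- The reference point `-j·α₀ + σ·c` has margin `g₂` for the angle `α₀`. -/
lemma template_margin {α₀ η c g₂ : ℝ} {N : ℕ} {j : ℤ} {σ : ℝ}
    (h1₀ : α₀ < 1)
    (hc : 0 < c) (hg2 : 0 < g₂)
    (m1 : g₂ < c) (m2 : g₂ + 2*c < η) (m3 : g₂ + c < α₀) (m4 : g₂ + c < 1 - α₀)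
    (hj : |j| ≤ (N:ℤ)+1)
    (hB : ∀ d : ℤ, d ≠ 0 → |d| ≤ 2*(N:ℤ)+1 → η < Int.fract ((d:ℝ)*α₀) ∧
      Int.fract ((d:ℝ)*α₀) < 1 - η ∧ (d ≠ 1 → η < |Int.fract ((d:ℝ)*α₀) - α₀|))
    (hσ : σ = 1 ∨ σ = -1) :
    ∀ k : ℤ, |k| ≤ (N:ℤ) → g₂ < Int.fract ((k:ℝ) * α₀ + (-(j:ℝ) * α₀ + σ * c)) ∧
      Int.fract ((k:ℝ) * α₀ + (-(j:ℝ) * α₀ + σ * c)) < 1 - g₂ ∧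
      g₂ < |Int.fract ((k:ℝ) * α₀ + (-(j:ℝ) * α₀ + σ * c)) - α₀| := by
  intro k hk
  set y : ℝ := -(j:ℝ) * α₀ + σ * c with hy
  set d : ℤ := k - j with hdd
  have hdabs : |d| ≤ 2*(N:ℤ)+1 := by rw [abs_le] at *; omega
  have hdR : (d:ℝ) = (k:ℝ) - (j:ℝ) := by rw [hdd]; push_cast; ring
  have idy : (k:ℝ)*α₀ + y = (d:ℝ)*α₀ + σ*c := by rw [hy, hdR]; ring
  rcases eq_or_ne d 0 with hd0 | hd0
  · have idy0 : (k:ℝ)*α₀ + y = σ*c := by rw [idy, hd0]; push_cast; ring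
    rcases hσ with h | h
    · have hfy : Int.fract ((k:ℝ)*α₀ + y) = c := by
        rw [idy0, h, one_mul, fract_self_of c hc.le (by linarith)]
      rw [hfy]
      refine ⟨m1, by linarith, ?_⟩
      rw [abs_of_neg (by linarith)]; linarith
    · have hfy : Int.fract ((k:ℝ)*α₀ + y) = 1 - c := by
        have e2 : Int.fract ((-1:ℝ)*c) = Int.fract (1 - c) := by
          rw [← Int.fract_add_intCast (1-c) (-1 : ℤ)]; congr 1; push_cast; ring
        rw [idy0, h, e2, fract_self_of (1-c) (by linarith) (by linarith)]
      rw [hfy]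
      refine ⟨by linarith, by linarith, ?_⟩
      rw [abs_of_pos (by linarith)]; linarith
  rcases eq_or_ne d 1 with hd1 | hd1
  · have idy1 : (k:ℝ)*α₀ + y = α₀ + σ*c := by rw [idy, hd1]; push_cast; ring
    rcases hσ with h | h
    · have hfy : Int.fract ((k:ℝ)*α₀ + y) = α₀ + c := by
        rw [idy1, h, one_mul, fract_self_of (α₀ + c) (by linarith) (by linarith)]
      rw [hfy]
      refine ⟨by linarith, by linarith, ?_⟩
      rw [show α₀ + c - α₀ = c by ring, abs_of_pos hc]; exact m1
    · have hfy : Int.fract ((k:ℝ)*α₀ + y) = α₀ - c := by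
        rw [idy1, h, show α₀ + (-1:ℝ)*c = α₀ - c by ring,
          fract_self_of (α₀ - c) (by linarith) (by linarith)]
      rw [hfy]
      refine ⟨by linarith, by linarith, ?_⟩
      rw [show α₀ - c - α₀ = -c by ring, abs_neg, abs_of_pos hc]; exact m1
  · obtain ⟨b1, b2, b3'⟩ := hB d hd0 hdabs
    have b3 := b3' hd1
    set B : ℝ := Int.fract ((d:ℝ)*α₀) with hBdef
    have hσc : |σ*c| = c := by
      rcases hσ with h | h <;> rw [h] <;> simp [abs_of_pos hc]
    have hσcl : -c ≤ σ*c := neg_abs_le _ |>.trans_eq' (by rw [hσc])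
    have hσcu : σ*c ≤ c := (le_abs_self _).trans_eq hσc
    have hfy : Int.fract ((k:ℝ)*α₀ + y) = B + σ*c := by
      rw [idy, hBdef]
      exact fract_shift _ _ (by linarith) (by linarith)
    rw [hfy]
    refine ⟨by linarith, by linarith, ?_⟩
    have key : |B + σ*c - α₀| ≥ |B - α₀| - c := by
      have := abs_sub_abs_le_abs_sub (B - α₀) (B + σ*c - α₀)
      have h5 : |(B - α₀) - (B + σ*c - α₀)| = c := by
        rw [show (B - α₀) - (B + σ*c - α₀) = -(σ*c) by ring, abs_neg, hσc]
      linarith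
    linarith

/-- If some coordinate of `x` is near-critical for `α₀`, we can locate `x` near a critical
point: there is `j` with `|j| ≤ N+1` such that `j·α + x` is within `G + (N+1)δ` of an integer. -/
lemma near_crit {α₀ α x δ G : ℝ} {N : ℕ} (hδ : 0 ≤ δ) (hα : |α - α₀| ≤ δ)
    (k₀ : ℤ) (hk₀ : |k₀| ≤ (N:ℤ))
    (hbad : Int.fract ((k₀:ℝ)*α₀ + x) ≤ G ∨ 1 - G ≤ Int.fract ((k₀:ℝ)*α₀ + x) ∨
      |Int.fract ((k₀:ℝ)*α₀ + x) - α₀| ≤ G) :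
    ∃ (j p : ℤ) (u : ℝ), |j| ≤ (N:ℤ)+1 ∧ (j:ℝ) * α + x = u + (p:ℝ) ∧
      |u| ≤ G + ((N:ℝ)+1)*δ := by
  set f : ℝ := Int.fract ((k₀:ℝ)*α₀ + x) with hf
  have hfl : 0 ≤ f := Int.fract_nonneg _
  have hfu : f < 1 := Int.fract_lt_one _
  have hfloor : (k₀:ℝ)*α₀ + x = f + (⌊(k₀:ℝ)*α₀ + x⌋ : ℝ) := by rw [hf, Int.fract]; ring
  have hk₀R : |(k₀:ℝ)| ≤ (N:ℝ) := by
    have h' : ((|k₀| : ℤ) : ℝ) ≤ (((N:ℤ)) : ℝ) := by exact_mod_cast hk₀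
    rwa [Int.cast_abs, Int.cast_natCast] at h'
  have hkd : |(k₀:ℝ)*(α - α₀)| ≤ (N:ℝ)*δ := by
    rw [abs_mul]
    exact mul_le_mul hk₀R hα (abs_nonneg _) (by positivity)
  have hkdl := (abs_le.1 hkd).1
  have hkdu := (abs_le.1 hkd).2
  have hNδ : (0:ℝ) ≤ (N:ℝ)*δ := by positivity
  have hkd1 : |((k₀:ℝ) - 1)*(α - α₀)| ≤ ((N:ℝ)+1)*δ := by
    rw [abs_mul]
    have h1 : |(k₀:ℝ) - 1| ≤ (N:ℝ) + 1 := (abs_sub _ _).trans (by rw [abs_one]; linarith)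
    exact mul_le_mul h1 hα (abs_nonneg _) (by positivity)
  have hkd1l := (abs_le.1 hkd1).1
  have hkd1u := (abs_le.1 hkd1).2
  rcases hbad with hb | hb | hb
  · refine ⟨k₀, ⌊(k₀:ℝ)*α₀ + x⌋, f + (k₀:ℝ)*(α-α₀), by omega, ?_, ?_⟩
    · linear_combination hfloor
    · rw [abs_le]; constructor <;> linarith
  · refine ⟨k₀, ⌊(k₀:ℝ)*α₀ + x⌋ + 1, (f - 1) + (k₀:ℝ)*(α-α₀), by omega, ?_, ?_⟩
    · push_cast; linear_combination hfloor
    · rw [abs_le]; constructor <;> linarith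
  · have hbl := (abs_le.1 hb).1
    have hbu := (abs_le.1 hb).2
    refine ⟨k₀ - 1, ⌊(k₀:ℝ)*α₀ + x⌋, (f - α₀) + ((k₀:ℝ) - 1)*(α-α₀), ?_, ?_, ?_⟩
    · rw [abs_le] at *; omega
    · push_cast; linear_combination hfloor
    · rw [abs_le]; constructor <;> linarith


lemma fract_pos_of_irrational {z : ℝ} (hz : Irrational z) : 0 < Int.fract z := by
  rcases lt_or_eq_of_le (Int.fract_nonneg z) with h | h
  · exact h
  · exfalso
    have : z = (⌊z⌋ : ℝ) := by
      conv_lhs => rw [← Int.floor_add_fract z, ← h, add_zero]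
    exact hz.ne_int ⌊z⌋ this

lemma fract_ne_of_irrational {z β : ℝ} (hz : Irrational (z - β)) :
    Int.fract z ≠ β := by
  intro h
  apply hz.ne_int (⌊z⌋)
  rw [← h, Int.fract]
  ring

lemma exists_eta (α₀ : ℝ) (hirr₀ : Irrational α₀) (h0₀ : 0 < α₀) (h1₀ : α₀ < 1) (N : ℕ) :
    ∃ η > 0, η ≤ α₀ ∧ η ≤ 1 - α₀ ∧
      ∀ d : ℤ, d ≠ 0 → |d| ≤ 2*(N:ℤ)+1 → η < Int.fract ((d:ℝ)*α₀) ∧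
        Int.fract ((d:ℝ)*α₀) < 1 - η ∧ (d ≠ 1 → η < |Int.fract ((d:ℝ)*α₀) - α₀|) := by
  classical
  set T : Finset ℤ := Finset.Icc (-(2*(N:ℤ)+1)) (2*(N:ℤ)+1) with hT
  have hTne : T.Nonempty := ⟨0, by simp [hT]; omega⟩
  set q : ℤ → ℝ := fun d =>
    if d = 0 then 1 else
      min (min (Int.fract ((d:ℝ)*α₀)) (1 - Int.fract ((d:ℝ)*α₀)))
        (if d = 1 then 1 else |Int.fract ((d:ℝ)*α₀) - α₀|) with hq
  have hqpos : ∀ d ∈ T, 0 < q d := by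
    intro d _
    simp only [hq]
    by_cases hd0 : d = 0
    · simp [hd0]
    · have hirr : Irrational ((d:ℝ)*α₀) := by
        have := hirr₀.intCast_mul hd0
        exact this
      have hp1 : 0 < Int.fract ((d:ℝ)*α₀) := fract_pos_of_irrational hirr
      have hp2 : Int.fract ((d:ℝ)*α₀) < 1 := Int.fract_lt_one _
      rw [if_neg hd0]
      by_cases hd1 : d = 1
      · rw [if_pos hd1]
        simp only [lt_min_iff]
        exact ⟨⟨hp1, by linarith⟩, by norm_num⟩
      · rw [if_neg hd1]
        simp only [lt_min_iff]
        refine ⟨⟨hp1, by linarith⟩, ?_⟩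
        rw [abs_pos, sub_ne_zero]
        apply fract_ne_of_irrational
        have : ((d:ℝ)*α₀ - α₀) = ((d - 1 : ℤ) : ℝ) * α₀ := by push_cast; ring
        rw [this]
        exact hirr₀.intCast_mul (by omega)
  set m : ℝ := T.inf' hTne q with hm
  have hmpos : 0 < m := by
    rw [hm, Finset.lt_inf'_iff]
    exact fun d hd => hqpos d hd
  set η : ℝ := min (min α₀ (1 - α₀)) m / 2 with hη
  have hηpos : 0 < η := by
    rw [hη]
    have : 0 < min (min α₀ (1 - α₀)) m := by
      simp only [lt_min_iff]
      exact ⟨⟨h0₀, by linarith⟩, hmpos⟩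
    linarith
  have hη2 : 2 * η ≤ min (min α₀ (1 - α₀)) m := by rw [hη]; linarith
  have hηα : η ≤ α₀ := by
    have := (min_le_left _ m).trans' hη2 |>.trans (min_le_left _ _)
    linarith
  have hηα' : η ≤ 1 - α₀ := by
    have := (min_le_left _ m).trans' hη2 |>.trans (min_le_right _ _)
    linarith
  have hηm : 2 * η ≤ m := hη2.trans (min_le_right _ _)
  refine ⟨η, hηpos, hηα, hηα', fun d hd0 hdle => ?_⟩
  have hdT : d ∈ T := by rw [abs_le] at hdle; rw [hT]; simp only [Finset.mem_Icc]; omega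
  have hqd : m ≤ q d := Finset.inf'_le q hdT
  simp only [hq] at hqd
  rw [if_neg hd0] at hqd
  simp only [le_min_iff] at hqd
  obtain ⟨⟨q1, q2⟩, q3⟩ := hqd
  refine ⟨by linarith, by linarith, fun hd1 => ?_⟩
  rw [if_neg hd1] at q3
  linarith

/-- Main combinatorial lemma: for `α` close to `α₀`, every window word of the `α`-orbit
appears in the `α₀`-orbit and vice versa. -/
lemma key (α₀ : ℝ) (hirr₀ : Irrational α₀) (h0₀ : 0 < α₀) (h1₀ : α₀ < 1) (N : ℕ) :
    ∃ δ > (0:ℝ), ∀ α : ℝ, Irrational α → 0 < α → α < 1 → |α - α₀| < δ →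
      (∀ n : ℤ, ∃ m : ℤ, ∀ k : ℤ, |k| ≤ (N:ℤ) → w α ((n:ℝ)*α) k = w α₀ ((m:ℝ)*α₀) k) ∧
      (∀ m : ℤ, ∃ n : ℤ, ∀ k : ℤ, |k| ≤ (N:ℤ) → w α ((n:ℝ)*α) k = w α₀ ((m:ℝ)*α₀) k) := by
  obtain ⟨η, hηpos, hηα, hηα', hB⟩ := exists_eta α₀ hirr₀ h0₀ h1₀ N
  have hN0 : (0:ℝ) ≤ (N:ℝ) := Nat.cast_nonneg N
  set δ : ℝ := η / (20 * ((N:ℝ) + 2)) with hδdef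
  have hδpos : 0 < δ := by rw [hδdef]; positivity
  have hδη : δ * (20 * ((N:ℝ) + 2)) = η := by rw [hδdef]; field_simp
  set G : ℝ := 3 * ((N:ℝ) + 2) * δ with hGdef
  set r : ℝ := G + ((N:ℝ) + 1) * δ with hrdef
  set c : ℝ := η / 4 with hcdef
  set g₂ : ℝ := η / 8 with hg2def
  have hGpos : 0 < G := by rw [hGdef]; positivity
  have hrpos : 0 < r := by rw [hrdef, hGdef]; positivity
  have hcpos : 0 < c := by rw [hcdef]; positivity
  have hg2pos : 0 < g₂ := by rw [hg2def]; positivity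
  have hNδ0 : (0:ℝ) ≤ (N:ℝ) * δ := by positivity
  have hη20 : (20*(N:ℝ)+40)*δ = η := by linear_combination hδη
  have hrδ : 5 * (r + δ) = η := by rw [hrdef, hGdef]; linear_combination hδη
  have F1 : r + δ < α₀ := by linarith
  have F2 : r + δ < 1 - α₀ := by linarith
  have F3 : c < 1 - α₀ := by rw [hcdef]; linarith
  have F4 : c < α₀ := by rw [hcdef]; linarith
  have F7 : r + (2*(N:ℝ)+2)*δ + 2*c < η := by
    have hexp : r + (2*(N:ℝ)+2)*δ + 2*c = (6*(N:ℝ)+9)*δ + η/2 := by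
      rw [hrdef, hGdef, hcdef]; ring
    rw [hexp]
    linarith
  have m1 : g₂ < c := by rw [hg2def, hcdef]; linarith
  have m2 : g₂ + 2*c < η := by rw [hg2def, hcdef]; linarith
  have m3 : g₂ + c < α₀ := by rw [hg2def, hcdef]; linarith
  have m4 : g₂ + c < 1 - α₀ := by rw [hg2def, hcdef]; linarith
  have hδG : δ < G := by rw [hGdef]; linarith
  have hNδG : ((N:ℝ)+1) * δ < G := by rw [hGdef]; linarith
  have hN2δG : ((N:ℝ)+2) * δ < G := by rw [hGdef]; linarith
  have hδg2 : δ < g₂ := by rw [hg2def]; linarith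
  have hN2δg2 : ((N:ℝ)+2) * δ < g₂ := by rw [hg2def]; linarith
  refine ⟨δ, hδpos, ?_⟩
  intro α hirrα h0α h1α hαδ
  have hαδ' : |α - α₀| ≤ δ := hαδ.le
  have hα₀self : |α₀ - α₀| ≤ δ := by rw [sub_self, abs_zero]; exact hδpos.le
  constructor
  · -- direction 1 : every α-word appears for α₀
    intro n
    set x : ℝ := (n:ℝ) * α with hxdef
    by_cases hgood : ∀ k : ℤ, |k| ≤ (N:ℤ) → G < Int.fract ((k:ℝ)*α₀ + x) ∧
        Int.fract ((k:ℝ)*α₀ + x) < 1 - G ∧ G < |Int.fract ((k:ℝ)*α₀ + x) - α₀|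
    · have step1 : ∀ k : ℤ, |k| ≤ (N:ℤ) → w α x k = w α₀ x k := by
        refine matchE (0:ℝ) (0:ℤ) (by push_cast; ring) ?_ hgood
        rw [abs_zero, zero_add]
        have hmul : ((N:ℝ)+1)*|α-α₀| ≤ ((N:ℝ)+1)*δ :=
          mul_le_mul_of_nonneg_left hαδ' (by positivity)
        linarith
      obtain ⟨m, p, hm1, hm2⟩ := dense_orbit α₀ hirr₀ x δ hδpos
      have step2 : ∀ k : ℤ, |k| ≤ (N:ℤ) → w α₀ ((m:ℝ)*α₀) k = w α₀ x k := by
        refine matchE ((m:ℝ)*α₀ + p - x) (-p) (by push_cast; ring) ?_ hgood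
        rw [sub_self, abs_zero, mul_zero, add_zero, abs_of_pos (by linarith)]
        linarith
      exact ⟨m, fun k hk => (step1 k hk).trans (step2 k hk).symm⟩
    · push_neg at hgood
      obtain ⟨k₀, hk₀, hbad'⟩ := hgood
      have hdisj : Int.fract ((k₀:ℝ)*α₀ + x) ≤ G ∨ 1 - G ≤ Int.fract ((k₀:ℝ)*α₀ + x) ∨
          |Int.fract ((k₀:ℝ)*α₀ + x) - α₀| ≤ G := by
        rcases le_or_gt (Int.fract ((k₀:ℝ)*α₀ + x)) G with h | h
        · exact Or.inl h
        rcases le_or_gt (1 - G) (Int.fract ((k₀:ℝ)*α₀ + x)) with h2 | h2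
        · exact Or.inr (Or.inl h2)
        · exact Or.inr (Or.inr (hbad' h h2))
      obtain ⟨j, p, u, hj, hjpu, hub⟩ := near_crit hδpos.le hαδ' k₀ hk₀ hdisj
      have hub' : |u| ≤ r := by rw [hrdef]; exact hub
      obtain ⟨σ, hσ, hu1, hu2⟩ : ∃ σ : ℝ, (σ = 1 ∨ σ = -1) ∧ (σ = 1 → 0 ≤ u ∧ u ≤ r) ∧
          (σ = -1 → -r ≤ u ∧ u < 0) := by
        rcases le_or_gt 0 u with h | h
        · exact ⟨1, Or.inl rfl, fun _ => ⟨h, (le_abs_self u).trans hub'⟩,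
            fun hc => by norm_num at hc⟩
        · exact ⟨-1, Or.inr rfl, fun hc => by norm_num at hc,
            fun _ => ⟨(abs_le.1 hub').1, h⟩⟩
      have step1 := template hδpos hαδ' h0₀ h1₀ hrpos hcpos F1 F2 F3 F4 F7 hj hB hσ hjpu hu1 hu2
      have hmarg := template_margin (j := j) (σ := σ) h1₀ hcpos hg2pos m1 m2 m3 m4 hj hB hσ
      obtain ⟨m, p₂, hm1, hm2⟩ := dense_orbit α₀ hirr₀ (-(j:ℝ) * α₀ + σ * c) δ hδpos
      have step2 : ∀ k : ℤ, |k| ≤ (N:ℤ) →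
          w α₀ ((m:ℝ)*α₀) k = w α₀ (-(j:ℝ) * α₀ + σ * c) k := by
        refine matchE ((m:ℝ)*α₀ + p₂ - (-(j:ℝ) * α₀ + σ * c)) (-p₂) (by push_cast; ring)
          ?_ hmarg
        rw [sub_self, abs_zero, mul_zero, add_zero, abs_of_pos (by linarith)]
        linarith
      exact ⟨m, fun k hk => (step1 k hk).trans (step2 k hk).symm⟩
  · -- direction 2 : every α₀-word appears for α
    intro m
    set x₀ : ℝ := (m:ℝ) * α₀ with hx₀def
    by_cases hgood : ∀ k : ℤ, |k| ≤ (N:ℤ) → G < Int.fract ((k:ℝ)*α₀ + x₀) ∧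
        Int.fract ((k:ℝ)*α₀ + x₀) < 1 - G ∧ G < |Int.fract ((k:ℝ)*α₀ + x₀) - α₀|
    · obtain ⟨n, p, hn1, hn2⟩ := dense_orbit α hirrα x₀ δ hδpos
      refine ⟨n, ?_⟩
      refine matchE ((n:ℝ)*α + p - x₀) (-p) (by push_cast; ring) ?_ hgood
      have hmul : ((N:ℝ)+1)*|α-α₀| ≤ ((N:ℝ)+1)*δ :=
        mul_le_mul_of_nonneg_left hαδ' (by positivity)
      rw [abs_of_pos (by linarith)]
      linarith
    · push_neg at hgood
      obtain ⟨k₀, hk₀, hbad'⟩ := hgood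
      have hdisj : Int.fract ((k₀:ℝ)*α₀ + x₀) ≤ G ∨ 1 - G ≤ Int.fract ((k₀:ℝ)*α₀ + x₀) ∨
          |Int.fract ((k₀:ℝ)*α₀ + x₀) - α₀| ≤ G := by
        rcases le_or_gt (Int.fract ((k₀:ℝ)*α₀ + x₀)) G with h | h
        · exact Or.inl h
        rcases le_or_gt (1 - G) (Int.fract ((k₀:ℝ)*α₀ + x₀)) with h2 | h2
        · exact Or.inr (Or.inl h2)
        · exact Or.inr (Or.inr (hbad' h h2))
      obtain ⟨j, p, u, hj, hjpu, hub⟩ := near_crit hδpos.le hα₀self k₀ hk₀ hdisj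
      have hub' : |u| ≤ r := by rw [hrdef]; exact hub
      obtain ⟨σ, hσ, hu1, hu2⟩ : ∃ σ : ℝ, (σ = 1 ∨ σ = -1) ∧ (σ = 1 → 0 ≤ u ∧ u ≤ r) ∧
          (σ = -1 → -r ≤ u ∧ u < 0) := by
        rcases le_or_gt 0 u with h | h
        · exact ⟨1, Or.inl rfl, fun _ => ⟨h, (le_abs_self u).trans hub'⟩,
            fun hc => by norm_num at hc⟩
        · exact ⟨-1, Or.inr rfl, fun hc => by norm_num at hc,
            fun _ => ⟨(abs_le.1 hub').1, h⟩⟩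
      have step1 := template hδpos hα₀self h0₀ h1₀ hrpos hcpos F1 F2 F3 F4 F7 hj hB hσ hjpu hu1 hu2
      have hmarg := template_margin (j := j) (σ := σ) h1₀ hcpos hg2pos m1 m2 m3 m4 hj hB hσ
      obtain ⟨n, p₂, hn1, hn2⟩ := dense_orbit α hirrα (-(j:ℝ) * α₀ + σ * c) δ hδpos
      have step2 : ∀ k : ℤ, |k| ≤ (N:ℤ) →
          w α ((n:ℝ)*α) k = w α₀ (-(j:ℝ) * α₀ + σ * c) k := by
        refine matchE ((n:ℝ)*α + p₂ - (-(j:ℝ) * α₀ + σ * c)) (-p₂) (by push_cast; ring)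
          ?_ hmarg
        have hmul : ((N:ℝ)+1)*|α-α₀| ≤ ((N:ℝ)+1)*δ :=
          mul_le_mul_of_nonneg_left hαδ' (by positivity)
        rw [abs_of_pos (by linarith)]
        linarith
      exact ⟨n, fun k hk => (step2 k hk).trans (step1 k hk).symm⟩

end SturmianAux

namespace SturmianAux

lemma sturmian_shift (α : ℝ) (n k : ℤ) : sturmian α (k + n) = w α ((n:ℝ)*α) k := by
  show (if Int.fract (((k + n : ℤ) : ℝ) * α) < α then (0:Fin 2) else 1) = _
  exact sturmian_eq_w α n k

end SturmianAux


open SturmianAux in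
/-- The Sturmian subshift `X_α` depends continuously on the irrational angle `α` for
the Hausdorff distance. -/
theorem sturmianHull_continuous
    (α₀ : ℝ) (hirr₀ : Irrational α₀) (h0₀ : 0 < α₀) (h1₀ : α₀ < 1) :
    ∀ ε > (0 : ℝ), ∃ δ > (0 : ℝ), ∀ α : ℝ, Irrational α → 0 < α → α < 1 →
      |α - α₀| < δ → hausdorffDistSeq (sturmianHull α) (sturmianHull α₀) < ε := by
  intro ε hε
  obtain ⟨N, hN⟩ := exists_nat_gt (1/ε)
  have hNε : 1/((N:ℝ)+2) < ε := by
    rw [div_lt_iff₀ (by positivity)]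
    have h1 : 1/ε < (N:ℝ) := hN
    have h2 : 1 < ε * (N:ℝ) := by
      rw [div_lt_iff₀ hε] at h1
      linarith [h1]
    nlinarith
  obtain ⟨δ, hδpos, hkey⟩ := key α₀ hirr₀ h0₀ h1₀ N
  refine ⟨δ, hδpos, ?_⟩
  intro α hirrα h0α h1α hαδ
  obtain ⟨dir1, dir2⟩ := hkey α hirrα h0α h1α hαδ
  have hb : hausdorffDistSeq (sturmianHull α) (sturmianHull α₀) ≤ 1/((N:ℝ)+2) := by
    apply haus_le (sturmianHull_nonempty α) (sturmianHull_nonempty α₀)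
    · intro a ha
      obtain ⟨n, hn⟩ := window_of_mem_hull ha N
      obtain ⟨m, hm⟩ := dir1 n
      refine ⟨fun k => sturmian α₀ (k + m), subset_closure ⟨m, fun k => rfl⟩, ?_⟩
      apply dSeq_le_of_agree
      intro k hk
      rw [hn k hk, sturmian_shift α n k, hm k hk, ← sturmian_shift α₀ m k]
    · intro b hbmem
      obtain ⟨m, hm⟩ := window_of_mem_hull hbmem N
      obtain ⟨n, hn⟩ := dir2 m
      refine ⟨fun k => sturmian α (k + n), subset_closure ⟨n, fun k => rfl⟩, ?_⟩
      apply dSeq_le_of_agree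
      intro k hk
      rw [hm k hk, sturmian_shift α₀ m k, ← hn k hk, ← sturmian_shift α n k]
  linarith
end
end

section
/- For every irrational α ∈ (0,1), the set X_α is nonempty and compact, satisfies σ(X_α) = X_α, the shift restricted to X_α is minimal (for every u ∈ X_α the orbit {σⁿ(u) : n ∈ ℤ} is dense in X_α), X_α contains no σ-periodic point (there is no u ∈ X_α and n ≠ 0 with σⁿ(u) = u), and X_α is a Cantor set (perfect and totally disconnected). -/
open Set

noncomputable section

open Topology

/-! ### Auxiliary lemmas -/

section Aux

/-- Membership in a closure in the product space `ℤ → Fin 2` is detected by finite windows. -/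
lemma memClosurePi {S : Set (ℤ → Fin 2)} {u : ℤ → Fin 2} :
    u ∈ closure S ↔ ∀ F : Finset ℤ, ∃ v ∈ S, ∀ k ∈ F, v k = u k := by
  constructor
  · intro h F
    have hop : IsOpen {v : ℤ → Fin 2 | ∀ k ∈ F, v k = u k} := by
      have : {v : ℤ → Fin 2 | ∀ k ∈ F, v k = u k} =
          ⋂ k ∈ F, (fun v : ℤ → Fin 2 => v k) ⁻¹' {u k} := by
        ext v; simp [Set.mem_iInter]
      rw [this]
      exact isOpen_biInter_finset fun k _ =>
        (continuous_apply k).isOpen_preimage _ (isOpen_discrete _)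
    have hmem : {v : ℤ → Fin 2 | ∀ k ∈ F, v k = u k} ∈ 𝓝 u := hop.mem_nhds (by simp)
    rcases (mem_closure_iff_nhds.mp h) _ hmem with ⟨v, hv1, hv2⟩
    exact ⟨v, hv2, hv1⟩
  · intro h
    rw [mem_closure_iff_nhds]
    intro t ht
    rw [nhds_pi, Filter.mem_pi] at ht
    obtain ⟨I, hIfin, t', ht', hsub⟩ := ht
    obtain ⟨v, hvS, hv⟩ := h hIfin.toFinset
    refine ⟨v, hsub fun i hi => ?_, hvS⟩
    rw [hv i (hIfin.mem_toFinset.mpr hi)]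
    have := ht' i
    rwa [nhds_discrete, Filter.mem_pure] at this

/-- Every neighborhood contains a basic cylinder. -/
lemma exists_finset_nhds {u : ℤ → Fin 2} {U : Set (ℤ → Fin 2)} (hU : U ∈ 𝓝 u) :
    ∃ F : Finset ℤ, {v : ℤ → Fin 2 | ∀ k ∈ F, v k = u k} ⊆ U := by
  rw [nhds_pi, Filter.mem_pi] at hU
  obtain ⟨I, hIfin, t', ht', hsub⟩ := hU
  refine ⟨hIfin.toFinset, fun v hv => hsub fun i hi => ?_⟩
  rw [hv i (hIfin.mem_toFinset.mpr hi)]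
  have := ht' i
  rwa [nhds_discrete, Filter.mem_pure] at this

/-- The cell map of the rotation coding. -/
def cell (α x : ℝ) : Fin 2 := if Int.fract x < α then 0 else 1

lemma sturmian_eq_cell (α : ℝ) (k : ℤ) : sturmian α k = cell α (k * α) := rfl

lemma cell_congr {α x y : ℝ} (h : Int.fract x = Int.fract y) : cell α x = cell α y := by
  unfold cell; rw [h]

lemma fract_add_fract (y ε : ℝ) : Int.fract (y + ε) = Int.fract (Int.fract y + ε) := by
  have : Int.fract y + ε = y + ε - (⌊y⌋ : ℤ) := by rw [Int.fract]; ring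
  rw [this, Int.fract_sub_intCast]

lemma fract_sub_fract (a b : ℝ) : Int.fract (a - b) = Int.fract (Int.fract a - Int.fract b) := by
  have : Int.fract a - Int.fract b = a - b - ((⌊a⌋ - ⌊b⌋ : ℤ) : ℝ) := by
    simp only [Int.fract]; push_cast; ring
  rw [this, Int.fract_sub_intCast]

/-- Stability of a window of the rotation coding under small right perturbations. -/
lemma window_stable (α : ℝ) (h1 : α < 1) (x : ℝ) (N : ℕ) :
    ∃ δ > 0, ∀ ε : ℝ, 0 ≤ ε → ε < δ → ∀ k : ℤ, |k| ≤ (N : ℤ) →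
      cell α (x + k * α + ε) = cell α (x + k * α) := by
  classical
  set F : Finset ℤ := Finset.Icc (-(N : ℤ)) N with hF
  have hFne : F.Nonempty := ⟨0, by simp [hF]⟩
  set g : ℤ → ℝ := fun k =>
    if Int.fract (x + k * α) < α then α - Int.fract (x + k * α) else 1 - Int.fract (x + k * α)
    with hg
  refine ⟨F.inf' hFne g, ?_, ?_⟩
  · rw [gt_iff_lt, Finset.lt_inf'_iff]
    intro k _
    by_cases h : Int.fract (x + k * α) < α
    · simp only [hg, if_pos h]; linarith
    · simp only [hg, if_neg h]; linarith [Int.fract_lt_one (x + k * α)]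
  · intro ε hε0 hεδ k hk
    rw [abs_le] at hk
    have hkF : k ∈ F := by rw [hF, Finset.mem_Icc]; exact hk
    have hgk : F.inf' hFne g ≤ g k := Finset.inf'_le g hkF
    have hεg : ε < g k := lt_of_lt_of_le hεδ hgk
    have hfr : Int.fract (x + k * α + ε) = Int.fract (x + k * α) + ε := by
      rw [fract_add_fract]
      apply Int.fract_eq_self.mpr
      constructor
      · linarith [Int.fract_nonneg (x + k * α)]
      · by_cases h : Int.fract (x + k * α) < α
        · simp only [hg, if_pos h] at hεg; linarith
        · simp only [hg, if_neg h] at hεg; linarith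
    unfold cell
    rw [hfr]
    by_cases h : Int.fract (x + k * α) < α
    · simp only [hg, if_pos h] at hεg
      rw [if_pos h, if_pos (by linarith)]
    · simp only [hg, if_neg h] at hεg
      push_neg at h
      rw [if_neg (not_lt.mpr h), if_neg (not_lt.mpr (by linarith))]

lemma fract_int_mul_pos {α : ℝ} (hirr : Irrational α) {d : ℤ} (hd : d ≠ 0) :
    0 < Int.fract ((d : ℝ) * α) := by
  rcases lt_or_eq_of_le (Int.fract_nonneg ((d : ℝ) * α)) with h | h
  · exact h
  · exfalso
    have hi : Irrational ((d : ℝ) * α) := hirr.intCast_mul hd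
    have heq : ((d : ℝ) * α) = (⌊(d : ℝ) * α⌋ : ℤ) := by
      rw [Int.fract] at h; linarith [h.symm]
    exact hi.ne_int _ heq

/-- Pigeonhole: some nonzero multiple of `α` has arbitrarily small positive fractional part. -/
lemma exists_small_fract {α : ℝ} (hirr : Irrational α) {δ : ℝ} (hδ : 0 < δ) :
    ∃ d : ℤ, d ≠ 0 ∧ 0 < Int.fract ((d : ℝ) * α) ∧ Int.fract ((d : ℝ) * α) < δ := by
  classical
  obtain ⟨n, hn⟩ := exists_nat_one_div_lt hδ
  set M : ℕ := n + 1 with hM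
  have hMpos : (0:ℝ) < M := by positivity
  have hmaps : ∀ i ∈ Finset.range (M + 1),
      (⌊Int.fract ((i : ℝ) * α) * M⌋ : ℤ) ∈ Finset.Ico (0 : ℤ) M := by
    intro i _
    rw [Finset.mem_Ico]
    refine ⟨Int.floor_nonneg.mpr (mul_nonneg (Int.fract_nonneg _) hMpos.le), ?_⟩
    apply Int.floor_lt.mpr
    push_cast
    nlinarith [Int.fract_lt_one ((i : ℝ) * α)]
  have hcard : (Finset.Ico (0 : ℤ) (M : ℤ)).card < (Finset.range (M + 1)).card := by
    simp
  obtain ⟨a, ha, b, hb, hab, heq⟩ :=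
    Finset.exists_ne_map_eq_of_card_lt_of_maps_to hcard hmaps
  set fa := Int.fract ((a : ℝ) * α) with hfa
  set fb := Int.fract ((b : ℝ) * α) with hfb
  have habs : |fa - fb| < 1 / M := by
    rw [abs_sub_lt_iff]
    have h1 := Int.lt_floor_add_one (fa * M)
    have h2 := Int.floor_le (fb * M)
    have h3 := Int.lt_floor_add_one (fb * M)
    have h4 := Int.floor_le (fa * M)
    rw [heq] at h1 h4
    constructor <;> (rw [sub_lt_iff_lt_add, div_add' _ _ _ hMpos.ne', lt_div_iff₀ hMpos]; nlinarith)
  have h1M : 1 / (M:ℝ) < δ := by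
    have : (M:ℝ) = (n:ℝ) + 1 := by rw [hM]; push_cast; ring
    rw [this]; exact hn
  have key : ∀ c d : ℕ, Int.fract ((d : ℝ) * α) < Int.fract ((c : ℝ) * α) →
      Int.fract ((c : ℝ) * α) - Int.fract ((d : ℝ) * α) < δ →
      ∃ e : ℤ, e ≠ 0 ∧ 0 < Int.fract ((e : ℝ) * α) ∧ Int.fract ((e : ℝ) * α) < δ := by
    intro c d hlt hdiff
    have hcd : c ≠ d := by
      intro h
      rw [h] at hlt
      exact lt_irrefl _ hlt
    refine ⟨(c : ℤ) - d, by omega, fract_int_mul_pos hirr (by omega), ?_⟩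
    have hfr : Int.fract ((((c : ℤ) - d : ℤ) : ℝ) * α) =
        Int.fract ((c : ℝ) * α) - Int.fract ((d : ℝ) * α) := by
      push_cast
      rw [sub_mul, fract_sub_fract]
      exact Int.fract_eq_self.mpr ⟨by linarith,
        by linarith [Int.fract_nonneg ((d:ℝ) * α), Int.fract_lt_one ((c:ℝ) * α)]⟩
    rw [hfr]; exact hdiff
  rcases lt_trichotomy fa fb with h | h | h
  · refine key b a h ?_
    rw [← hfa, ← hfb]
    calc fb - fa ≤ |fa - fb| := by rw [abs_sub_comm]; exact le_abs_self _
      _ < 1 / M := habs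
      _ < δ := h1M
  · exfalso
    have hz : Int.fract ((((a : ℤ) - b : ℤ) : ℝ) * α) = 0 := by
      push_cast
      rw [sub_mul, fract_sub_fract, ← hfa, ← hfb, h, sub_self, Int.fract_zero]
    have hpos := fract_int_mul_pos hirr (show ((a:ℤ) - b) ≠ 0 by omega)
    rw [hz] at hpos
    exact lt_irrefl _ hpos
  · refine key a b h ?_
    rw [← hfa, ← hfb]
    calc fa - fb ≤ |fa - fb| := le_abs_self _
      _ < 1 / M := habs
      _ < δ := h1M

lemma fract_key (α : ℝ) (p d : ℤ) (j : ℕ) :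
    Int.fract (((p + j * d : ℤ) : ℝ) * α) =
      Int.fract (Int.fract ((p : ℝ) * α) + j * Int.fract ((d : ℝ) * α)) := by
  have h : Int.fract ((p : ℝ) * α) + j * Int.fract ((d : ℝ) * α) =
      ((p + j * d : ℤ) : ℝ) * α - ((⌊(p : ℝ) * α⌋ + j * ⌊(d : ℝ) * α⌋ : ℤ) : ℝ) := by
    simp only [Int.fract]; push_cast; ring
  rw [h, Int.fract_sub_intCast]

/-- Syndeticity of the return times of the rotation to `[0, δ)`. -/
lemma syndetic_fract {α : ℝ} (hirr : Irrational α) {δ : ℝ} (hδ : 0 < δ) :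
    ∃ Q : ℕ, ∀ p : ℤ, ∃ m : ℤ, |m - p| ≤ (Q : ℤ) ∧ Int.fract ((m : ℝ) * α) < δ := by
  classical
  obtain ⟨d, hd0, hγ0, hγδ⟩ := exists_small_fract hirr hδ
  set γ := Int.fract ((d : ℝ) * α) with hγ
  set M : ℕ := ⌈1 / γ⌉₊ with hMdef
  refine ⟨M * d.natAbs, fun p => ?_⟩
  set y := Int.fract ((p : ℝ) * α) with hy
  have hy0 : 0 ≤ y := Int.fract_nonneg _
  have hy1 : y < 1 := Int.fract_lt_one _
  by_cases hcase : y < δ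
  · exact ⟨p, by simp; positivity, hcase⟩
  · push_neg at hcase
    have hex : ∃ j : ℕ, 1 ≤ y + j * γ := by
      obtain ⟨j, hj⟩ := exists_nat_ge ((1 - y) / γ)
      exact ⟨j, by rw [div_le_iff₀ hγ0] at hj; linarith⟩
    set J := Nat.find hex with hJdef
    have hJ : 1 ≤ y + J * γ := Nat.find_spec hex
    have hJ1 : 1 ≤ J := by
      rcases Nat.eq_zero_or_pos J with h | h
      · exfalso; rw [h] at hJ; push_cast at hJ; linarith
      · exact h
    have hJm : ¬ (1 ≤ y + (J - 1 : ℕ) * γ) := Nat.find_min hex (by omega)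
    push_neg at hJm
    have hJm' : y + ((J : ℝ) - 1) * γ < 1 := by
      have : ((J - 1 : ℕ) : ℝ) = (J : ℝ) - 1 := by
        push_cast [Nat.cast_sub hJ1]; ring
      rwa [this] at hJm
    refine ⟨p + J * d, ?_, ?_⟩
    · have hJM : J ≤ M := by
        have h1 : ((J : ℝ) - 1) * γ < 1 := by nlinarith
        have h2 : (J : ℝ) - 1 < 1 / γ := by rw [lt_div_iff₀ hγ0]; linarith
        have h3 : (1 : ℝ) / γ ≤ M := Nat.le_ceil _
        have : (J : ℝ) < M + 1 := by linarith
        exact_mod_cast Nat.lt_add_one_iff.mp (by exact_mod_cast this)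
      have : |(J : ℤ) * d| = (J : ℤ) * d.natAbs := by
        rw [abs_mul, Int.abs_natCast, Int.abs_eq_natAbs]
      rw [add_sub_cancel_left, this]
      push_cast
      exact mul_le_mul_of_nonneg_right (by exact_mod_cast hJM) (by positivity)
    · rw [fract_key, ← hy, ← hγ]
      have hlt : y + J * γ < 1 + γ := by nlinarith
      have : Int.fract (y + (J : ℝ) * γ) = y + J * γ - 1 := by
        have h1 : Int.fract (y + (J : ℝ) * γ) = Int.fract (y + (J : ℝ) * γ - ((1 : ℤ) : ℝ)) := by
          rw [Int.fract_sub_intCast]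
        rw [h1]
        push_cast
        exact Int.fract_eq_self.mpr ⟨by linarith, by linarith⟩
      rw [this]
      linarith

/-- Counting zeros of the Sturmian word by a telescoping floor sum. -/
lemma floor_diff_eq (α : ℝ) (h0 : 0 < α) (h1 : α < 1) (k : ℤ) :
    ⌊(k : ℝ) * α⌋ - ⌊((k - 1 : ℤ) : ℝ) * α⌋ = if sturmian α k = 0 then 1 else 0 := by
  have hfr : (k : ℝ) * α = ⌊(k : ℝ) * α⌋ + Int.fract ((k : ℝ) * α) := by
    rw [Int.fract]; ring
  have hf0 := Int.fract_nonneg ((k : ℝ) * α)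
  have hf1 := Int.fract_lt_one ((k : ℝ) * α)
  by_cases h : Int.fract ((k : ℝ) * α) < α
  · have hs : sturmian α k = 0 := by unfold sturmian; rw [if_pos h]
    rw [hs, if_pos rfl]
    have : ⌊((k - 1 : ℤ) : ℝ) * α⌋ = ⌊(k : ℝ) * α⌋ - 1 := by
      apply Int.floor_eq_iff.mpr
      constructor <;> push_cast <;> nlinarith
    omega
  · push_neg at h
    have hs : sturmian α k ≠ 0 := by
      unfold sturmian; rw [if_neg (not_lt.mpr h)]; exact one_ne_zero
    rw [if_neg hs]
    have : ⌊((k - 1 : ℤ) : ℝ) * α⌋ = ⌊(k : ℝ) * α⌋ := by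
      apply Int.floor_eq_iff.mpr
      constructor <;> push_cast <;> nlinarith
    omega

lemma count_zeros_sturmian (α : ℝ) (h0 : 0 < α) (h1 : α < 1) (p : ℤ) (L : ℕ) :
    (((Finset.Ioc p (p + L)).filter (fun k => sturmian α k = 0)).card : ℤ) =
      ⌊((p + L : ℤ) : ℝ) * α⌋ - ⌊(p : ℝ) * α⌋ := by
  classical
  induction L with
  | zero => simp
  | succ L ih =>
    have hsplit : Finset.Ioc p (p + (L + 1 : ℕ)) =
        Finset.Ioc p (p + L) ∪ Finset.Ioc (p + L) (p + L + 1) := by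
      rw [Finset.Ioc_union_Ioc_eq_Ioc (by omega) (by omega)]
      congr 1; push_cast; ring
    have hdisj : Disjoint (Finset.Ioc p (p + L)) (Finset.Ioc (p + L) (p + L + 1)) := by
      rw [Finset.disjoint_left]
      intro k hk hk'
      rw [Finset.mem_Ioc] at hk hk'
      omega
    have hsingle : Finset.Ioc (p + L) (p + L + 1) = {p + L + 1} := by
      ext k; simp only [Finset.mem_Ioc, Finset.mem_singleton]; omega
    rw [hsplit, Finset.filter_union,
      Finset.card_union_of_disjoint (Finset.disjoint_filter_filter hdisj)]
    push_cast
    rw [ih]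
    have hA := floor_diff_eq α h0 h1 (p + L + 1)
    have hcard : ((Finset.Ioc (p + L) (p + L + 1)).filter (fun k => sturmian α k = 0)).card =
        if sturmian α (p + L + 1) = 0 then 1 else 0 := by
      rw [hsingle, Finset.filter_singleton]
      split <;> simp
    rw [hcard]
    have heq : ((p + L + 1 : ℤ) - 1 : ℤ) = p + L := by ring
    rw [heq] at hA
    have hc1 : ((p : ℝ) + ((L : ℝ) + 1)) = (((p + L + 1 : ℤ)) : ℝ) := by push_cast; ring
    rw [hc1]
    split <;> rename_i hh
    · rw [if_pos hh] at hA; omega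
    · rw [if_neg hh] at hA; omega

lemma card_filter_shift (u v : ℤ → Fin 2) (a b t : ℤ)
    (h : ∀ k ∈ Finset.Ioc a b, u k = v (k + t)) :
    ((Finset.Ioc a b).filter (fun k => u k = 0)).card =
      ((Finset.Ioc (a + t) (b + t)).filter (fun k => v k = 0)).card := by
  classical
  apply Finset.card_bij (fun k _ => k + t)
  · intro k hk
    rw [Finset.mem_filter] at hk ⊢
    rw [Finset.mem_Ioc] at hk ⊢
    refine ⟨by omega, ?_⟩
    rw [← h k (Finset.mem_Ioc.mpr hk.1)]
    exact hk.2
  · intro k1 h1 k2 h2 he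
    omega
  · intro k hk
    rw [Finset.mem_filter, Finset.mem_Ioc] at hk
    refine ⟨k - t, ?_, by ring⟩
    rw [Finset.mem_filter, Finset.mem_Ioc]
    refine ⟨by omega, ?_⟩
    rw [h (k - t) (Finset.mem_Ioc.mpr (by omega)), sub_add_cancel]
    exact hk.2

lemma periodic_mul {u : ℤ → Fin 2} {n : ℤ} (hper : ∀ k, u (k + n) = u k) :
    ∀ (j : ℕ) (k : ℤ), u (k + j * n) = u k := by
  intro j
  induction j with
  | zero => intro k; simp
  | succ j ih =>
    intro k
    have h1 : k + ((j : ℤ) + 1) * n = (k + n) + j * n := by ring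
    push_cast
    rw [h1, ih (k + n), hper k]

lemma count_periodic {u : ℤ → Fin 2} {n : ℤ} (hn : 1 ≤ n) (hper : ∀ k, u (k + n) = u k)
    (m : ℕ) :
    ((Finset.Ioc (0 : ℤ) (m * n)).filter (fun k => u k = 0)).card =
      m * ((Finset.Ioc (0 : ℤ) n).filter (fun k => u k = 0)).card := by
  classical
  induction m with
  | zero => simp
  | succ m ih =>
    have hsplit : Finset.Ioc (0 : ℤ) ((m + 1 : ℕ) * n) =
        Finset.Ioc (0 : ℤ) (m * n) ∪ Finset.Ioc ((m : ℤ) * n) ((m : ℤ) * n + n) := by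
      rw [Finset.Ioc_union_Ioc_eq_Ioc (by positivity) (by nlinarith)]
      congr 1; push_cast; ring
    have hdisj : Disjoint (Finset.Ioc (0 : ℤ) (m * n))
        (Finset.Ioc ((m : ℤ) * n) ((m : ℤ) * n + n)) := by
      rw [Finset.disjoint_left]
      intro k hk hk'
      rw [Finset.mem_Ioc] at hk hk'
      omega
    rw [hsplit, Finset.filter_union,
      Finset.card_union_of_disjoint (Finset.disjoint_filter_filter hdisj), ih]
    have hshift := card_filter_shift u u 0 n ((m : ℤ) * n)
      (fun k _ => (periodic_mul hper m k).symm)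
    rw [zero_add, add_comm n ((m:ℤ)*n)] at hshift
    rw [← hshift]
    ring

/-- No element of the Sturmian hull is periodic. -/
theorem no_periodic_in_hull (α : ℝ) (hirr : Irrational α) (h0 : 0 < α) (h1 : α < 1) :
    ∀ u ∈ sturmianHull α, ∀ n : ℤ, n ≠ 0 → ¬(∀ k : ℤ, u (k + n) = u k) := by
  have main : ∀ u ∈ sturmianHull α, ∀ n : ℤ, 1 ≤ n → ¬(∀ k : ℤ, u (k + n) = u k) := by
    intro u hu n hn hper
    classical
    set c : ℕ := ((Finset.Ioc (0 : ℤ) n).filter (fun k => u k = 0)).card with hc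
    have key : ∀ m : ℕ, 1 ≤ m → |(c : ℝ) - n * α| < 1 / m := by
      intro m hm
      set L : ℕ := (m * n).toNat with hL
      have hLZ : (L : ℤ) = m * n := Int.toNat_of_nonneg (by positivity)
      obtain ⟨v, ⟨p, hp⟩, hv⟩ := memClosurePi.mp hu (Finset.Ioc (0 : ℤ) (m * n))
      have hcount1 : ((Finset.Ioc (0 : ℤ) ((m : ℤ) * n)).filter (fun k => u k = 0)).card
          = m * c := count_periodic hn hper m
      have hcount2 : ((Finset.Ioc (0 : ℤ) ((m : ℤ) * n)).filter (fun k => u k = 0)).card =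
          ((Finset.Ioc p (p + L)).filter (fun k => sturmian α k = 0)).card := by
        have h2 := card_filter_shift u (sturmian α) 0 ((m : ℤ) * n) p
          (fun k hk => by rw [← hp k, hv k hk])
        have h3 : (m : ℤ) * n + p = p + (L : ℤ) := by rw [hLZ]; ring
        rw [zero_add, h3] at h2
        exact h2
      have hfloor := count_zeros_sturmian α h0 h1 p L
      rw [← hcount2, hcount1] at hfloor
      have hb1 : ((p + L : ℤ) : ℝ) * α - 1 < (⌊((p + L : ℤ) : ℝ) * α⌋ : ℝ) :=
        Int.sub_one_lt_floor _
      have hb2 : (⌊((p + L : ℤ) : ℝ) * α⌋ : ℝ) ≤ ((p + L : ℤ) : ℝ) * α := Int.floor_le _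
      have hb3 : ((p : ℝ)) * α - 1 < (⌊(p : ℝ) * α⌋ : ℝ) := Int.sub_one_lt_floor _
      have hb4 : (⌊(p : ℝ) * α⌋ : ℝ) ≤ (p : ℝ) * α := Int.floor_le _
      have hcast : ((m : ℝ) * c : ℝ) = (⌊((p + L : ℤ) : ℝ) * α⌋ : ℝ) - (⌊(p : ℝ) * α⌋ : ℝ) := by
        exact_mod_cast congrArg (Int.cast : ℤ → ℝ) hfloor
      have hLr : (L : ℝ) = (m : ℝ) * n := by exact_mod_cast congrArg (Int.cast : ℤ → ℝ) hLZ
      have hmna : (m : ℝ) * (n * α) = (L : ℝ) * α := by rw [hLr]; ring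
      have hmc : |(m : ℝ) * c - (m : ℝ) * (n * α)| < 1 := by
        rw [abs_lt, hmna]
        push_cast at hcast hb1 hb2 hb3 hb4 ⊢
        constructor <;> linarith
      have hmpos : (0 : ℝ) < m := by exact_mod_cast hm
      rw [lt_div_iff₀ hmpos]
      have habs : |(c : ℝ) - n * α| * m = |(m : ℝ) * c - (m : ℝ) * (n * α)| := by
        have h4 := abs_mul ((c : ℝ) - n * α) (m : ℝ)
        rw [abs_of_pos hmpos] at h4
        rw [← h4]
        congr 1
        ring
      rw [habs]
      exact hmc
    have hzero : (c : ℝ) - n * α = 0 := by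
      by_contra hne
      have hpos : 0 < |(c : ℝ) - n * α| := abs_pos.mpr hne
      obtain ⟨m, hm⟩ := exists_nat_one_div_lt hpos
      have h2 := key (m + 1) (by omega)
      push_cast at h2 hm
      linarith
    apply hirr
    refine ⟨(c : ℚ) / (n : ℚ), ?_⟩
    have hnne : ((n : ℤ) : ℝ) ≠ 0 := Int.cast_ne_zero.mpr (by omega)
    push_cast
    rw [div_eq_iff hnne]
    linarith
  intro u hu n hn hper
  rcases lt_or_ge n 0 with hneg | hpos
  · refine main u hu (-n) (by omega) ?_
    intro k
    have h2 := hper (k + -n)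
    rw [show k + -n + n = k by ring] at h2
    exact h2.symm
  · exact main u hu n (by omega) hper

/-- The Sturmian sequence belongs to its hull. -/
lemma sturmian_mem_hull (α : ℝ) : sturmian α ∈ sturmianHull α :=
  subset_closure ⟨0, fun k => by rw [add_zero]⟩

/-- `sturmian α (k + m)` as a perturbed cell. -/
lemma sturmian_add_eq_cell (α : ℝ) (k m : ℤ) :
    sturmian α (k + m) = cell α ((k : ℝ) * α + Int.fract ((m : ℝ) * α)) := by
  rw [sturmian_eq_cell]
  apply cell_congr
  have h : (k : ℝ) * α + Int.fract ((m : ℝ) * α) =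
      ((k + m : ℤ) : ℝ) * α - ((⌊(m : ℝ) * α⌋ : ℤ) : ℝ) := by
    simp only [Int.fract]; push_cast; ring
  rw [h, Int.fract_sub_intCast]

/-- `sturmian α (k + p + d)` as a perturbation of `x = pα`. -/
lemma sturmian_add_add_eq_cell (α : ℝ) (k p d : ℤ) :
    sturmian α (k + (p + d)) = cell α ((p : ℝ) * α + (k : ℝ) * α + Int.fract ((d : ℝ) * α)) := by
  rw [sturmian_eq_cell]
  apply cell_congr
  have h : (p : ℝ) * α + (k : ℝ) * α + Int.fract ((d : ℝ) * α) =
      ((k + (p + d) : ℤ) : ℝ) * α - ((⌊(d : ℝ) * α⌋ : ℤ) : ℝ) := by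
    simp only [Int.fract]; push_cast; ring
  rw [h, Int.fract_sub_intCast]

lemma sturmian_add_at (α : ℝ) (k p : ℤ) :
    sturmian α (k + p) = cell α ((p : ℝ) * α + (k : ℝ) * α) := by
  rw [sturmian_eq_cell]
  apply cell_congr
  congr 1
  push_cast; ring

lemma abs_le_sup {F : Finset ℤ} {k : ℤ} (hk : k ∈ F) :
    |k| ≤ ((F.sup Int.natAbs : ℕ) : ℤ) := by
  rw [Int.abs_eq_natAbs]
  exact_mod_cast Finset.le_sup hk

/-- Minimality, key step: the Sturmian sequence lies in the orbit closure of every hull point. -/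
lemma sturmian_mem_closure_orbit (α : ℝ) (hirr : Irrational α) (h0 : 0 < α) (h1 : α < 1)
    {u : ℤ → Fin 2} (hu : u ∈ sturmianHull α) :
    sturmian α ∈ closure {v : ℤ → Fin 2 | ∃ n : ℤ, ∀ k : ℤ, v k = u (k + n)} := by
  rw [memClosurePi]
  intro F
  set N : ℕ := F.sup Int.natAbs with hN
  obtain ⟨δ, hδ0, hδ⟩ := window_stable α h1 0 N
  obtain ⟨Q, hQ⟩ := syndetic_fract hirr hδ0
  set R : ℕ := N + Q with hR
  obtain ⟨v, ⟨p, hp⟩, hv⟩ := memClosurePi.mp hu (Finset.Icc (-(R : ℤ)) R)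
  have huv : ∀ k : ℤ, |k| ≤ (R : ℤ) → u k = sturmian α (k + p) := by
    intro k hk
    rw [← hp k, hv k (Finset.mem_Icc.mpr (abs_le.mp hk))]
  obtain ⟨m, hmQ, hmδ⟩ := hQ p
  refine ⟨fun k => u (k + (m - p)), ⟨m - p, fun _ => rfl⟩, fun k hk => ?_⟩
  have hkN : |k| ≤ (N : ℤ) := abs_le_sup hk
  have hkR : |k + (m - p)| ≤ (R : ℤ) := by
    rw [hR]
    push_cast
    calc |k + (m - p)| ≤ |k| + |m - p| := abs_add_le _ _
      _ ≤ N + Q := add_le_add hkN hmQ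
  show u (k + (m - p)) = sturmian α k
  rw [huv _ hkR]
  have harg : k + (m - p) + p = k + m := by ring
  rw [harg, sturmian_add_eq_cell]
  have hstab := hδ (Int.fract ((m : ℝ) * α)) (Int.fract_nonneg _) hmδ k hkN
  simp only [zero_add] at hstab
  rw [hstab, ← sturmian_eq_cell]

/-- Minimality. -/
lemma hull_minimal (α : ℝ) (hirr : Irrational α) (h0 : 0 < α) (h1 : α < 1) :
    ∀ u ∈ sturmianHull α,
      sturmianHull α ⊆ closure {v : ℤ → Fin 2 | ∃ n : ℤ, ∀ k : ℤ, v k = u (k + n)} := by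
  intro u hu
  have hs := sturmian_mem_closure_orbit α hirr h0 h1 hu
  apply closure_minimal _ isClosed_closure
  rintro v ⟨m, hm⟩
  set T : (ℤ → Fin 2) → (ℤ → Fin 2) := fun w k => w (k + m) with hT
  have hTcont : Continuous T := continuous_pi fun k => continuous_apply (k + m)
  have hTv : v = T (sturmian α) := funext fun k => hm k
  have hTO : T '' {v : ℤ → Fin 2 | ∃ n : ℤ, ∀ k : ℤ, v k = u (k + n)} ⊆
      {v : ℤ → Fin 2 | ∃ n : ℤ, ∀ k : ℤ, v k = u (k + n)} := by
    rintro _ ⟨w, ⟨n, hn⟩, rfl⟩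
    exact ⟨n + m, fun k => by rw [hT]; simp only; rw [hn (k + m), show k + m + n = k + (n + m) by ring]⟩
  rw [hTv]
  exact closure_mono hTO (image_closure_subset_closure_image hTcont ⟨sturmian α, hs, rfl⟩)

/-- The shift as a homeomorphism. -/
def shiftHomeo : (ℤ → Fin 2) ≃ₜ (ℤ → Fin 2) where
  toFun := shift2
  invFun := fun u k => u (k - 1)
  left_inv := fun u => funext fun k => by simp [shift2]
  right_inv := fun u => funext fun k => by simp [shift2]
  continuous_toFun := continuous_pi fun k => continuous_apply (k + 1)
  continuous_invFun := continuous_pi fun k => continuous_apply (k - 1)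

lemma shift2_image_hull (α : ℝ) : shift2 '' sturmianHull α = sturmianHull α := by
  have hO : shift2 '' {v : ℤ → Fin 2 | ∃ n : ℤ, ∀ k : ℤ, v k = sturmian α (k + n)} =
      {v : ℤ → Fin 2 | ∃ n : ℤ, ∀ k : ℤ, v k = sturmian α (k + n)} := by
    apply Set.Subset.antisymm
    · rintro _ ⟨w, ⟨n, hn⟩, rfl⟩
      exact ⟨n + 1, fun k => by
        simp only [shift2]
        rw [hn (k + 1), show k + 1 + n = k + (n + 1) by ring]⟩
    · rintro v ⟨n, hn⟩
      refine ⟨fun k => v (k - 1), ⟨n - 1, fun k => by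
        show v (k - 1) = _
        rw [hn (k - 1), show k - 1 + n = k + (n - 1) by ring]⟩, ?_⟩
      funext k
      simp [shift2]
  have := shiftHomeo.image_closure
    {v : ℤ → Fin 2 | ∃ n : ℤ, ∀ k : ℤ, v k = sturmian α (k + n)}
  unfold sturmianHull
  calc shift2 '' closure {v : ℤ → Fin 2 | ∃ n : ℤ, ∀ k : ℤ, v k = sturmian α (k + n)}
      = closure (shift2 '' {v : ℤ → Fin 2 | ∃ n : ℤ, ∀ k : ℤ, v k = sturmian α (k + n)}) := this
    _ = _ := by rw [hO]

/-- Perfectness. -/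
lemma hull_perfect (α : ℝ) (hirr : Irrational α) (h0 : 0 < α) (h1 : α < 1) :
    Perfect (sturmianHull α) := by
  refine ⟨isClosed_closure, fun u hu => ?_⟩
  rw [accPt_iff_nhds]
  intro U hU
  obtain ⟨F, hF⟩ := exists_finset_nhds hU
  set N : ℕ := F.sup Int.natAbs with hN
  obtain ⟨v0, ⟨p, hp⟩, hv0⟩ := memClosurePi.mp hu (Finset.Icc (-(N : ℤ)) N)
  have hup : ∀ k : ℤ, |k| ≤ (N : ℤ) → u k = sturmian α (k + p) := by
    intro k hk
    rw [← hp k, hv0 k (Finset.mem_Icc.mpr (abs_le.mp hk))]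
  obtain ⟨δ, hδ0, hδ⟩ := window_stable α h1 ((p : ℝ) * α) N
  obtain ⟨d, hd0, hγ0, hγδ⟩ := exists_small_fract hirr hδ0
  set v1 : ℤ → Fin 2 := fun k => sturmian α (k + p) with hv1
  set v2 : ℤ → Fin 2 := fun k => sturmian α (k + (p + d)) with hv2
  have hv1hull : v1 ∈ sturmianHull α := subset_closure ⟨p, fun _ => rfl⟩
  have hv2hull : v2 ∈ sturmianHull α := subset_closure ⟨p + d, fun _ => rfl⟩
  have hmatch1 : ∀ k ∈ F, v1 k = u k := fun k hk => (hup k (abs_le_sup hk)).symm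
  have hmatch2 : ∀ k ∈ F, v2 k = u k := by
    intro k hk
    have hkN : |k| ≤ (N : ℤ) := abs_le_sup hk
    rw [hv2]
    simp only
    rw [sturmian_add_add_eq_cell,
      hδ (Int.fract ((d : ℝ) * α)) (Int.fract_nonneg _) hγδ k hkN,
      ← sturmian_add_at, hup k hkN]
  have hne : v1 ≠ v2 := by
    intro h
    apply no_periodic_in_hull α hirr h0 h1 (sturmian α) (sturmian_mem_hull α) d hd0
    intro k
    have := congrFun h (k - p)
    rw [hv1, hv2] at this
    simp only at this
    rw [show k - p + p = k by ring, show k - p + (p + d) = k + d by ring] at this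
    exact this.symm
  by_cases hcase : v1 = u
  · refine ⟨v2, ⟨hF fun k hk => hmatch2 k hk, hv2hull⟩, ?_⟩
    intro h
    exact hne (hcase.trans h.symm)
  · exact ⟨v1, ⟨hF fun k hk => hmatch1 k hk, hv1hull⟩, hcase⟩

end Aux

/-- For irrational `α ∈ (0,1)`, the Sturmian subshift `X_α` is a nonempty, compact,
shift-invariant, minimal, aperiodic Cantor set. -/
theorem sturmianHull_minimal_aperiodic_cantor
    (α : ℝ) (hirr : Irrational α) (h0 : 0 < α) (h1 : α < 1) :
    (sturmianHull α).Nonempty ∧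
    IsCompact (sturmianHull α) ∧
    shift2 '' sturmianHull α = sturmianHull α ∧
    (∀ u ∈ sturmianHull α,
      sturmianHull α ⊆ closure {v | ∃ n : ℤ, ∀ k : ℤ, v k = u (k + n)}) ∧
    (∀ u ∈ sturmianHull α, ∀ n : ℤ, n ≠ 0 → ¬(∀ k : ℤ, u (k + n) = u k)) ∧
    Perfect (sturmianHull α) ∧
    IsTotallyDisconnected (sturmianHull α) := by
  refine ⟨⟨sturmian α, sturmian_mem_hull α⟩,
    isClosed_closure.isCompact,
    shift2_image_hull α,
    hull_minimal α hirr h0 h1,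
    no_periodic_in_hull α hirr h0 h1,
    hull_perfect α hirr h0 h1,
    isTotallyDisconnected_of_totallyDisconnectedSpace _⟩
end
end

section
/- Let M be a metric space, f : M → M a homeomorphism, and (K, j, h) a weak Denjoy sub-system for f. Assume that f restricted to j(K) is expansive with constant e > 0: for all x, y ∈ j(K), if dist(fⁿ(x), fⁿ(y)) ≤ e for all n ∈ ℤ, then x = y. Then the connected components of 𝕋 \ K fall into finitely many h-orbits: there exist finitely many connected components U₁, …, U_m of 𝕋 \ K such that every connected component of 𝕋 \ K equals hⁿ(U_i) for some n ∈ ℤ and some i ∈ {1, …, m}. -/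
open Filter Topology Set

noncomputable section

namespace GapsAux
open MeasureTheory

abbrev π (t : ℝ) : UnitAddCircle := (t : UnitAddCircle)

lemma contPi : Continuous π := continuous_quotient_mk'

lemma openPi : IsOpenMap π := QuotientAddGroup.isOpenMap_coe

lemma surjPi : Function.Surjective π := Quotient.exists_rep

lemma coe_int_add (t : ℝ) (k : ℤ) : π (t + k) = π t := by
  have h0 : ((k : ℝ) : UnitAddCircle) = 0 := by
    rw [AddCircle.coe_eq_zero_iff]; exact ⟨k, by simp⟩
  show ((t + (k:ℝ) : ℝ) : UnitAddCircle) = _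
  rw [show ((t + (k:ℝ) : ℝ) : UnitAddCircle) = ((t:ℝ):UnitAddCircle) + (((k:ℝ):ℝ):UnitAddCircle) from QuotientAddGroup.mk_add _ t k, h0, add_zero]

lemma eq_iff_int (a b : ℝ) : π a = π b ↔ ∃ k : ℤ, b = a + k := by
  constructor
  · intro h
    have : ((a - b : ℝ) : UnitAddCircle) = 0 := by
      have : π a - π b = 0 := by rw [h]; simp
      rw [← this]; exact QuotientAddGroup.mk_sub _ a b
    rw [AddCircle.coe_eq_zero_iff] at this
    obtain ⟨k, hk⟩ := this
    exact ⟨-k, by simp at hk; push_cast; linarith⟩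
  · rintro ⟨k, rfl⟩
    exact (coe_int_add a k).symm

lemma norm_le_abs (t : ℝ) : ‖π t‖ ≤ |t| := by
  rw [UnitAddCircle.norm_eq]
  rcases le_or_gt (1/2 : ℝ) |t| with h | h
  · exact le_trans (abs_sub_round t) h
  · have : round t = 0 := by
      rw [round_eq_zero_iff]
      constructor
      · cases abs_lt.mp h; linarith
      · cases abs_lt.mp h; linarith
    simp [this]

lemma dist_coe_le (a b : ℝ) : dist (π a) (π b) ≤ |a - b| := by
  rw [dist_eq_norm]
  rw [← QuotientAddGroup.mk_sub]
  exact norm_le_abs _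

/-- a representative of `b` nearest to a given representative of `a`. -/
lemma exists_rep_dist (a b : UnitAddCircle) {η : ℝ} (hη : π η = a) :
    ∃ u : ℝ, π u = b ∧ |η - u| = dist a b := by
  obtain ⟨v, hv⟩ := surjPi b
  refine ⟨η - (η - v - round (η - v)), ?_, ?_⟩
  · have : η - (η - v - round (η - v)) = v + round (η -v) := by ring
    rw [this, coe_int_add, hv]
  · rw [← hη, ← hv, dist_eq_norm]
    rw [← QuotientAddGroup.mk_sub, UnitAddCircle.norm_eq]
    ring_nf


lemma image_compIn_subset {X Y : Type*} [TopologicalSpace X] [TopologicalSpace Y]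
    (φ : X ≃ₜ Y) {s : Set X} {x : X} (hx : x ∈ s) :
    ⇑φ '' connectedComponentIn s x ⊆ connectedComponentIn (⇑φ '' s) (φ x) := by
  apply IsPreconnected.subset_connectedComponentIn
  · exact (isPreconnected_connectedComponentIn).image _ (φ.continuous.continuousOn)
  · exact ⟨x, mem_connectedComponentIn hx, rfl⟩
  · exact image_mono (connectedComponentIn_subset _ _)

lemma homeo_image_compIn {X Y : Type*} [TopologicalSpace X] [TopologicalSpace Y]
    (φ : X ≃ₜ Y) {s : Set X} {x : X} (hx : x ∈ s) :
    ⇑φ '' connectedComponentIn s x = connectedComponentIn (⇑φ '' s) (φ x) := by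
  refine subset_antisymm (image_compIn_subset φ hx) ?_
  have h2 := image_compIn_subset φ.symm (s := ⇑φ '' s) (x := φ x) (mem_image_of_mem _ hx)
  have hss : ⇑φ.symm '' (⇑φ '' s) = s := by ext z; simp
  rw [hss, Homeomorph.symm_apply_apply] at h2
  intro y hy
  obtain ⟨z, hz, hzy⟩ : y ∈ ⇑φ '' (⇑φ.symm '' connectedComponentIn (⇑φ '' s) (φ x)) := by
    have : ⇑φ '' (⇑φ.symm '' connectedComponentIn (⇑φ '' s) (φ x)) = connectedComponentIn (⇑φ '' s) (φ x) := by ext z; simp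
    rw [this]; exact hy
  exact ⟨z, h2 hz, hzy⟩


lemma gap (W : Set UnitAddCircle) (hWo : IsOpen W) (hne : Wᶜ.Nonempty)
    {x : UnitAddCircle} (hx : x ∈ W) :
    ∃ c d : ℝ, c < d ∧ d ≤ c + 1 ∧ π c ∉ W ∧ π d ∉ W ∧
      π '' Ioo c d = connectedComponentIn W x := by
  set V : Set ℝ := π ⁻¹' W with hV
  have hVo : IsOpen V := hWo.preimage contPi
  have hper : ∀ (t : ℝ) (k : ℤ), t + k ∈ V ↔ t ∈ V := by
    intro t k
    simp only [hV, mem_preimage, coe_int_add]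
  obtain ⟨t, ht⟩ := surjPi x
  have htV : t ∈ V := by rw [hV, mem_preimage, ht]; exact hx
  set I := connectedComponentIn V t with hI
  have hIo : IsOpen I := hVo.connectedComponentIn
  have hIp : IsPreconnected I := isPreconnected_connectedComponentIn
  have hIt : t ∈ I := mem_connectedComponentIn htV
  have hIV : I ⊆ V := connectedComponentIn_subset _ _
  have hIoc : I.OrdConnected := hIp.ordConnected
  -- boundedness
  obtain ⟨y0, hy0⟩ := hne
  obtain ⟨s0, hs0⟩ := surjPi y0
  have hs0V : ∀ k : ℤ, s0 + k ∉ V := by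
    intro k hk
    rw [hper] at hk
    exact hy0 (by rw [hV, mem_preimage, hs0] at hk; exact hk)
  set L : ℝ := s0 + (⌊t - s0⌋ : ℤ) with hLdef
  have hLV : L ∉ V := hs0V ⌊t - s0⌋
  have hL1V : L + 1 ∉ V := by
    have h2 := hs0V (⌊t - s0⌋ + 1)
    have : s0 + ((⌊t - s0⌋ + 1 : ℤ) : ℝ) = L + 1 := by push_cast; ring
    rwa [this] at h2
  have hLt : L < t := by
    rcases lt_or_eq_of_le (by linarith [Int.floor_le (t - s0)] : L ≤ t) with h | h
    · exact h
    · exact absurd (h ▸ htV) hLV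
  have htL1 : t < L + 1 := by
    have := Int.lt_floor_add_one (t - s0)
    simp only [hLdef]
    linarith
  have hIsub : I ⊆ Ioo L (L + 1) := by
    intro u hu
    constructor
    · by_contra hc
      push_neg at hc
      exact hLV (hIV (hIoc.out hu hIt ⟨hc, hLt.le⟩))
    · by_contra hc
      push_neg at hc
      exact hL1V (hIV (hIoc.out hIt hu ⟨htL1.le, hc⟩))
  have hbdd_a : BddAbove I := ⟨L + 1, fun u hu => (hIsub hu).2.le⟩
  have hbdd_b : BddBelow I := ⟨L, fun u hu => (hIsub hu).1.le⟩
  have hIne : I.Nonempty := ⟨t, hIt⟩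
  set c := sInf I with hc
  set d := sSup I with hd
  have hcI : c ∉ I := by
    intro hcmem
    obtain ⟨ε, hε, hball⟩ := Metric.isOpen_iff.mp hIo c hcmem
    have hmem : c - ε / 2 ∈ I := by
      apply hball
      rw [Metric.mem_ball, Real.dist_eq]
      rw [abs_of_nonpos (by linarith)]
      linarith
    have := csInf_le hbdd_b hmem
    rw [← hc] at this
    linarith
  have hdI : d ∉ I := by
    intro hdmem
    obtain ⟨ε, hε, hball⟩ := Metric.isOpen_iff.mp hIo d hdmem
    have hmem : d + ε / 2 ∈ I := by
      apply hball
      rw [Metric.mem_ball, Real.dist_eq]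
      rw [abs_of_nonneg (by linarith)]
      linarith
    have := le_csSup hbdd_a hmem
    rw [← hd] at this
    linarith
  have hIeq : I = Ioo c d := by
    apply subset_antisymm
    · intro u hu
      refine ⟨lt_of_le_of_ne (csInf_le hbdd_b hu) ?_, lt_of_le_of_ne (le_csSup hbdd_a hu) ?_⟩
      · intro h; exact hcI (by rw [h]; exact hu)
      · intro h; exact hdI (by rw [← h]; exact hu)
    · intro u hu
      obtain ⟨a1, ha1I, ha1⟩ := exists_lt_of_csInf_lt hIne hu.1
      obtain ⟨b1, hb1I, hb1⟩ := exists_lt_of_lt_csSup hIne hu.2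
      exact hIoc.out ha1I hb1I ⟨ha1.le, hb1.le⟩
  have htIoo : t ∈ Ioo c d := hIeq ▸ hIt
  have hcd : c < d := lt_trans htIoo.1 htIoo.2
  have hcV : c ∉ V := by
    intro hcV
    obtain ⟨ε, hε, hball⟩ := Metric.isOpen_iff.mp hVo c hcV
    have hsub : Ioo (c - ε / 2) d ⊆ V := by
      intro u hu
      rcases le_or_gt u c with h | h
      · apply hball
        rw [Metric.mem_ball, Real.dist_eq, abs_of_nonpos (by linarith)]
        linarith [hu.1]
      · exact hIV (hIeq ▸ (⟨h, hu.2⟩ : u ∈ Ioo c d))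
    have hsubI : Ioo (c - ε / 2) d ⊆ I :=
      isPreconnected_Ioo.subset_connectedComponentIn
        (⟨by linarith [htIoo.1], htIoo.2⟩ : t ∈ Ioo (c - ε / 2) d) hsub
    exact hcI (hsubI ⟨by linarith, hcd⟩)
  have hdV : d ∉ V := by
    intro hdV
    obtain ⟨ε, hε, hball⟩ := Metric.isOpen_iff.mp hVo d hdV
    have hsub : Ioo c (d + ε / 2) ⊆ V := by
      intro u hu
      rcases lt_or_ge u d with h | h
      · exact hIV (hIeq ▸ (⟨hu.1, h⟩ : u ∈ Ioo c d))
      · apply hball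
        rw [Metric.mem_ball, Real.dist_eq, abs_of_nonneg (by linarith)]
        linarith [hu.2]
    have hsubI : Ioo c (d + ε / 2) ⊆ I :=
      isPreconnected_Ioo.subset_connectedComponentIn
        (⟨htIoo.1, by linarith [htIoo.2]⟩ : t ∈ Ioo c (d + ε / 2)) hsub
    exact hdI (hsubI ⟨hcd, by linarith⟩)
  have hLc : L ≤ c := le_csInf hIne (fun u hu => (hIsub hu).1.le)
  have hdL1 : d ≤ L + 1 := csSup_le hIne (fun u hu => (hIsub hu).2.le)
  refine ⟨c, d, hcd, by linarith, hcV, hdV, ?_⟩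
  -- the image equality
  set A : Set UnitAddCircle := π '' Ioo c d with hA
  have hAsub : A ⊆ connectedComponentIn W x := by
    apply IsPreconnected.subset_connectedComponentIn
    · exact isPreconnected_Ioo.image π contPi.continuousOn
    · exact ⟨t, htIoo, ht⟩
    · rintro _ ⟨u, hu, rfl⟩
      exact hIV (hIeq ▸ hu)
  refine subset_antisymm hAsub ?_
  have hAo : IsOpen A := openPi _ isOpen_Ioo
  apply IsPreconnected.subset_left_of_subset_union hAo isClosed_closure.isOpen_compl
    (disjoint_compl_right.mono_right (compl_subset_compl.mpr subset_closure))
  · -- union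
    intro y hyC
    by_cases hycl : y ∈ closure A
    · left
      -- show y ∈ A
      have hyW : y ∈ W := connectedComponentIn_subset _ _ hyC
      obtain ⟨η, hη⟩ := surjPi y
      have hηV : η ∈ V := by rw [hV, mem_preimage, hη]; exact hyW
      obtain ⟨ε, hε, hball⟩ := Metric.isOpen_iff.mp hVo η hηV
      obtain ⟨p, hpA, hpd⟩ := Metric.mem_closure_iff.mp hycl ε hε
      obtain ⟨u, huIoo, hup⟩ := hpA
      obtain ⟨u', hu'p, hu'd⟩ := exists_rep_dist y p hη
      obtain ⟨k, hk⟩ := (eq_iff_int u u').mp (by rw [hup, hu'p])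
      have huV : u ∈ V := hIV (hIeq ▸ huIoo)
      -- the component of u' is Ioo (c+k) (d+k)
      have huI : u ∈ I := by rw [hIeq]; exact huIoo
      have hcompu : connectedComponentIn V u = Ioo c d := by
        rw [← hIeq, hI, connectedComponentIn_eq (huI : u ∈ connectedComponentIn V t)]
      set φ : ℝ ≃ₜ ℝ := Homeomorph.addRight (k : ℝ) with hφ
      have hφV : ⇑φ '' V = V := by
        ext z
        constructor
        · rintro ⟨v, hv, rfl⟩
          exact (hper v k).mpr hv
        · intro hz
          exact ⟨z - k, by rw [show z - (k:ℝ) = z + (-k : ℤ) by push_cast; ring, hper]; exact hz,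
            by simp [hφ]⟩
      have hcompu' : connectedComponentIn V u' = Ioo (c + k) (d + k) := by
        have h1 := homeo_image_compIn φ (s := V) (x := u) huV
        rw [hφV, hcompu] at h1
        have h2 : φ u = u' := by simpa [hφ] using hk.symm
        have h3 : ⇑φ '' Ioo c d = Ioo (c + k) (d + k) := by
          simp [hφ]
        rw [← h2, ← h3, h1]
      have hηcomp : η ∈ connectedComponentIn V u' := by
        have hu'ball : u' ∈ Metric.ball η ε := by
          rw [Metric.mem_ball, Real.dist_eq, abs_sub_comm]
          rw [hu'd]
          exact hpd
        have hballpre : IsPreconnected (Metric.ball η ε) := (convex_ball η ε).isPreconnected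
        have : Metric.ball η ε ⊆ connectedComponentIn V u' :=
          hballpre.subset_connectedComponentIn hu'ball hball
        exact this (Metric.mem_ball_self hε)
      rw [hcompu'] at hηcomp
      refine ⟨η - k, ⟨by linarith [hηcomp.1], by linarith [hηcomp.2]⟩, ?_⟩
      rw [show η - (k:ℝ) = η + (-k : ℤ) by push_cast; ring, coe_int_add, hη]
    · right; exact hycl
  · exact ⟨x, mem_connectedComponentIn hx, t, htIoo, ht⟩
  · exact isPreconnected_connectedComponentIn


lemma vol_Ioo {c d : ℝ} (h1 : d ≤ c + 1) :
    ENNReal.ofReal (d - c) ≤ volume (π '' Ioo c d) := by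
  have hmeas : MeasurableSet (π '' Ioo c d) := (openPi _ isOpen_Ioo).measurableSet
  have hmp := AddCircle.measurePreserving_mk 1 c
  have := hmp.measure_preimage hmeas.nullMeasurableSet
  rw [← this]
  have hsub : Ioo c d ⊆ (QuotientAddGroup.mk ⁻¹' (π '' Ioo c d)) ∩ Ioc c (c + 1) := by
    intro u hu
    exact ⟨mem_image_of_mem _ hu, ⟨hu.1, le_trans hu.2.le h1⟩⟩
  calc ENNReal.ofReal (d - c) = volume (Ioo c d) := by rw [Real.volume_Ioo]
    _ ≤ volume ((QuotientAddGroup.mk ⁻¹' (π '' Ioo c d)) ∩ Ioc c (c + 1)) := measure_mono hsub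
    _ = _ := by rw [Measure.restrict_apply' measurableSet_Ioc]

lemma closure_Ioo_sub {c d : ℝ} :
    closure (π '' Ioo c d) ⊆ π '' Icc c d := by
  apply closure_minimal (image_mono Ioo_subset_Icc_self)
  exact (isCompact_Icc.image contPi).isClosed


lemma rep_Ico (y : UnitAddCircle) (c : ℝ) : ∃ t ∈ Ico c (c + 1), π t = y := by
  obtain ⟨s, hs⟩ := surjPi y
  refine ⟨toIcoMod one_pos c s, toIcoMod_mem_Ico one_pos c s, ?_⟩
  have h1 : s - toIcoMod one_pos c s = (toIcoDiv one_pos c s : ℤ) • (1:ℝ) :=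
    self_sub_toIcoMod one_pos c s
  have : toIcoMod one_pos c s = s + (-(toIcoDiv one_pos c s) : ℤ) := by
    push_cast
    rw [zsmul_eq_mul, mul_one] at h1
    linarith
  rw [this, coe_int_add, hs]

/-- iteration lemma for a WDS -/
lemma key {M : Type*} [MetricSpace M] (f : M ≃ₜ M) (W : WDS M ⇑f) (n : ℤ) :
    ∃ φ : UnitAddCircle ≃ₜ UnitAddCircle, ⇑φ = ⇑(W.h.toEquiv ^ n) ∧ φ '' W.K = W.K ∧
      ∀ σ τ : W.K, (τ : UnitAddCircle) = φ (σ : UnitAddCircle) →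
        W.j τ = (f.toEquiv ^ n) (W.j σ) := by
  have hKmem : ∀ z : UnitAddCircle, z ∈ W.K → W.h z ∈ W.K := by
    intro z hz
    rw [← W.K_inv]
    exact mem_image_of_mem _ hz
  have hKsymm : W.h.symm '' W.K = W.K := by
    conv_lhs => rw [← W.K_inv]
    ext z
    simp
  have hKmem' : ∀ z : UnitAddCircle, z ∈ W.K → W.h.symm z ∈ W.K := by
    intro z hz
    rw [← hKsymm]
    exact mem_image_of_mem _ hz
  induction n using Int.induction_on with
  | zero =>
    refine ⟨Homeomorph.refl _, by funext y; simp, by simp, ?_⟩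
    intro σ τ hστ
    have : τ = σ := Subtype.ext (by simpa using hστ)
    rw [this]
    simp
  | succ i ih =>
    obtain ⟨φ, hφcoe, hφK, hequiv⟩ := ih
    refine ⟨W.h.trans φ, ?_, ?_, ?_⟩
    · funext y
      have : ((i:ℤ)+1) = (i+1 : ℤ) := by ring
      rw [zpow_add_one]
      simp only [Homeomorph.trans_apply, Equiv.Perm.mul_apply, hφcoe]
      rfl
    · rw [show ⇑(W.h.trans φ) = ⇑φ ∘ ⇑W.h from rfl, image_comp, W.K_inv, hφK]
    · intro σ τ hστ
      set σ' : W.K := ⟨W.h σ, hKmem _ σ.2⟩ with hσ'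
      have h1 : W.j τ = (f.toEquiv ^ (i:ℤ)) (W.j σ') := hequiv σ' τ hστ
      have h2 : W.j σ' = f (W.j σ) := W.equivar σ σ' rfl
      rw [h1, h2, zpow_add_one, Equiv.Perm.mul_apply]
      rfl
  | pred i ih =>
    obtain ⟨φ, hφcoe, hφK, hequiv⟩ := ih
    refine ⟨W.h.symm.trans φ, ?_, ?_, ?_⟩
    · funext y
      rw [show (-(i:ℤ) - 1) = (-(i:ℤ)) - 1 by ring, zpow_sub_one]
      simp only [Homeomorph.trans_apply, Equiv.Perm.mul_apply, hφcoe]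
      rfl
    · rw [show ⇑(W.h.symm.trans φ) = ⇑φ ∘ ⇑W.h.symm from rfl, image_comp, hKsymm, hφK]
    · intro σ τ hστ
      set σ' : W.K := ⟨W.h.symm σ, hKmem' _ σ.2⟩ with hσ'
      have h1 : W.j τ = (f.toEquiv ^ (-(i:ℤ))) (W.j σ') := hequiv σ' τ hστ
      have h2 : W.j σ = f (W.j σ') := W.equivar σ' σ (W.h.apply_symm_apply (σ : UnitAddCircle))
      have h3 : W.j σ' = f.toEquiv⁻¹ (W.j σ) := by
        rw [h2, Equiv.Perm.inv_def]
        exact (f.toEquiv.symm_apply_apply (W.j σ')).symm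
      rw [h1, h3, show (-(i:ℤ) - 1) = (-(i:ℤ)) - 1 by ring, zpow_sub_one,
        Equiv.Perm.mul_apply]


end GapsAux

/-- If the dynamics of a weak Denjoy sub-system is expansive on the image of the
embedding, then the connected components of the complement of the minimal set fall into
finitely many orbits under the circle homeomorphism. -/
theorem expansive_WDS_finitely_many_gaps
    {M : Type*} [MetricSpace M] (f : M ≃ₜ M) (W : WDS M ⇑f)
    (e : ℝ) (he : 0 < e)
    (hexp : ∀ x ∈ Set.range W.j, ∀ y ∈ Set.range W.j,
      (∀ n : ℤ, dist ((f.toEquiv ^ n) x) ((f.toEquiv ^ n) y) ≤ e) → x = y) :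
    ∃ (m : ℕ) (U : Fin m → Set UnitAddCircle),
      (∀ i : Fin m, ∃ x ∈ W.Kᶜ, U i = connectedComponentIn W.Kᶜ x) ∧
      ∀ x ∈ W.Kᶜ, ∃ (n : ℤ) (i : Fin m),
        connectedComponentIn W.Kᶜ x = (fun y => (W.h.toEquiv ^ n) y) '' U i := by
  classical
  haveI : CompactSpace W.K := isCompact_iff_compactSpace.mp W.K_cpt
  obtain ⟨δ, hδpos, hδ⟩ : ∃ δ > 0, ∀ σ τ : W.K,
      dist (σ : UnitAddCircle) (τ : UnitAddCircle) < δ → dist (W.j σ) (W.j τ) < e := by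
    have huc := CompactSpace.uniformContinuous_of_continuous (W.j_emb.continuous)
    rw [Metric.uniformContinuous_iff] at huc
    obtain ⟨δ, hδpos, H⟩ := huc e he
    exact ⟨δ, hδpos, fun σ τ h => H (by rwa [Subtype.dist_eq])⟩
  have hKopen : IsOpen W.Kᶜ := W.K_cpt.isClosed.isOpen_compl
  have hKcne : (W.Kᶜ)ᶜ.Nonempty := by rw [compl_compl]; exact W.K_ne
  obtain ⟨p₀, hp₀⟩ := W.K_ne
  obtain ⟨q₀, hq₀, hq₀ne⟩ : ∃ q ∈ W.K, q ≠ p₀ := by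
    have hacc := W.K_perf.acc p₀ hp₀
    rw [accPt_iff_nhds] at hacc
    obtain ⟨q, hqUC, hqne⟩ := hacc univ univ_mem
    exact ⟨q, hqUC.2, hqne⟩
  have hsep : ∀ σ τ : W.K, σ ≠ τ → ∃ n : ℤ,
      e < dist ((f.toEquiv ^ n) (W.j σ)) ((f.toEquiv ^ n) (W.j τ)) := by
    intro σ τ hne
    by_contra hc
    push_neg at hc
    exact hne (W.j_emb.injective (hexp _ ⟨σ, rfl⟩ _ ⟨τ, rfl⟩ hc))
  set S : Set (Set UnitAddCircle) := {C | (∃ x ∈ W.Kᶜ, C = connectedComponentIn W.Kᶜ x) ∧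
      ENNReal.ofReal δ ≤ MeasureTheory.volume C} with hSdef
  have hSopen : ∀ C ∈ S, IsOpen C := by
    rintro C ⟨⟨x, hx, rfl⟩, -⟩
    obtain ⟨c, d, hcd, h1, _, _, himg⟩ := GapsAux.gap W.Kᶜ hKopen hKcne hx
    rw [← himg]
    exact GapsAux.openPi _ isOpen_Ioo
  have hSfin : S.Finite := by
    have hdisj : Pairwise (Function.onFun Disjoint (fun C : ↥S => (C : Set UnitAddCircle))) := by
      intro C1 C2 hne12
      rw [Function.onFun, Set.disjoint_left]
      intro z hz1 hz2
      obtain ⟨⟨x1, hx1, he1⟩, -⟩ := C1.2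
      obtain ⟨⟨x2, hx2, he2⟩, -⟩ := C2.2
      apply hne12
      apply Subtype.ext
      calc (C1 : Set UnitAddCircle)
          = connectedComponentIn W.Kᶜ z := by
            rw [he1] at hz1 ⊢; exact connectedComponentIn_eq hz1
        _ = C2 := by
            rw [he2] at hz2 ⊢; exact (connectedComponentIn_eq hz2).symm
    have hfin := MeasureTheory.Measure.finite_const_le_meas_of_disjoint_iUnion
      (MeasureTheory.volume : MeasureTheory.Measure UnitAddCircle) (ε := ENNReal.ofReal δ)
      (ENNReal.ofReal_pos.mpr hδpos)
      (As := fun C : ↥S => (C : Set UnitAddCircle))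
      (fun C => (hSopen C C.2).measurableSet)
      hdisj
      (MeasureTheory.measure_ne_top _ _)
    have huniv : {i : ↥S | ENNReal.ofReal δ ≤ MeasureTheory.volume (i : Set UnitAddCircle)} = univ := by
      ext i
      simpa using i.2.2
    rw [huniv] at hfin
    haveI : Finite ↥S := Set.finite_univ_iff.mp hfin
    exact S.toFinite
  obtain ⟨m, emb, hrange⟩ := hSfin.fin_embedding
  refine ⟨m, fun i => emb i, ?_, ?_⟩
  · intro i
    have hmem : (emb i) ∈ S := by rw [← hrange]; exact mem_range_self i
    obtain ⟨⟨x, hx, hEq⟩, -⟩ := hmem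
    exact ⟨x, hx, hEq⟩
  · intro x hx
    obtain ⟨c, d, hcd, hd1, hcK, hdK, himg⟩ := GapsAux.gap W.Kᶜ hKopen hKcne hx
    have haK : GapsAux.π c ∈ W.K := not_not.mp hcK
    have hbK : GapsAux.π d ∈ W.K := not_not.mp hdK
    have hab : GapsAux.π c ≠ GapsAux.π d := by
      intro hEq
      obtain ⟨k, hk⟩ := (GapsAux.eq_iff_int c d).mp hEq
      have hd' : d = c + 1 := by
        have hk1 : (k : ℝ) = d - c := by linarith
        have hk0 : (0:ℤ) < k := by exact_mod_cast (show (0:ℝ) < (k:ℝ) by rw [hk1]; linarith)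
        have hk2 : k ≤ 1 := by exact_mod_cast (show (k:ℝ) ≤ 1 by rw [hk1]; linarith)
        have : k = 1 := le_antisymm hk2 hk0
        rw [this] at hk1
        push_cast at hk1
        linarith
      have hKsub : ∀ z ∈ W.K, z = GapsAux.π c := by
        intro z hz
        obtain ⟨t, htIco, htz⟩ := GapsAux.rep_Ico z c
        rcases eq_or_lt_of_le htIco.1 with h | h
        · rw [← htz, ← h]
        · exfalso
          have hzC : z ∈ connectedComponentIn W.Kᶜ x := by
            rw [← himg]
            exact ⟨t, ⟨h, by rw [hd']; exact htIco.2⟩, htz⟩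
          exact (connectedComponentIn_subset _ _ hzC) hz
      exact hq₀ne (by rw [hKsub _ hq₀, hKsub _ hp₀])
    have hacl : GapsAux.π c ∈ closure (connectedComponentIn W.Kᶜ x) := by
      rw [← himg]
      apply image_closure_subset_closure_image GapsAux.contPi
      exact ⟨c, by rw [closure_Ioo hcd.ne]; exact ⟨le_refl c, hcd.le⟩, rfl⟩
    have hbcl : GapsAux.π d ∈ closure (connectedComponentIn W.Kᶜ x) := by
      rw [← himg]
      apply image_closure_subset_closure_image GapsAux.contPi
      exact ⟨d, by rw [closure_Ioo hcd.ne]; exact ⟨hcd.le, le_refl d⟩, rfl⟩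
    set σa : W.K := ⟨GapsAux.π c, haK⟩ with hσa
    set σb : W.K := ⟨GapsAux.π d, hbK⟩ with hσb
    obtain ⟨n, hn⟩ := hsep σa σb (fun hEq => hab (congrArg Subtype.val hEq))
    obtain ⟨φ, hφcoe, hφK, hequiv⟩ := GapsAux.key f W n
    have hτa : φ (σa : UnitAddCircle) ∈ W.K := hφK.subset (mem_image_of_mem _ σa.2)
    have hτb : φ (σb : UnitAddCircle) ∈ W.K := hφK.subset (mem_image_of_mem _ σb.2)
    have hja : W.j ⟨φ (σa : UnitAddCircle), hτa⟩ = (f.toEquiv ^ n) (W.j σa) := hequiv σa _ rfl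
    have hjb : W.j ⟨φ (σb : UnitAddCircle), hτb⟩ = (f.toEquiv ^ n) (W.j σb) := hequiv σb _ rfl
    have hdistph : δ ≤ dist (φ (σa : UnitAddCircle)) (φ (σb : UnitAddCircle)) := by
      by_contra hlt
      push_neg at hlt
      have hcl := hδ ⟨φ (σa : UnitAddCircle), hτa⟩ ⟨φ (σb : UnitAddCircle), hτb⟩ hlt
      rw [hja, hjb] at hcl
      linarith
    have hφKc : ⇑φ '' W.Kᶜ = W.Kᶜ := by
      rw [Set.image_compl_eq φ.bijective, hφK]
    have hφx : φ x ∈ W.Kᶜ := hφKc.subset (mem_image_of_mem _ hx)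
    have hC' : ⇑φ '' connectedComponentIn W.Kᶜ x = connectedComponentIn W.Kᶜ (φ x) := by
      rw [GapsAux.homeo_image_compIn φ hx, hφKc]
    obtain ⟨c', d', hcd', hd1', _, _, himg'⟩ := GapsAux.gap W.Kᶜ hKopen hKcne hφx
    have hclsub : closure (connectedComponentIn W.Kᶜ (φ x)) ⊆ GapsAux.π '' Icc c' d' := by
      rw [← himg']
      exact GapsAux.closure_Ioo_sub
    have haC' : φ (σa : UnitAddCircle) ∈ closure (connectedComponentIn W.Kᶜ (φ x)) := by
      rw [← hC', ← φ.image_closure]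
      exact mem_image_of_mem _ hacl
    have hbC' : φ (σb : UnitAddCircle) ∈ closure (connectedComponentIn W.Kᶜ (φ x)) := by
      rw [← hC', ← φ.image_closure]
      exact mem_image_of_mem _ hbcl
    obtain ⟨α, hαmem, hα⟩ := hclsub haC'
    obtain ⟨β, hβmem, hβ⟩ := hclsub hbC'
    have hdist_le : dist (φ (σa : UnitAddCircle)) (φ (σb : UnitAddCircle)) ≤ d' - c' := by
      rw [← hα, ← hβ]
      refine le_trans (GapsAux.dist_coe_le α β) ?_
      rw [abs_sub_le_iff]
      exact ⟨by linarith [hαmem.1, hαmem.2, hβmem.1, hβmem.2],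
        by linarith [hαmem.1, hαmem.2, hβmem.1, hβmem.2]⟩
    have hvol : ENNReal.ofReal δ ≤ MeasureTheory.volume (connectedComponentIn W.Kᶜ (φ x)) := by
      rw [← himg']
      exact le_trans (ENNReal.ofReal_le_ofReal (by linarith)) (GapsAux.vol_Ioo hd1')
    have hC'S : connectedComponentIn W.Kᶜ (φ x) ∈ S := ⟨⟨φ x, hφx, rfl⟩, hvol⟩
    obtain ⟨i, hi⟩ : ∃ i, emb i = connectedComponentIn W.Kᶜ (φ x) := by
      rw [← hrange] at hC'S
      exact hC'S
    refine ⟨-n, i, ?_⟩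
    have hcomp : ∀ y, (W.h.toEquiv ^ (-n)) (φ y) = y := by
      intro y
      rw [show φ y = (W.h.toEquiv ^ n) y from congrFun hφcoe y,
        ← Equiv.Perm.mul_apply, ← zpow_add]
      simp
    show connectedComponentIn W.Kᶜ x = (fun y => (W.h.toEquiv ^ (-n)) y) '' (emb i)
    rw [hi, ← hC', Set.image_image]
    have hid : (fun y => (W.h.toEquiv ^ (-n)) (φ y)) = fun y => y := funext hcomp
    rw [hid, Set.image_id']
end
end

section
/- Let a₁, a₂ ∈ 𝕋 = ℝ/ℤ with a₂ irrational (i.e. a₂ is not the class of a rational number). If there exists a homeomorphism g : 𝕋 → 𝕋 such that g(x + a₂) = g(x) + a₁ for all x ∈ 𝕋, then a₁ = a₂ or a₁ = −a₂. -/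
open Set AddCircle

noncomputable section

namespace ConjRotAux

/-- The representative in `[-1/2, 1/2)` of a point of the unit circle. -/
def rep (x : UnitAddCircle) : ℝ := (AddCircle.equivIco 1 (-(2⁻¹ : ℝ)) x : ℝ)

lemma coe_rep (x : UnitAddCircle) : ((rep x : ℝ) : UnitAddCircle) = x :=
  (AddCircle.equivIco 1 (-(2⁻¹ : ℝ))).symm_apply_apply x

lemma rep_coe {x : ℝ} (hx : x ∈ Ico (-(2⁻¹ : ℝ)) (-(2⁻¹ : ℝ) + 1)) :
    rep (x : UnitAddCircle) = x := by
  have : (AddCircle.equivIco 1 (-(2⁻¹ : ℝ))) (x : UnitAddCircle) = ⟨x, hx⟩ := by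
    rw [Equiv.apply_eq_iff_eq_symm_apply]; rfl
  rw [rep, this]

lemma continuousAt_rep {x : UnitAddCircle} (hx : x ≠ ((-(2⁻¹ : ℝ) : ℝ) : UnitAddCircle)) :
    ContinuousAt rep x :=
  continuous_subtype_val.continuousAt.comp (AddCircle.continuousAt_equivIco 1 (-(2⁻¹ : ℝ)) hx)

lemma ne_half {r : ℝ} (hr : r ∈ Ioo (-(4⁻¹ : ℝ)) (4⁻¹ : ℝ)) :
    ((r : ℝ) : UnitAddCircle) ≠ ((-(2⁻¹ : ℝ) : ℝ) : UnitAddCircle) := by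
  have hr' : r ∈ Ico (-(2⁻¹ : ℝ)) (-(2⁻¹ : ℝ) + 1) := by
    constructor <;> [linarith [hr.1]; linarith [hr.2]]
  have hh : (-(2⁻¹ : ℝ)) ∈ Ico (-(2⁻¹ : ℝ)) (-(2⁻¹ : ℝ) + 1) := by constructor <;> norm_num
  intro h
  rw [AddCircle.coe_eq_coe_iff_of_mem_Ico hr' hh] at h
  rw [h] at hr; norm_num at hr

lemma Ioo_subset_Ico' : Ioo (-(4⁻¹ : ℝ)) (4⁻¹ : ℝ) ⊆ Ico (-(2⁻¹ : ℝ)) (-(2⁻¹ : ℝ) + 1) := by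
  intro r hr; constructor <;> [linarith [hr.1]; linarith [hr.2]]

/-- A continuous additive map `ℝ → ℝ/ℤ` is `x ↦ c x mod 1` for some real `c`. -/
lemma exists_lift (φ : ℝ → UnitAddCircle) (hcont : Continuous φ)
    (hadd : ∀ x y, φ (x + y) = φ x + φ y) :
    ∃ c : ℝ, ∀ x, φ x = ((c * x : ℝ) : UnitAddCircle) := by
  classical
  have hφ0 : φ 0 = 0 := by
    have h0 : φ 0 + φ 0 = φ 0 := by rw [← hadd]; norm_num
    exact add_eq_right.mp h0
  have hnsmul : ∀ (n : ℕ) (x : ℝ), φ (n * x) = n • φ x := by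
    intro n
    induction n with
    | zero => intro x; simpa using hφ0
    | succ n ih =>
      intro x
      have : ((n : ℝ) + 1) * x = n * x + x := by ring
      push_cast
      rw [this, hadd, ih, succ_nsmul]
  set U : Set UnitAddCircle := (fun r : ℝ => (r : UnitAddCircle)) '' Ioo (-(4⁻¹ : ℝ)) (4⁻¹ : ℝ)
    with hU
  have hUopen : IsOpen U := QuotientAddGroup.isOpenMap_coe _ isOpen_Ioo
  have h0U : (0 : UnitAddCircle) ∈ U := ⟨0, by norm_num, by norm_num⟩
  obtain ⟨ε, hε, hball⟩ : ∃ ε > 0, Metric.ball (0 : ℝ) ε ⊆ φ ⁻¹' U := by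
    have : φ ⁻¹' U ∈ nhds (0 : ℝ) := by
      apply hcont.continuousAt.preimage_mem_nhds
      rw [hφ0]
      exact hUopen.mem_nhds h0U
    exact Metric.mem_nhds_iff.mp this
  set δ : ℝ := ε / 2 with hδdef
  have hδ : 0 < δ := by positivity
  have hmem : ∀ x : ℝ, |x| ≤ δ → φ x ∈ U := by
    intro x hx
    apply hball
    simp only [Metric.mem_ball, Real.dist_eq, sub_zero]
    calc |x| ≤ δ := hx
    _ < ε := by rw [hδdef]; linarith
  classical
  set Φ : ℝ → ℝ := fun x => rep (φ x) with hΦdef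
  have hΦcoe : ∀ x, ((Φ x : ℝ) : UnitAddCircle) = φ x := fun x => coe_rep (φ x)
  have hkey : ∀ x : ℝ, |x| ≤ δ → Φ x ∈ Ioo (-(4⁻¹ : ℝ)) (4⁻¹ : ℝ) := by
    intro x hx
    have hx2 := hmem x hx
    rw [hU] at hx2
    obtain ⟨r, hr, hrx⟩ := hx2
    have : Φ x = r := by rw [hΦdef]; simp only [← hrx]; exact rep_coe (Ioo_subset_Ico' hr)
    rwa [this]
  have hΦca : ∀ x : ℝ, |x| ≤ δ → ContinuousAt Φ x := by
    intro x hx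
    have hx2 := hmem x hx
    rw [hU] at hx2
    obtain ⟨r, hr, hrx⟩ := hx2
    exact (continuousAt_rep (by rw [← hrx]; exact ne_half hr)).comp hcont.continuousAt
  have hΦ0 : Φ 0 = 0 := by
    have : ((0:ℝ) : UnitAddCircle) = 0 := by norm_num
    rw [hΦdef]; simp only [hφ0, ← this]
    exact rep_coe (by constructor <;> norm_num)
  have hsmall : ∀ x y : ℝ, |x| ≤ δ / 2 → |y| ≤ δ / 2 → Φ (x + y) = Φ x + Φ y := by
    intro x y hx hy
    have hx' : |x| ≤ δ := by linarith
    have hy' : |y| ≤ δ := by linarith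
    have hxy : |x + y| ≤ δ := by calc |x+y| ≤ |x| + |y| := abs_add_le x y
                                    _ ≤ δ := by linarith
    have h1 := hkey x hx'
    have h2 := hkey y hy'
    have h3 := hkey (x+y) hxy
    have hsum : Φ x + Φ y ∈ Ico (-(2⁻¹ : ℝ)) (-(2⁻¹ : ℝ) + 1) := by
      constructor <;> [linarith [h1.1, h2.1]; linarith [h1.2, h2.2]]
    have hco : ((Φ (x+y) : ℝ) : UnitAddCircle) = ((Φ x + Φ y : ℝ) : UnitAddCircle) := by
      have hsplit : ((Φ x + Φ y : ℝ) : UnitAddCircle) = ((Φ x : ℝ) : UnitAddCircle) + ((Φ y : ℝ) : UnitAddCircle) := rfl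
      rw [hsplit, hΦcoe, hΦcoe, hΦcoe, hadd]
    exact ((AddCircle.coe_eq_coe_iff_of_mem_Ico (Ioo_subset_Ico' h3) hsum).mp hco)
  have hmul : ∀ (n : ℕ) (x : ℝ), (n : ℝ) * |x| ≤ δ / 2 → Φ (n * x) = n * Φ x := by
    intro n
    induction n with
    | zero => intro x _; simpa using hΦ0
    | succ n ih =>
      intro x hx
      have hx' : ((n : ℝ) + 1) * |x| ≤ δ / 2 := by push_cast at hx; linarith
      have hn0 : (0:ℝ) ≤ (n:ℝ) * |x| := mul_nonneg (Nat.cast_nonneg n) (abs_nonneg x)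
      have hxd : |x| ≤ δ / 2 := by nlinarith
      have hnx : (n : ℝ) * |x| ≤ δ / 2 := by nlinarith [abs_nonneg x]
      have hnx' : |(n : ℝ) * x| ≤ δ / 2 := by rwa [abs_mul, abs_of_nonneg (by positivity : (0:ℝ) ≤ (n:ℝ))]
      have : ((n : ℝ) + 1) * x = (n : ℝ) * x + x := by ring
      push_cast
      rw [this, hsmall _ _ hnx' hxd, ih x hnx]
      ring
  -- choice of denominators
  set nn : ℝ → ℕ := fun x => ⌈|x| / (δ / 2)⌉₊ + 1 with hnn
  have hnnpos : ∀ x, 0 < nn x := fun x => Nat.succ_pos _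
  have hnnle : ∀ x : ℝ, |x| / nn x ≤ δ / 2 := by
    intro x
    rw [div_le_iff₀ (by exact_mod_cast Nat.cast_pos.mpr (hnnpos x))]
    have h1 : |x| / (δ/2) ≤ (⌈|x| / (δ / 2)⌉₊ : ℝ) := Nat.le_ceil _
    have h2 : |x| ≤ (⌈|x| / (δ / 2)⌉₊ : ℝ) * (δ/2) := by
      rw [← div_le_iff₀ (by positivity)]; exact h1
    have h3 : ((⌈|x| / (δ / 2)⌉₊ : ℝ)) ≤ (nn x : ℝ) := by
      rw [hnn]; push_cast; linarith
    nlinarith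
  have hstep : ∀ (m : ℕ) (x : ℝ), 0 < m → |x| / m ≤ δ / 2 → ∀ (k : ℕ), 0 < k →
      (m : ℝ) * Φ (x / m) = ((m * k : ℕ) : ℝ) * Φ (x / ((m * k : ℕ) : ℝ)) := by
    intro m x hm hxm k hk
    have hm' : (0:ℝ) < m := Nat.cast_pos.mpr hm
    have hk' : (0:ℝ) < k := Nat.cast_pos.mpr hk
    have hmk : x / m = (k : ℝ) * (x / ((m * k : ℕ) : ℝ)) := by
      push_cast
      field_simp
    have hbound : (k : ℝ) * |x / ((m * k : ℕ) : ℝ)| ≤ δ / 2 := by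
      have : |x / ((m * k : ℕ) : ℝ)| = |x| / ((m * k : ℕ) : ℝ) := by
        rw [abs_div, abs_of_pos (by positivity : (0:ℝ) < ((m * k : ℕ) : ℝ))]
      rw [this]
      push_cast
      rw [show (k : ℝ) * (|x| / ((m:ℝ) * k)) = |x| / m from by field_simp]
      exact hxm
    rw [hmk, hmul k _ hbound]
    push_cast
    ring
  set F : ℝ → ℝ := fun x => (nn x : ℝ) * Φ (x / nn x) with hF
  have hFeq : ∀ (x : ℝ) (n : ℕ), 0 < n → |x| / n ≤ δ / 2 → F x = (n : ℝ) * Φ (x / n) := by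
    intro x n hn hxn
    have e1 := hstep (nn x) x (hnnpos x) (hnnle x) n hn
    have e2 := hstep n x hn hxn (nn x) (hnnpos x)
    rw [hF]
    simp only []
    rw [e1, e2]
    rw [Nat.mul_comm (nn x) n]
  have hFcoe : ∀ x : ℝ, ((F x : ℝ) : UnitAddCircle) = φ x := by
    intro x
    have hq : ∀ (n : ℕ) (r : ℝ), (((n : ℝ) * r : ℝ) : UnitAddCircle) = n • ((r : ℝ) : UnitAddCircle) := by
      intro n r
      rw [show ((n : ℝ) * r) = n • r from by simp [nsmul_eq_mul]]
      exact AddCircle.coe_nsmul 1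
    rw [hF]
    simp only []
    rw [hq, hΦcoe, ← hnsmul]
    congr 1
    have : ((nn x : ℝ)) ≠ 0 := ne_of_gt (Nat.cast_pos.mpr (hnnpos x))
    field_simp
  have hFadd : ∀ x y : ℝ, F (x + y) = F x + F y := by
    intro x y
    set N : ℕ := nn x + nn y + nn (x + y) with hN
    have hNpos : 0 < N := by positivity
    have hNx : nn x ≤ N := by omega
    have hNy : nn y ≤ N := by omega
    have hNxy : nn (x + y) ≤ N := by omega
    have hdle : ∀ (z : ℝ), nn z ≤ N → |z| / N ≤ δ / 2 := by
      intro z hz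
      calc |z| / N ≤ |z| / nn z := by
            have h1 : (0:ℝ) < (nn z : ℝ) := Nat.cast_pos.mpr (hnnpos z)
            have h2 : (nn z : ℝ) ≤ (N : ℝ) := Nat.cast_le.mpr hz
            gcongr
      _ ≤ δ / 2 := hnnle z
    have hax : |x / N| ≤ δ / 2 := by
      rw [abs_div, abs_of_pos (by exact_mod_cast hNpos : (0:ℝ) < (N:ℝ))]
      exact hdle x hNx
    have hay : |y / N| ≤ δ / 2 := by
      rw [abs_div, abs_of_pos (by exact_mod_cast hNpos : (0:ℝ) < (N:ℝ))]
      exact hdle y hNy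
    rw [hFeq (x + y) N hNpos (hdle _ hNxy), hFeq x N hNpos (hdle _ hNx),
        hFeq y N hNpos (hdle _ hNy)]
    rw [show (x + y) / (N:ℝ) = x / N + y / N from by ring]
    rw [hsmall _ _ hax hay]
    ring
  have hFcont : Continuous F := by
    rw [continuous_iff_continuousAt]
    intro x₀
    set n : ℕ := 2 * nn x₀ with hn
    have hnpos : (0:ℝ) < (n : ℝ) := by
      have := hnnpos x₀
      rw [hn]; push_cast; positivity
    have hb : |x₀| < (n : ℝ) * (δ/2) := by
      have hle := hnnle x₀
      have hpos : (0:ℝ) < (nn x₀ : ℝ) := Nat.cast_pos.mpr (hnnpos x₀)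
      have h1 : |x₀| ≤ (nn x₀ : ℝ) * (δ/2) := by
        rw [div_le_iff₀ hpos] at hle; linarith
      have h2 : ((n:ℕ) : ℝ) = 2 * (nn x₀ : ℝ) := by rw [hn]; push_cast; ring
      rw [h2]
      nlinarith
    have hopen : IsOpen {x : ℝ | |x| < (n : ℝ) * (δ/2)} :=
      isOpen_lt (continuous_abs) continuous_const
    have hmemnb : {x : ℝ | |x| < (n : ℝ) * (δ/2)} ∈ nhds x₀ := hopen.mem_nhds hb
    have heq : F =ᶠ[nhds x₀] fun x => (n : ℝ) * Φ (x / n) := by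
      filter_upwards [hmemnb] with x hx
      exact hFeq x n (by positivity) (by rw [div_le_iff₀ hnpos] at *; linarith [hx])
    have hca : ContinuousAt (fun x => (n : ℝ) * Φ (x / n)) x₀ := by
      have hbnd : |x₀ / n| ≤ δ := by
        have : |x₀ / n| = |x₀| / n := by rw [abs_div, abs_of_pos hnpos]
        rw [this, div_le_iff₀ hnpos]
        nlinarith
      have hdiv : ContinuousAt (fun x : ℝ => x / (n:ℝ)) x₀ :=
        continuousAt_id.div continuousAt_const (ne_of_gt hnpos)
      have hcomp : ContinuousAt (fun x : ℝ => Φ (x / (n:ℝ))) x₀ :=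
        ContinuousAt.comp (f := fun x : ℝ => x / (n:ℝ)) (x := x₀) (hΦca (x₀ / n) hbnd) hdiv
      exact continuousAt_const.mul hcomp
    exact hca.congr heq.symm
  -- conclude linearity
  set Fhom : ℝ →+ ℝ := AddMonoidHom.mk' F hFadd with hFhom
  have hlinx : ∀ x : ℝ, F x = F 1 * x := by
    intro x
    have h1 := map_real_smul Fhom hFcont x 1
    simp only [smul_eq_mul, mul_one] at h1
    have h2 : Fhom x = F x := rfl
    have h3 : Fhom 1 = F 1 := rfl
    rw [h2, h3] at h1
    rw [h1, mul_comm]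
  have : ∀ x : ℝ, φ x = ((F 1 * x : ℝ) : UnitAddCircle) := by
    intro x
    rw [← hFcoe x, hlinx x]
  exact ⟨F 1, this⟩

end ConjRotAux

end

/-- If a homeomorphism of the circle conjugates the rotation by an irrational `a₂` to
the rotation by `a₁`, then `a₁ = a₂` or `a₁ = -a₂`. -/
theorem conjugate_rotations_eq_or_neg
    (a₁ a₂ : UnitAddCircle) (hirr : ∀ q : ℚ, a₂ ≠ ((q : ℝ) : UnitAddCircle))
    (g : UnitAddCircle ≃ₜ UnitAddCircle)
    (hg : ∀ x : UnitAddCircle, g (x + a₂) = g x + a₁) :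
    a₁ = a₂ ∨ a₁ = -a₂ := by
  classical
  set h : UnitAddCircle → UnitAddCircle := fun x => g x - g 0 with hh
  have hcont : Continuous h := g.continuous.sub continuous_const
  have hinj : Function.Injective h := by
    intro x y hxy
    apply g.injective
    have : g x - g 0 = g y - g 0 := hxy
    exact sub_left_injective this
  have h0 : h 0 = 0 := by simp [hh]
  have hstep : ∀ x, h (x + a₂) = h x + a₁ := by
    intro x
    simp only [hh, hg x]
    abel
  have hzsmul : ∀ (n : ℤ) (x : UnitAddCircle), h (x + n • a₂) = h x + n • a₁ := by
    intro n
    induction n using Int.induction_on with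
    | zero => intro x; simp
    | succ n ih =>
      intro x
      have e2 : x + ((n : ℤ) + 1) • a₂ = (x + (n : ℤ) • a₂) + a₂ := by
        rw [add_zsmul, one_zsmul, add_assoc]
      rw [e2, hstep, ih, add_zsmul, one_zsmul, add_assoc]
    | pred n ih =>
      intro x
      have key := hstep (x + (-(n : ℤ) - 1) • a₂)
      have harg : x + (-(n : ℤ) - 1) • a₂ + a₂ = x + (-(n : ℤ)) • a₂ := by
        rw [add_assoc, ← one_zsmul (a₂ : UnitAddCircle), smul_smul, ← add_zsmul]
        norm_num
      rw [harg, ih] at key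
      have hres : h (x + (-(n : ℤ) - 1) • a₂) = h x + (-(n : ℤ)) • a₁ - a₁ :=
        eq_sub_of_add_eq key.symm
      rw [hres, sub_zsmul, one_zsmul]
      abel
  have horb : ∀ n : ℤ, h (n • a₂) = n • a₁ := by
    intro n
    have := hzsmul n 0
    rwa [zero_add, h0, zero_add] at this
  -- density of the orbit
  obtain ⟨α, hα⟩ := QuotientAddGroup.mk_surjective a₂
  have hdense : Dense (Set.range fun n : ℤ => n • a₂) := by
    set S : AddSubgroup ℝ := AddSubgroup.closure {1, α} with hS
    have hSd : Dense (S : Set ℝ) := by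
      rcases S.dense_or_cyclic with hd | ⟨b, hb⟩
      · exact hd
      · exfalso
        have h1S : (1 : ℝ) ∈ S := AddSubgroup.subset_closure (by simp)
        have hαS : α ∈ S := AddSubgroup.subset_closure (by simp)
        rw [hb, AddSubgroup.mem_closure_singleton] at h1S hαS
        obtain ⟨n, hn⟩ := h1S
        obtain ⟨k, hk⟩ := hαS
        rw [zsmul_eq_mul] at hn hk
        have hn0 : (n : ℝ) ≠ 0 := by
          intro hcon
          rw [hcon, zero_mul] at hn
          norm_num at hn
        have hb0 : b = 1 / n := by field_simp at hn ⊢; linarith [hn]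
        have hαq : α = ((k : ℚ) / (n : ℚ) : ℚ) := by
          rw [← hk, hb0]
          push_cast
          field_simp
        exact hirr ((k : ℚ) / (n : ℚ)) (by rw [← hα, hαq])
    have himg : Dense ((fun r : ℝ => (r : UnitAddCircle)) '' (S : Set ℝ)) := by
      intro x
      obtain ⟨r, rfl⟩ := QuotientAddGroup.mk_surjective x
      exact image_closure_subset_closure_image continuous_quotient_mk' ⟨r, hSd r, rfl⟩
    apply himg.mono
    rintro _ ⟨r, hr, rfl⟩
    obtain ⟨m, n, hmn⟩ := AddSubgroup.mem_closure_pair.mp hr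
    refine ⟨n, ?_⟩
    show n • a₂ = ((r : ℝ) : UnitAddCircle)
    have hsplit : ((m • (1 : ℝ) + n • α : ℝ) : UnitAddCircle)
        = ((m • (1 : ℝ) : ℝ) : UnitAddCircle) + ((n • α : ℝ) : UnitAddCircle) := rfl
    have hone : (((1 : ℝ)) : UnitAddCircle) = 0 := by
      rw [AddCircle.coe_eq_zero_iff]
      exact ⟨1, by norm_num⟩
    rw [← hmn, hsplit, AddCircle.coe_zsmul, AddCircle.coe_zsmul, hα, hone, smul_zero, zero_add]
  -- h is additive
  have hhom : ∀ x y, h (x + y) = h x + h y := by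
    set C : Set (UnitAddCircle × UnitAddCircle) :=
      {p | h (p.1 + p.2) = h p.1 + h p.2} with hC
    have hclosed : IsClosed C :=
      isClosed_eq (hcont.comp (continuous_fst.add continuous_snd))
        ((hcont.comp continuous_fst).add (hcont.comp continuous_snd))
    have hsub : (Set.range fun n : ℤ => n • a₂) ×ˢ (Set.range fun n : ℤ => n • a₂) ⊆ C := by
      rintro ⟨x, y⟩ ⟨⟨m, rfl⟩, ⟨n, rfl⟩⟩
      simp only [hC, Set.mem_setOf_eq]
      rw [hzsmul n (m • a₂), horb m, horb n]
    have hCd : Dense C := (hdense.prod hdense).mono hsub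
    have hCu : C = Set.univ := by
      rw [← hclosed.closure_eq]
      exact hCd.closure_eq
    intro x y
    have : (x, y) ∈ C := by rw [hCu]; trivial
    exact this
  -- lift
  set φ : ℝ → UnitAddCircle := fun r => h ((r : ℝ) : UnitAddCircle) with hφ
  have hφcont : Continuous φ := hcont.comp continuous_quotient_mk'
  have hφadd : ∀ x y, φ (x + y) = φ x + φ y := by
    intro x y
    have : ((x + y : ℝ) : UnitAddCircle) = ((x : ℝ) : UnitAddCircle) + ((y : ℝ) : UnitAddCircle) := rfl
    simp only [hφ, this, hhom]
  obtain ⟨c, hc⟩ := ConjRotAux.exists_lift φ hφcont hφadd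
  -- c is an integer
  have hone : (((1 : ℝ)) : UnitAddCircle) = 0 := by
    rw [AddCircle.coe_eq_zero_iff]
    exact ⟨1, by norm_num⟩
  have hcz : ((c : ℝ) : UnitAddCircle) = 0 := by
    have h1 := hc 1
    rw [mul_one] at h1
    rw [← h1]
    simp only [hφ, hone, h0]
  obtain ⟨m, hm⟩ := (AddCircle.coe_eq_zero_iff 1).mp hcz
  rw [zsmul_eq_mul, mul_one] at hm
  -- m ≠ 0
  have hm0 : m ≠ 0 := by
    intro hcon
    rw [hcon] at hm
    simp only [Int.cast_zero] at hm
    have hhalf : φ (2⁻¹ : ℝ) = 0 := by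
      rw [hc, ← hm, zero_mul]
      norm_num
    have : ((2⁻¹ : ℝ) : UnitAddCircle) = 0 := by
      apply hinj
      rw [h0]
      exact hhalf
    obtain ⟨k, hk⟩ := (AddCircle.coe_eq_zero_iff 1).mp this
    rw [zsmul_eq_mul, mul_one] at hk
    have : (2 * k : ℤ) = 1 := by
      have : (2 : ℝ) * (k : ℝ) = 1 := by rw [hk]; norm_num
      exact_mod_cast this
    omega
  -- m is a unit
  have hmunit : m = 1 ∨ m = -1 := by
    have hinv : φ (1 / (m : ℝ)) = 0 := by
      rw [hc, ← hm]
      have : (m : ℝ) * (1 / (m : ℝ)) = 1 := by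
        field_simp
      rw [this, hone]
    have : ((1 / (m : ℝ) : ℝ) : UnitAddCircle) = 0 := by
      apply hinj
      rw [h0]
      exact hinv
    obtain ⟨k, hk⟩ := (AddCircle.coe_eq_zero_iff 1).mp this
    rw [zsmul_eq_mul, mul_one] at hk
    have hkm : (k * m : ℤ) = 1 := by
      have hmne : (m : ℝ) ≠ 0 := by exact_mod_cast hm0
      have : (k : ℝ) * (m : ℝ) = 1 := by
        rw [hk]
        field_simp
      exact_mod_cast this
    exact Int.isUnit_iff.mp (IsUnit.of_mul_eq_one (a := m) k (by rw [mul_comm]; exact hkm))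
  -- conclusion
  have ha₁ : a₁ = h a₂ := by
    have := hstep 0
    rw [zero_add, h0, zero_add] at this
    exact this.symm
  have hφα : h a₂ = ((c * α : ℝ) : UnitAddCircle) := by
    rw [← hα]
    exact hc α
  rcases hmunit with h1 | h1
  · left
    rw [ha₁, hφα, ← hm, h1]
    push_cast
    rw [one_mul, hα]
  · right
    rw [ha₁, hφα, ← hm, h1]
    push_cast
    rw [neg_one_mul, ← hα]
    rfl
end
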